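/- arXiv:2006.05630 — 7 statements merged into one kernel-verified Lean document; each statement's English description precedes it below -/
import Mathlib

section
/- In the batch contextual bandit setup with the positive-density assumption, fix a policy π and δ > 0, and let α*(π) ∈ (0, ∞) be the unique maximizer over α ≥ 0 of φ(π, α) = −α log E_{P0}[exp(−Y(π(X))/α)] − αδ. Define the probability measure P(π) by the Radon–Nikodym derivative dP(π)/dP0 = exp(−Y(π(X))/α*(π)) / E_{P0}[exp(−Y(π(X))/α*(π))]. Then P(π) ∈ U_{P0}(δ) and P(π) is the unique minimizer of E_P[Y(π(X))] over P ∈ U_{P0}(δ). -/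
open scoped Classical ENNReal

open MeasureTheory Set

/-- Kullback-Leibler divergence `D(P ‖ μ) = ∫ log (dP/dμ) dP`, written in the junk-value-free
form `∫⁻ (r log r - r + 1) dμ` (with `r = dP/dμ`). -/
noncomputable def klDiv {Ω : Type*} [MeasurableSpace Ω] (P μ : Measure Ω) : ℝ≥0∞ :=
  ∫⁻ ω, ENNReal.ofReal ((P.rnDeriv μ ω).toReal * Real.log (P.rnDeriv μ ω).toReal
      - (P.rnDeriv μ ω).toReal + 1) ∂μ

/-- The dual objective `φ(α) = −α log E[exp(−Z/α)] − αδ` of the KL-DRO evaluation problem,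
with `φ(0)` defined to be the essential infimum of `Z`. -/
noncomputable def dualKL {Ω : Type*} [MeasurableSpace Ω] (μ : Measure Ω) (Z : Ω → ℝ)
    (δ α : ℝ) : ℝ :=
  if α = 0 then essInf Z μ
  else -α * Real.log (∫ ω, Real.exp (-Z ω / α) ∂μ) - α * δ

lemma klAux {t s : ℝ} (ht : 0 ≤ t) (hs : 0 < s) :
    0 ≤ t * Real.log t - t * Real.log s - t + s ∧
      (t * Real.log t - t * Real.log s - t + s = 0 → t = s) := by
  rcases ht.eq_or_lt with h | h
  · refine ⟨by simp [← h]; linarith, fun h0 => ?_⟩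
    exfalso
    simp [← h] at h0
    exact hs.ne' h0
  · have hst : 0 < s / t := div_pos hs h
    have hkey : Real.log (s / t) ≤ s / t - 1 := Real.log_le_sub_one_of_pos hst
    have hlog : Real.log (s / t) = Real.log s - Real.log t := Real.log_div hs.ne' h.ne'
    have hexpand : t * Real.log t - t * Real.log s - t + s
        = t * ((s / t - 1) - Real.log (s / t)) := by
      rw [hlog]
      field_simp
      ring
    constructor
    · rw [hexpand]
      exact mul_nonneg h.le (by linarith)
    · intro h0
      rw [hexpand] at h0
      have h1 : (s / t - 1) - Real.log (s / t) = 0 := by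
        rcases mul_eq_zero.mp h0 with h1 | h1
        · exact absurd h1 h.ne'
        · exact h1
      have h2 : s / t = 1 := by
        by_contra hne
        exact absurd (Real.log_lt_sub_one_of_pos hst hne) (by linarith)
      field_simp at h2
      linarith

lemma dro_main {Ω : Type*} [MeasurableSpace Ω] (μ : Measure Ω) [IsProbabilityMeasure μ]
    (Z : Ω → ℝ) (hZ : Measurable Z) (M : ℝ) (hZb : ∀ᵐ ω ∂μ, Z ω ∈ Set.Icc 0 M)
    (δ : ℝ) (hδ : 0 < δ) (α : ℝ) (hα : 0 < α)
    (hmax : ∀ β : ℝ, 0 ≤ β → dualKL μ Z δ β ≤ dualKL μ Z δ α) :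
    klDiv (μ.tilted fun ω => -Z ω / α) μ ≤ ENNReal.ofReal δ ∧
    (∀ P : Measure Ω, IsProbabilityMeasure P → P ≪ μ → klDiv P μ ≤ ENNReal.ofReal δ →
      ∫ ω, Z ω ∂(μ.tilted fun ω => -Z ω / α) ≤ ∫ ω, Z ω ∂P) ∧
    (∀ P : Measure Ω, IsProbabilityMeasure P → P ≪ μ → klDiv P μ ≤ ENNReal.ofReal δ →
      (∫ ω, Z ω ∂P = ∫ ω, Z ω ∂(μ.tilted fun ω => -Z ω / α)) →
      P = μ.tilted fun ω => -Z ω / α) := by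
  have he_meas : Measurable (fun ω => Real.exp (-Z ω / α)) := (hZ.neg.div_const α).exp
  have he_pos : ∀ ω, 0 < Real.exp (-Z ω / α) := fun ω => Real.exp_pos _
  have he_le_one : ∀ᵐ ω ∂μ, Real.exp (-Z ω / α) ≤ 1 := by
    filter_upwards [hZb] with ω hω
    exact Real.exp_le_one_iff.2 (div_nonpos_of_nonpos_of_nonneg (neg_nonpos.2 hω.1) hα.le)
  have he_int : Integrable (fun ω => Real.exp (-Z ω / α)) μ := by
    refine Integrable.mono' (integrable_const 1) he_meas.aestronglyMeasurable ?_
    filter_upwards [he_le_one] with ω hω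
    rw [Real.norm_eq_abs, abs_of_nonneg (he_pos ω).le]
    exact hω
  set m : ℝ := ∫ ω, Real.exp (-Z ω / α) ∂μ with hm_def
  have hm : 0 < m := integral_exp_pos he_int
  -- W = ∫ Z e
  have hZe_meas : Measurable (fun ω => Z ω * Real.exp (-Z ω / α)) := hZ.mul he_meas
  have hZe_int : Integrable (fun ω => Z ω * Real.exp (-Z ω / α)) μ := by
    refine Integrable.mono' (integrable_const M) hZe_meas.aestronglyMeasurable ?_
    filter_upwards [hZb, he_le_one] with ω hω h1
    rw [Real.norm_eq_abs, abs_of_nonneg (mul_nonneg hω.1 (he_pos ω).le)]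
    calc Z ω * Real.exp (-Z ω / α) ≤ Z ω * 1 := by
          exact mul_le_mul_of_nonneg_left h1 hω.1
      _ = Z ω := mul_one _
      _ ≤ M := hω.2
  set W : ℝ := ∫ ω, Z ω * Real.exp (-Z ω / α) ∂μ with hW_def
  -- derivative of I t = ∫ exp (-Z/t)
  have hderivI : HasDerivAt (fun t : ℝ => ∫ ω, Real.exp (-Z ω / t) ∂μ) (W / α ^ 2) α := by
    have hM0 : 0 ≤ M := by
      by_contra hM
      push_neg at hM
      have h00 : ∀ᵐ ω ∂μ, False := by
        filter_upwards [hZb] with ω hω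
        linarith [hω.1, hω.2]
      exact absurd (by simpa using h00 : μ = 0) (IsProbabilityMeasure.ne_zero μ)
    have key := hasDerivAt_integral_of_dominated_loc_of_deriv_le (μ := μ)
      (F := fun (t : ℝ) ω => Real.exp (-Z ω / t))
      (F' := fun (t : ℝ) ω => Real.exp (-Z ω / t) * (Z ω / t ^ 2))
      (x₀ := α) (s := Metric.ball α (α / 2)) (bound := fun _ => M / (α / 2) ^ 2)
      (Metric.ball_mem_nhds _ (by positivity))
      (Filter.Eventually.of_forall fun t => ((hZ.neg.div_const t).exp).aestronglyMeasurable)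
      he_int
      ((he_meas.mul (hZ.div_const _)).aestronglyMeasurable)
      ?_ (integrable_const _) ?_
    · have heq : (∫ ω, Real.exp (-Z ω / α) * (Z ω / α ^ 2) ∂μ) = W / α ^ 2 := by
        rw [hW_def, ← integral_div]
        congr 1
        funext ω
        ring
      rw [← heq]
      exact key.2
    · filter_upwards [hZb] with ω hω t ht
      have ht2 : α / 2 < t := by
        rw [Metric.mem_ball, Real.dist_eq, abs_lt] at ht
        linarith [ht.1]
      have ht0 : 0 < t := lt_trans (by positivity) ht2
      have hexp1 : Real.exp (-Z ω / t) ≤ 1 :=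
        Real.exp_le_one_iff.2 (div_nonpos_of_nonpos_of_nonneg (neg_nonpos.2 hω.1) ht0.le)
      rw [Real.norm_eq_abs, abs_of_nonneg (mul_nonneg (Real.exp_pos _).le
        (div_nonneg hω.1 (by positivity)))]
      calc Real.exp (-Z ω / t) * (Z ω / t ^ 2) ≤ 1 * (Z ω / t ^ 2) := by
            exact mul_le_mul_of_nonneg_right hexp1 (div_nonneg hω.1 (by positivity))
        _ = Z ω / t ^ 2 := one_mul _
        _ ≤ M / (α / 2) ^ 2 := by
            apply div_le_div₀ hM0 hω.2 (by positivity)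
            exact pow_le_pow_left₀ (by positivity) ht2.le 2
    · refine Filter.Eventually.of_forall fun ω => fun t ht => ?_
      have ht2 : α / 2 < t := by
        rw [Metric.mem_ball, Real.dist_eq, abs_lt] at ht
        linarith [ht.1]
      have ht0 : t ≠ 0 := ne_of_gt (lt_trans (by positivity) ht2)
      have h1 : HasDerivAt (fun u : ℝ => -Z ω * u⁻¹) (-Z ω * -(t ^ 2)⁻¹) t :=
        (hasDerivAt_inv ht0).const_mul (-Z ω)
      have h2 := h1.exp
      have hfun : (fun u : ℝ => Real.exp (-Z ω * u⁻¹)) = fun u : ℝ => Real.exp (-Z ω / u) := by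
        funext u
        rw [div_eq_mul_inv]
      rw [hfun] at h2
      refine h2.congr_deriv ?_
      simp only [div_eq_mul_inv]
      ring
  -- first-order condition
  have hlocmax : IsLocalMax (fun t : ℝ => -t * Real.log (∫ ω, Real.exp (-Z ω / t) ∂μ) - t * δ) α := by
    filter_upwards [eventually_gt_nhds hα] with t ht
    have h1 := hmax t ht.le
    rw [dualKL, dualKL, if_neg ht.ne', if_neg hα.ne'] at h1
    exact h1
  have hderivG : HasDerivAt (fun t : ℝ => -t * Real.log (∫ ω, Real.exp (-Z ω / t) ∂μ) - t * δ)
      (-1 * Real.log m + -α * (W / α ^ 2 / m) - 1 * δ) α := by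
    have hL : HasDerivAt (fun t : ℝ => Real.log (∫ ω, Real.exp (-Z ω / t) ∂μ)) (W / α ^ 2 / m) α :=
      hderivI.log hm.ne'
    exact ((hasDerivAt_id α).neg.mul hL).sub ((hasDerivAt_id α).mul_const δ)
  have hfoc := hlocmax.hasDerivAt_eq_zero hderivG
  have h3 : W / (α * m) = -Real.log m - δ := by
    have h2 : α * (W / α ^ 2 / m) = W / (α * m) := by
      field_simp
    nlinarith [hfoc, h2]
  have hkey : W / m = α * (-Real.log m - δ) := by
    rw [← h3]
    field_simp
  -- value of ∫ Z dQ
  have hVQ : ∫ ω, Z ω ∂(μ.tilted fun ω => -Z ω / α) = W / m := by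
    rw [integral_tilted]
    simp only [smul_eq_mul]
    rw [hW_def, ← integral_div]
    congr 1
    funext ω
    rw [← hm_def]
    ring
  -- log of density
  have hlog_q : ∀ ω, Real.log (Real.exp (-Z ω / α) / m) = -Z ω / α - Real.log m := by
    intro ω
    rw [Real.log_div (Real.exp_ne_zero _) hm.ne', Real.log_exp]
  -- Part 1 : klMain
  have hq_meas : Measurable (fun ω => Real.exp (-Z ω / α) / m) := he_meas.div_const m
  have hq_pos : ∀ ω, 0 < Real.exp (-Z ω / α) / m := fun ω => div_pos (he_pos ω) hm
  have hq_int : Integrable (fun ω => Real.exp (-Z ω / α) / m) μ := he_int.div_const m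
  have hq_one : ∫ ω, Real.exp (-Z ω / α) / m ∂μ = 1 := by
    rw [integral_div, ← hm_def, div_self hm.ne']
  have hqlq_eq : (fun ω => (Real.exp (-Z ω / α) / m) * Real.log (Real.exp (-Z ω / α) / m))
      = fun ω => (-(1 / (α * m))) * (Z ω * Real.exp (-Z ω / α))
          + (-(Real.log m / m)) * Real.exp (-Z ω / α) := by
    funext ω
    rw [hlog_q ω]
    field_simp
    ring
  have hqlq_int : Integrable (fun ω => (Real.exp (-Z ω / α) / m) * Real.log (Real.exp (-Z ω / α) / m)) μ := by
    rw [hqlq_eq]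
    exact (hZe_int.const_mul _).add (he_int.const_mul _)
  have hqlq_val : ∫ ω, (Real.exp (-Z ω / α) / m) * Real.log (Real.exp (-Z ω / α) / m) ∂μ = δ := by
    rw [hqlq_eq, integral_add (hZe_int.const_mul _) (he_int.const_mul _),
      integral_const_mul, integral_const_mul, ← hW_def, ← hm_def]
    have hm' : m ≠ 0 := hm.ne'
    field_simp at h3 ⊢
    nlinarith [h3]
  have part1 : klDiv (μ.tilted fun ω => -Z ω / α) μ = ENNReal.ofReal δ := by
    have hrn := rnDeriv_tilted_left_self (μ := μ) (f := fun ω => -Z ω / α)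
      (hZ.neg.div_const α).aemeasurable
    have hcongr : (fun ω => ENNReal.ofReal
        ((((μ.tilted fun ω => -Z ω / α)).rnDeriv μ ω).toReal
          * Real.log ((((μ.tilted fun ω => -Z ω / α)).rnDeriv μ ω).toReal)
          - (((μ.tilted fun ω => -Z ω / α)).rnDeriv μ ω).toReal + 1))
        =ᵐ[μ] fun ω => ENNReal.ofReal ((Real.exp (-Z ω / α) / m) * Real.log (Real.exp (-Z ω / α) / m)
          - Real.exp (-Z ω / α) / m + 1) := by
      filter_upwards [hrn] with ω hω
      rw [hω, ENNReal.toReal_ofReal (hq_pos ω).le]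
    have hA_int : Integrable (fun ω => (Real.exp (-Z ω / α) / m) * Real.log (Real.exp (-Z ω / α) / m)
        - Real.exp (-Z ω / α) / m) μ := hqlq_int.sub hq_int
    rw [klDiv, lintegral_congr_ae hcongr, ← ofReal_integral_eq_lintegral_ofReal]
    · rw [integral_add hA_int (integrable_const 1),
        integral_sub hqlq_int hq_int, hqlq_val, hq_one]
      norm_num
    · exact hA_int.add (integrable_const 1)
    · refine Filter.Eventually.of_forall fun ω => ?_
      have := (klAux (hq_pos ω).le one_pos).1
      simpa using this
  -- lower bound and equality for P in the KL ball
  have hPmain : ∀ P : Measure Ω, IsProbabilityMeasure P → P ≪ μ → klDiv P μ ≤ ENNReal.ofReal δ →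
      (W / m ≤ ∫ ω, Z ω ∂P) ∧ (∫ ω, Z ω ∂P = W / m → P = μ.tilted fun ω => -Z ω / α) := by
    intro P hPprob hPμ hPkl
    set r : Ω → ℝ := fun ω => (P.rnDeriv μ ω).toReal with hr_def
    have hr_meas : Measurable r := (Measure.measurable_rnDeriv P μ).ennreal_toReal
    have hr_nonneg : ∀ ω, 0 ≤ r ω := fun ω => ENNReal.toReal_nonneg
    have hr_int : Integrable r μ := Measure.integrable_toReal_rnDeriv
    have hr_one : ∫ ω, r ω ∂μ = 1 := by
      rw [hr_def]
      rw [Measure.integral_toReal_rnDeriv hPμ]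
      simp
    set h : Ω → ℝ := fun ω => r ω * Real.log (r ω) - r ω + 1 with hh_def
    have hh_nonneg : ∀ ω, 0 ≤ h ω := by
      intro ω
      have := (klAux (hr_nonneg ω) one_pos).1
      simpa using this
    have hh_meas : Measurable h :=
      ((hr_meas.mul (Real.measurable_log.comp hr_meas)).sub hr_meas).add measurable_const
    have hPkl' : ∫⁻ ω, ENNReal.ofReal (h ω) ∂μ ≤ ENNReal.ofReal δ := hPkl
    have hh_int : Integrable h μ :=
      ⟨hh_meas.aestronglyMeasurable,
        (hasFiniteIntegral_iff_ofReal (Filter.Eventually.of_forall hh_nonneg)).2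
          (lt_of_le_of_lt hPkl' ENNReal.ofReal_lt_top)⟩
    have hDle : ∫ ω, h ω ∂μ ≤ δ := by
      have heq := ofReal_integral_eq_lintegral_ofReal hh_int (Filter.Eventually.of_forall hh_nonneg)
      rw [← heq] at hPkl'
      exact (ENNReal.ofReal_le_ofReal_iff hδ.le).1 hPkl'
    have hrlr_eq : (fun ω => r ω * Real.log (r ω)) = fun ω => h ω + (r ω - 1) := by
      funext ω
      rw [hh_def]
      ring
    have hr1_int : Integrable (fun ω => r ω - 1) μ := hr_int.sub (integrable_const 1)
    have hrlr_int : Integrable (fun ω => r ω * Real.log (r ω)) μ := by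
      rw [hrlr_eq]
      exact hh_int.add hr1_int
    have hrlr_val : ∫ ω, r ω * Real.log (r ω) ∂μ = ∫ ω, h ω ∂μ := by
      rw [hrlr_eq, integral_add hh_int hr1_int,
        integral_sub hr_int (integrable_const 1), hr_one]
      simp
    -- r * Z integrable and its integral
    have hrZ_int : Integrable (fun ω => r ω * Z ω) μ := by
      refine Integrable.mono' (hr_int.const_mul M) (hr_meas.mul hZ).aestronglyMeasurable ?_
      filter_upwards [hZb] with ω hω
      rw [Real.norm_eq_abs, abs_mul, abs_of_nonneg (hr_nonneg ω), abs_of_nonneg hω.1]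
      calc r ω * Z ω ≤ r ω * M := mul_le_mul_of_nonneg_left hω.2 (hr_nonneg ω)
        _ = M * r ω := mul_comm _ _
    have hrZ_val : ∫ ω, r ω * Z ω ∂μ = ∫ ω, Z ω ∂P := by
      have h := integral_rnDeriv_smul (μ := P) (ν := μ) hPμ (f := Z)
      simp only [smul_eq_mul] at h
      exact h
    -- r * log q
    have hrlq_eq : (fun ω => r ω * Real.log (Real.exp (-Z ω / α) / m))
        = fun ω => (-(1 / α)) * (r ω * Z ω) + (-(Real.log m)) * r ω := by
      funext ω
      rw [hlog_q ω]
      field_simp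
      ring
    have hrlq_int : Integrable (fun ω => r ω * Real.log (Real.exp (-Z ω / α) / m)) μ := by
      rw [hrlq_eq]
      exact (hrZ_int.const_mul _).add (hr_int.const_mul _)
    have hrlq_val : ∫ ω, r ω * Real.log (Real.exp (-Z ω / α) / m) ∂μ
        = (-(1 / α)) * ∫ ω, Z ω ∂P + (-(Real.log m)) := by
      rw [hrlq_eq, integral_add (hrZ_int.const_mul _) (hr_int.const_mul _),
        integral_const_mul, integral_const_mul, hrZ_val, hr_one, mul_one]
    -- nonnegative function g
    set g : Ω → ℝ := fun ω => r ω * Real.log (r ω) - r ω * Real.log (Real.exp (-Z ω / α) / m)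
        - r ω + Real.exp (-Z ω / α) / m with hg_def
    have hg_nonneg : ∀ ω, 0 ≤ g ω := fun ω => (klAux (hr_nonneg ω) (hq_pos ω)).1
    have hg_int : Integrable g μ :=
      ((hrlr_int.sub hrlq_int).sub hr_int).add hq_int
    have hB_int : Integrable (fun ω => r ω * Real.log (r ω)
        - r ω * Real.log (Real.exp (-Z ω / α) / m)) μ := hrlr_int.sub hrlq_int
    have hC_int : Integrable (fun ω => r ω * Real.log (r ω)
        - r ω * Real.log (Real.exp (-Z ω / α) / m) - r ω) μ := hB_int.sub hr_int
    have hg_val : ∫ ω, g ω ∂μ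
        = ∫ ω, h ω ∂μ + (1 / α) * ∫ ω, Z ω ∂P + Real.log m := by
      rw [hg_def]
      simp only
      rw [integral_add hC_int hq_int, integral_sub hB_int hr_int,
        integral_sub hrlr_int hrlq_int, hrlr_val, hrlq_val, hr_one, hq_one]
      ring
    have hg0 : 0 ≤ ∫ ω, g ω ∂μ := integral_nonneg hg_nonneg
    have hg_val' : α * ∫ ω, g ω ∂μ
        = α * ∫ ω, h ω ∂μ + ∫ ω, Z ω ∂P + α * Real.log m := by
      rw [hg_val]
      field_simp
    constructor
    · -- lower bound
      rw [hkey]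
      have h4 : 0 ≤ α * ∫ ω, g ω ∂μ := mul_nonneg hα.le hg0
      have h5 := mul_le_mul_of_nonneg_left hDle hα.le
      nlinarith [h4, h5, hg_val']
    · intro hTe
      have hT : ∫ ω, Z ω ∂P = α * (-Real.log m - δ) := by rw [hTe, hkey]
      have hgz : α * ∫ ω, g ω ∂μ = α * (∫ ω, h ω ∂μ - δ) := by
        rw [hg_val', hT]
        ring
      have hgz' : ∫ ω, g ω ∂μ = ∫ ω, h ω ∂μ - δ := mul_left_cancel₀ hα.ne' hgz
      have hDeq : ∫ ω, g ω ∂μ = 0 := by linarith [hg0, hgz', hDle]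
      have hgae : g =ᵐ[μ] 0 := by
        rw [← integral_eq_zero_iff_of_nonneg hg_nonneg hg_int]
        exact hDeq
      have hrq : ∀ᵐ ω ∂μ, r ω = Real.exp (-Z ω / α) / m := by
        filter_upwards [hgae] with ω hω
        exact (klAux (hr_nonneg ω) (hq_pos ω)).2 hω
      have hrn_eq : P.rnDeriv μ =ᵐ[μ] fun ω => ENNReal.ofReal (Real.exp (-Z ω / α) / m) := by
        filter_upwards [hrq, Measure.rnDeriv_lt_top P μ] with ω hω hlt
        rw [← hω, hr_def]
        rw [ENNReal.ofReal_toReal hlt.ne]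
      calc P = μ.withDensity (P.rnDeriv μ) := (Measure.withDensity_rnDeriv_eq P μ hPμ).symm
        _ = μ.withDensity (fun ω => ENNReal.ofReal (Real.exp (-Z ω / α) / m)) :=
            withDensity_congr_ae hrn_eq
        _ = μ.tilted fun ω => -Z ω / α := rfl
  refine ⟨part1.le, fun P h1 h2 h3' => ?_, fun P h1 h2 h3' h4 => ?_⟩
  · rw [hVQ]
    exact (hPmain P h1 h2 h3').1
  · exact (hPmain P h1 h2 h3').2 (by rw [h4, hVQ])


/-- **The worst-case distribution of KL-DRO policy evaluation.** In the batch contextual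
bandit setup with the positive-density assumption, with `α*(π) ∈ (0, ∞)` the unique
maximizer of the dual objective `φ(π, α) = −α log E[exp(−Y(π(X))/α)] − αδ` over `α ≥ 0`,
the exponentially tilted measure `P(π)` with
`dP(π)/dP0 = exp(−Y(π(X))/α*) / E[exp(−Y(π(X))/α*)]` belongs to the KL-ball `U_{P0}(δ)` and is
the unique minimizer of `E_P[Y(π(X))]` over `P ∈ U_{P0}(δ)`. -/
theorem stmt2 {Ω 𝒳 𝒜 : Type*} [MeasurableSpace Ω] [MeasurableSpace 𝒳] [MeasurableSpace 𝒜]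
    [Fintype 𝒜] [MeasurableSingletonClass 𝒜]
    (μ : Measure Ω) [IsProbabilityMeasure μ]
    (X : Ω → 𝒳) (Y : 𝒜 → Ω → ℝ) (M b : ℝ) (hb : 0 < b)
    (hX : Measurable X) (hY : ∀ a, Measurable (Y a))
    (hbound : ∀ a, ∀ᵐ ω ∂μ, Y a ω ∈ Set.Icc 0 M)
    -- positive-density assumption: `Y(a) | X` has conditional density `f a x ≥ b` on `[0, M]`:
    (f : 𝒜 → 𝒳 → ℝ → ℝ) (hfmeas : ∀ a, Measurable (Function.uncurry (f a)))
    (hfpos : ∀ a x, ∀ y ∈ Set.Icc (0 : ℝ) M, b ≤ f a x y)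
    (hfzero : ∀ a x, ∀ y : ℝ, y ∉ Set.Icc (0 : ℝ) M → f a x y = 0)
    (hdensity : ∀ (a : 𝒜) (s : Set 𝒳), MeasurableSet s → ∀ B : Set ℝ, MeasurableSet B →
      (μ {ω | X ω ∈ s ∧ Y a ω ∈ B}).toReal
        = ∫ ω in X ⁻¹' s, (∫ y in B, f a (X ω) y) ∂μ)
    (π : 𝒳 → 𝒜) (hπ : Measurable π) (δ : ℝ) (hδ : 0 < δ)
    (αstar : ℝ) (hαstar : 0 < αstar)
    -- `αstar` is the unique maximizer of the dual objective over `α ≥ 0`: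
    (hmax : ∀ β : ℝ, 0 ≤ β →
      dualKL μ (fun ω => Y (π (X ω)) ω) δ β ≤ dualKL μ (fun ω => Y (π (X ω)) ω) δ αstar)
    (huniq : ∀ β : ℝ, 0 ≤ β →
      dualKL μ (fun ω => Y (π (X ω)) ω) δ β = dualKL μ (fun ω => Y (π (X ω)) ω) δ αstar →
      β = αstar) :
    klDiv (μ.tilted fun ω => -Y (π (X ω)) ω / αstar) μ ≤ ENNReal.ofReal δ ∧
    (∀ P : Measure Ω, IsProbabilityMeasure P → P ≪ μ → klDiv P μ ≤ ENNReal.ofReal δ →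
      ∫ ω, Y (π (X ω)) ω ∂(μ.tilted fun ω => -Y (π (X ω)) ω / αstar) ≤
        ∫ ω, Y (π (X ω)) ω ∂P) ∧
    (∀ P : Measure Ω, IsProbabilityMeasure P → P ≪ μ → klDiv P μ ≤ ENNReal.ofReal δ →
      (∫ ω, Y (π (X ω)) ω ∂P =
        ∫ ω, Y (π (X ω)) ω ∂(μ.tilted fun ω => -Y (π (X ω)) ω / αstar)) →
      P = μ.tilted fun ω => -Y (π (X ω)) ω / αstar) := by
  have hZmeas : Measurable (fun ω => Y (π (X ω)) ω) := by
    have hfun : (fun ω => Y (π (X ω)) ω)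
        = fun ω => ∑ a : 𝒜, if π (X ω) = a then Y a ω else 0 := by
      funext ω
      rw [Finset.sum_ite_eq]
      simp
    rw [hfun]
    refine Finset.measurable_sum _ fun a _ => Measurable.ite ?_ (hY a) measurable_const
    exact (hπ.comp hX) (measurableSet_singleton a)
  have hZb : ∀ᵐ ω ∂μ, (fun ω => Y (π (X ω)) ω) ω ∈ Set.Icc 0 M := by
    have hall : ∀ᵐ ω ∂μ, ∀ a, Y a ω ∈ Set.Icc 0 M := ae_all_iff.2 hbound
    filter_upwards [hall] with ω hω using hω _
  exact dro_main μ (fun ω => Y (π (X ω)) ω) hZmeas M hZb δ hδ αstar hαstar hmax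
end

section
/- In the batch contextual bandit setup with the positive-density assumption, suppose that under P0 the rewards Y(a^1), …, Y(a^d) are mutually conditionally independent given X. Fix a policy π and δ > 0, let α*(π) ∈ (0, ∞) be the unique maximizer of φ(π, α) = −α log E_{P0}[exp(−Y(π(X))/α)] − αδ over α ≥ 0, and let P(π) be the tilted measure with dP(π)/dP0 = exp(−Y(π(X))/α*(π)) / E_{P0}[exp(−Y(π(X))/α*(π))]. Then under P(π) the rewards Y(a^1), …, Y(a^d) are still mutually conditionally independent given X. -/
open scoped Classical ENNReal

open MeasureTheory Set ProbabilityTheory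

section Aux

variable {Ω : Type*} {m' : MeasurableSpace Ω} [mΩ : MeasurableSpace Ω]
  {μ : Measure Ω} [IsProbabilityMeasure μ]

lemma aux_integrable {h : Ω → ℝ} (hm : AEStronglyMeasurable h μ) {C : ℝ}
    (hb : ∀ᵐ ω ∂μ, |h ω| ≤ C) : Integrable h μ :=
  (integrable_const C).mono' hm (by
    filter_upwards [hb] with ω hω
    rw [Real.norm_eq_abs]; exact hω)

lemma indicator_biInter_prod {ι : Type*} (T : Finset ι) (A : ι → Set Ω) (ω : Ω) :
    Set.indicator (⋂ i ∈ T, A i) (fun _ => (1:ℝ)) ω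
      = ∏ i ∈ T, Set.indicator (A i) (fun _ => (1:ℝ)) ω := by
  by_cases h : ω ∈ ⋂ i ∈ T, A i
  · rw [Set.indicator_of_mem h]
    simp only [Set.mem_iInter] at h
    exact (Finset.prod_eq_one fun i hi => Set.indicator_of_mem (h i hi) _).symm
  · rw [Set.indicator_of_notMem h]
    simp only [Set.mem_iInter, not_forall] at h
    obtain ⟨i, hi, hni⟩ := h
    exact (Finset.prod_eq_zero hi (by simp [Set.indicator_of_notMem hni])).symm

lemma sum_ite_lt_nat (m K : ℕ) :
    ∑ k ∈ Finset.range m, (if k < K then (1:ℝ) else 0) = (min m K : ℕ) := by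
  induction m with
  | zero => simp
  | succ m ih =>
    rw [Finset.sum_range_succ, ih]
    rcases lt_or_ge m K with h | h
    · rw [if_pos h]
      have : min (m+1) K = min m K + 1 := by omega
      rw [this]; push_cast; ring
    · rw [if_neg (not_lt.mpr h)]
      have : min (m+1) K = min m K := by omega
      rw [this, add_zero]

lemma condexp_mem_Icc (hm' : m' ≤ mΩ) {h : Ω → ℝ} (hmeas : AEStronglyMeasurable h μ)
    {lo hi : ℝ} (hb : ∀ᵐ ω ∂μ, h ω ∈ Set.Icc lo hi) :
    ∀ᵐ ω ∂μ, (μ[h|m']) ω ∈ Set.Icc lo hi := by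
  have hint : Integrable h μ := aux_integrable hmeas (C := max |lo| |hi|)
    (by filter_upwards [hb] with ω hω using abs_le_max_abs_abs hω.1 hω.2)
  have h1 : μ[(fun _ => lo : Ω → ℝ)|m'] ≤ᵐ[μ] μ[h|m'] :=
    condExp_mono (integrable_const lo) hint (by filter_upwards [hb] with ω hω using hω.1)
  have h2 : μ[h|m'] ≤ᵐ[μ] μ[(fun _ => hi : Ω → ℝ)|m'] :=
    condExp_mono hint (integrable_const hi) (by filter_upwards [hb] with ω hω using hω.2)
  rw [condExp_const hm'] at h1 h2
  filter_upwards [h1, h2] with ω ha hb using ⟨ha, hb⟩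

/-- Bayes rule for conditional expectations under a tilted measure. -/
lemma bayes_tilted (hm' : m' ≤ mΩ) (μ : Measure Ω) [IsProbabilityMeasure μ]
    {ρ : Ω → ℝ} (hρ : Measurable ρ) {ε : ℝ} (hε : 0 < ε)
    (hl : ∀ᵐ ω ∂μ, ε ≤ Real.exp (ρ ω)) (hu : ∀ᵐ ω ∂μ, Real.exp (ρ ω) ≤ 1)
    (A : Set Ω) (hA : MeasurableSet A) :
    (μ.tilted ρ)[Set.indicator A (fun _ => (1:ℝ))|m'] =ᵐ[μ.tilted ρ]
      fun ω => (μ[fun ω => Set.indicator A (fun _ => (1:ℝ)) ω * Real.exp (ρ ω)|m']) ω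
        / (μ[fun ω => Real.exp (ρ ω)|m']) ω := by
  set G : Ω → ℝ := fun ω => Real.exp (ρ ω) with hGdef
  have hGmeas : Measurable G := (Real.measurable_exp.comp hρ)
  have hGnn : ∀ ω, 0 ≤ G ω := fun ω => (Real.exp_pos _).le
  have hGint : Integrable G μ := aux_integrable hGmeas.aestronglyMeasurable (C := 1)
    (by filter_upwards [hu] with ω hω
        rw [abs_of_nonneg (hGnn ω)]; exact hω)
  haveI : IsProbabilityMeasure (μ.tilted ρ) := isProbabilityMeasure_tilted hGint
  set ν := μ.tilted ρ with hνdef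
  have hAC : ν ≪ μ := tilted_absolutelyContinuous μ ρ
  set IA : Ω → ℝ := Set.indicator A (fun _ => (1:ℝ)) with hIAdef
  have hIAmeas : Measurable IA := measurable_const.indicator hA
  have hIA01 : ∀ ω, IA ω ∈ Set.Icc (0:ℝ) 1 := fun ω => by
    by_cases h : ω ∈ A <;> simp [IA, Set.indicator_of_mem, Set.indicator_of_notMem, h]
  have hIAGint : Integrable (fun ω => IA ω * G ω) μ :=
    aux_integrable (hIAmeas.mul hGmeas).aestronglyMeasurable (C := 1)
      (by filter_upwards [hu] with ω hω
          rw [abs_of_nonneg (mul_nonneg (hIA01 ω).1 (hGnn ω))]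
          exact mul_le_one₀ (hIA01 ω).2 (hGnn ω) hω)
  set D : Ω → ℝ := μ[G|m'] with hDdef
  set N : Ω → ℝ := μ[fun ω => IA ω * G ω|m'] with hNdef
  have hDge : ∀ᵐ ω ∂μ, ε ≤ D ω := by
    have h1 := condExp_mono (m := m') (integrable_const ε) hGint hl
    rw [condExp_const hm'] at h1
    exact h1
  have hN0 : ∀ᵐ ω ∂μ, 0 ≤ N ω :=
    condExp_nonneg (ae_of_all μ fun ω => mul_nonneg (hIA01 ω).1 (hGnn ω))
  have hNleD : ∀ᵐ ω ∂μ, N ω ≤ D ω :=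
    condExp_mono hIAGint hGint (ae_of_all μ fun ω =>
      mul_le_of_le_one_left (hGnn ω) (hIA01 ω).2)
  set h : Ω → ℝ := fun ω => N ω / D ω with hhdef
  have hh_sm : StronglyMeasurable[m'] h :=
    (stronglyMeasurable_condExp.measurable.div
      stronglyMeasurable_condExp.measurable).stronglyMeasurable
  have hh01 : ∀ᵐ ω ∂μ, h ω ∈ Set.Icc (0:ℝ) 1 := by
    filter_upwards [hDge, hN0, hNleD] with ω h1 h2 h3
    have hDpos : 0 < D ω := lt_of_lt_of_le hε h1
    exact ⟨div_nonneg h2 hDpos.le, div_le_one_of_le₀ h3 hDpos.le⟩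
  have hc_pos : 0 < ∫ ω, G ω ∂μ := by
    have h1 : ε ≤ ∫ ω, G ω ∂μ := by
      have h2 := integral_mono_ae (integrable_const ε) hGint hl
      simpa using h2
    linarith
  have hint_ν : Integrable IA ν := aux_integrable hIAmeas.aestronglyMeasurable (C := 1)
    (ae_of_all ν fun ω => by
      rw [abs_of_nonneg (hIA01 ω).1]; exact (hIA01 ω).2)
  have hh_asm : AEStronglyMeasurable h ν := ((hh_sm.mono hm').aestronglyMeasurable)
  have hh_int_ν : Integrable h ν := aux_integrable hh_asm (C := 1)
    (by filter_upwards [hAC.ae_le hh01] with ω hω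
        rw [abs_of_nonneg hω.1]; exact hω.2)
  refine (ae_eq_condExp_of_forall_setIntegral_eq hm' hint_ν
    (fun s _ _ => hh_int_ν.integrableOn) (fun s hs _ => ?_)
    (hh_sm.aestronglyMeasurable)).symm
  have hsm : MeasurableSet s := hm' s hs
  -- h * G has the same conditional expectation as IA * G
  have hhG_int : Integrable (fun ω => h ω * G ω) μ :=
    aux_integrable ((hh_sm.mono hm').measurable.mul hGmeas).aestronglyMeasurable (C := 1)
      (by filter_upwards [hh01, hu] with ω h1 h2
          rw [abs_of_nonneg (mul_nonneg h1.1 (hGnn ω))]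
          exact mul_le_one₀ h1.2 (hGnn ω) h2)
  have hpull : μ[fun ω => h ω * G ω|m'] =ᵐ[μ] fun ω => h ω * D ω := by
    have := condExp_mul_of_stronglyMeasurable_left hh_sm (by simpa [HMul.hMul, Mul.mul] using hhG_int)
      hGint
    exact this
  have hhD_eq_N : (fun ω => h ω * D ω) =ᵐ[μ] N := by
    filter_upwards [hDge] with ω h1
    have : D ω ≠ 0 := (lt_of_lt_of_le hε h1).ne'
    simp only [h, div_mul_cancel₀ _ this]
  -- the two set integrals
  calc ∫ ω in s, h ω ∂ν
      = ∫ ω in s, ((∫ x, Real.exp (ρ x) ∂μ)⁻¹ * (h ω * G ω)) ∂μ := by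
        rw [setIntegral_tilted' ρ h hsm]
        refine setIntegral_congr_ae hsm ?_
        filter_upwards with ω _
        simp only [smul_eq_mul, G]
        ring
    _ = (∫ x, Real.exp (ρ x) ∂μ)⁻¹ * ∫ ω in s, h ω * G ω ∂μ := by
        rw [integral_const_mul]
    _ = (∫ x, Real.exp (ρ x) ∂μ)⁻¹ * ∫ ω in s, IA ω * G ω ∂μ := by
        congr 1
        rw [← setIntegral_condExp hm' hhG_int hs, ← setIntegral_condExp hm' hIAGint hs]
        refine setIntegral_congr_ae hsm ?_
        filter_upwards [hpull, hhD_eq_N] with ω h1 h2 _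
        rw [h1, h2]
    _ = ∫ ω in s, IA ω ∂ν := by
        rw [setIntegral_tilted' ρ IA hsm]
        rw [← integral_const_mul]
        refine setIntegral_congr_ae hsm ?_
        filter_upwards with ω _
        simp only [smul_eq_mul, G]
        ring

/-- Dyadic approximation bounds. -/
lemma dyadic_bounds {ψ : ℝ → ℝ} (hψ01 : ∀ y, ψ y ∈ Set.Icc (0:ℝ) 1) (n : ℕ) (y : ℝ) :
    0 ≤ ψ y - ((2:ℝ)^n)⁻¹ * ∑ k ∈ Finset.range (2^n),
        Set.indicator (ψ ⁻¹' Set.Ici (((k:ℝ)+1)/(2:ℝ)^n)) (fun _ => (1:ℝ)) y ∧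
      ψ y - ((2:ℝ)^n)⁻¹ * ∑ k ∈ Finset.range (2^n),
        Set.indicator (ψ ⁻¹' Set.Ici (((k:ℝ)+1)/(2:ℝ)^n)) (fun _ => (1:ℝ)) y ≤ ((2:ℝ)^n)⁻¹ := by
  set t := ψ y with htdef
  have ht : t ∈ Set.Icc (0:ℝ) 1 := hψ01 y
  have h2n : (0:ℝ) < 2^n := by positivity
  set K := ⌊t * 2^n⌋₊ with hKdef
  have hind : ∀ k : ℕ, Set.indicator (ψ ⁻¹' Set.Ici (((k:ℝ)+1)/(2:ℝ)^n)) (fun _ => (1:ℝ)) y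
      = if k < K then 1 else 0 := by
    intro k
    have hiff : y ∈ ψ ⁻¹' Set.Ici (((k:ℝ)+1)/(2:ℝ)^n) ↔ k < K := by
      rw [Set.mem_preimage, Set.mem_Ici, ← htdef]
      rw [div_le_iff₀ h2n]
      rw [show ((k:ℝ)+1) = ((k+1 : ℕ):ℝ) by push_cast; ring]
      rw [← Nat.le_floor_iff (mul_nonneg ht.1 h2n.le), ← hKdef]
      omega
    rw [Set.indicator_apply, if_congr hiff rfl rfl]
  have hsum : ∑ k ∈ Finset.range (2^n),
      Set.indicator (ψ ⁻¹' Set.Ici (((k:ℝ)+1)/(2:ℝ)^n)) (fun _ => (1:ℝ)) y = (K:ℝ) := by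
    simp only [hind]
    rw [sum_ite_lt_nat (2^n) K]
    have hKle : K ≤ 2^n := by
      have h1 : t * 2^n ≤ ((2^n : ℕ) : ℝ) := by
        push_cast
        nlinarith [ht.2, h2n]
      have := Nat.floor_le_floor h1
      rwa [Nat.floor_natCast] at this
    rw [min_eq_right hKle]
  rw [hsum]
  have hfl : (K:ℝ) ≤ t * 2^n := Nat.floor_le (mul_nonneg ht.1 h2n.le)
  have hfl2 : t * 2^n < (K:ℝ) + 1 := Nat.lt_floor_add_one _
  constructor
  · have : (K:ℝ)/2^n ≤ t := by rw [div_le_iff₀ h2n]; exact hfl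
    have he : ((2:ℝ)^n)⁻¹ * K = K / 2^n := by ring
    linarith [he]
  · have : t - (K:ℝ)/2^n ≤ ((2:ℝ)^n)⁻¹ := by
      rw [sub_le_iff_le_add, inv_eq_one_div, ← add_div, le_div_iff₀ h2n]
      linarith
    have he : ((2:ℝ)^n)⁻¹ * K = K / 2^n := by ring
    linarith [he]

lemma ind01 {γ : Type*} (s : Set γ) (y : γ) :
    Set.indicator s (fun _ => (1:ℝ)) y ∈ Set.Icc (0:ℝ) 1 := by
  by_cases h : y ∈ s <;> simp [Set.indicator_apply, h]

lemma stepB {𝒜 : Type*} (hm' : m' ≤ mΩ) (μ : Measure Ω) [IsProbabilityMeasure μ]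
    (Y : 𝒜 → Ω → ℝ) (hY : ∀ a, Measurable (Y a))
    (HA : ∀ (T : Finset 𝒜) (Bs : 𝒜 → Set ℝ), (∀ i, MeasurableSet (Bs i)) →
      μ[fun ω => ∏ i ∈ T, Set.indicator (Y i ⁻¹' Bs i) (fun _ => (1:ℝ)) ω|m'] =ᵐ[μ]
        fun ω => ∏ i ∈ T, (μ[Set.indicator (Y i ⁻¹' Bs i) (fun _ => (1:ℝ))|m']) ω)
    (S : Finset 𝒜) (Bs : 𝒜 → Set ℝ) (hBs : ∀ i, MeasurableSet (Bs i))
    (a₀ : 𝒜) (ha₀ : a₀ ∉ S) (ψ : ℝ → ℝ) (hψ : Measurable ψ)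
    (hψ01 : ∀ y, ψ y ∈ Set.Icc (0:ℝ) 1) :
    μ[fun ω => (∏ i ∈ S, Set.indicator (Y i ⁻¹' Bs i) (fun _ => (1:ℝ)) ω) * ψ (Y a₀ ω)|m']
      =ᵐ[μ] fun ω => (∏ i ∈ S, (μ[Set.indicator (Y i ⁻¹' Bs i) (fun _ => (1:ℝ))|m']) ω)
        * (μ[fun ω => ψ (Y a₀ ω)|m']) ω := by
  set Z : Ω → ℝ := fun ω => ∏ i ∈ S, Set.indicator (Y i ⁻¹' Bs i) (fun _ => (1:ℝ)) ω with hZdef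
  have hZmeas : Measurable Z :=
    Finset.measurable_prod _ fun i _ => measurable_const.indicator ((hY i) (hBs i))
  have hZ01 : ∀ ω, Z ω ∈ Set.Icc (0:ℝ) 1 :=
    fun ω => ⟨Finset.prod_nonneg fun i _ => (ind01 _ ω).1,
      Finset.prod_le_one (fun i _ => (ind01 _ ω).1) (fun i _ => (ind01 _ ω).2)⟩
  set P : 𝒜 → Ω → ℝ := fun i => μ[Set.indicator (Y i ⁻¹' Bs i) (fun _ => (1:ℝ))|m'] with hPdef
  have hP01 : ∀ i, ∀ᵐ ω ∂μ, P i ω ∈ Set.Icc (0:ℝ) 1 := fun i =>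
    condexp_mem_Icc hm' (measurable_const.indicator ((hY i) (hBs i))).aestronglyMeasurable
      (ae_of_all μ fun ω => ind01 _ ω)
  have hprodP : ∀ᵐ ω ∂μ, ∀ i ∈ S, P i ω ∈ Set.Icc (0:ℝ) 1 :=
    (ae_ball_iff S.countable_toSet).mpr fun i _ => hP01 i
  -- bounded-measurable integrability helper
  have hbint : ∀ (h : Ω → ℝ), Measurable h → (∀ ω, h ω ∈ Set.Icc (0:ℝ) 1) → Integrable h μ := by
    intro h hm hb
    exact aux_integrable hm.aestronglyMeasurable (C := 1)
      (ae_of_all μ fun ω => by rw [abs_of_nonneg (hb ω).1]; exact (hb ω).2)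
  -- dyadic pieces
  set C : ℕ → ℕ → Set ℝ := fun n k => ψ ⁻¹' Set.Ici (((k:ℝ)+1)/(2:ℝ)^n) with hCdef
  have hCmeas : ∀ n k, MeasurableSet (C n k) := fun n k => hψ measurableSet_Ici
  set ψa : ℕ → Ω → ℝ := fun n ω => ((2:ℝ)^n)⁻¹ * ∑ k ∈ Finset.range (2^n),
      Set.indicator (C n k) (fun _ => (1:ℝ)) (Y a₀ ω) with hψadef
  have hψa_bounds : ∀ n ω, 0 ≤ ψ (Y a₀ ω) - ψa n ω ∧ ψ (Y a₀ ω) - ψa n ω ≤ ((2:ℝ)^n)⁻¹ :=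
    fun n ω => dyadic_bounds hψ01 n (Y a₀ ω)
  have hψa01 : ∀ n ω, ψa n ω ∈ Set.Icc (0:ℝ) 1 := by
    intro n ω
    have h1 := (hψa_bounds n ω).1
    have h2 := (hψ01 (Y a₀ ω))
    constructor
    · have : (0:ℝ) ≤ ((2:ℝ)^n)⁻¹ := by positivity
      exact mul_nonneg this (Finset.sum_nonneg fun k _ => (ind01 _ _).1)
    · linarith [h2.2]
  have hψameas : ∀ n, Measurable (ψa n) := by
    intro n
    apply Measurable.const_mul
    exact Finset.measurable_sum _ fun k _ =>
      (measurable_const.indicator (hCmeas n k)).comp (hY a₀)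
  set In : ℕ → ℕ → Ω → ℝ := fun n k => Set.indicator (Y a₀ ⁻¹' C n k) (fun _ => (1:ℝ))
    with hIndef
  set F : ℕ → ℕ → Ω → ℝ := fun n k ω => Z ω * In n k ω with hFdef
  set Q : ℕ → ℕ → Ω → ℝ := fun n k => μ[In n k|m'] with hQdef
  have hInmeas : ∀ n k, Measurable (In n k) := fun n k =>
    measurable_const.indicator ((hY a₀) (hCmeas n k))
  have hIint : ∀ n k, Integrable (In n k) μ := fun n k =>
    hbint _ (hInmeas n k) (fun ω => ind01 _ ω)
  have hFint : ∀ n k, Integrable (F n k) μ := fun n k =>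
    hbint _ (hZmeas.mul (hInmeas n k)) (fun ω =>
      ⟨mul_nonneg (hZ01 ω).1 (ind01 _ ω).1,
        mul_le_one₀ (hZ01 ω).2 (ind01 _ ω).1 (ind01 _ ω).2⟩)
  have hindC : ∀ n k ω, Set.indicator (C n k) (fun _ => (1:ℝ)) (Y a₀ ω) = In n k ω := by
    intro n k ω
    simp [hIndef, Set.indicator_apply, Set.mem_preimage]
  -- factorization for each dyadic piece, from the set-level hypothesis HA
  have hFk : ∀ n k, μ[F n k|m'] =ᵐ[μ] fun ω => (∏ i ∈ S, P i ω) * Q n k ω := by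
    intro n k
    have h1 := HA (insert a₀ S) (Function.update Bs a₀ (C n k)) ?hmeas
    case hmeas =>
      intro i
      by_cases h : i = a₀
      · subst h; rw [Function.update_self]; exact hCmeas n k
      · rw [Function.update_of_ne h]; exact hBs i
    have hl : (fun ω => ∏ i ∈ insert a₀ S,
        Set.indicator (Y i ⁻¹' Function.update Bs a₀ (C n k) i) (fun _ => (1:ℝ)) ω)
        = F n k := by
      funext ω
      rw [Finset.prod_insert ha₀, Function.update_self, mul_comm]
      congr 1
      refine Finset.prod_congr rfl fun i hi => ?_
      rw [Function.update_of_ne (ne_of_mem_of_not_mem hi ha₀)]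
    have hr : (fun ω => ∏ i ∈ insert a₀ S,
        (μ[Set.indicator (Y i ⁻¹' Function.update Bs a₀ (C n k) i) (fun _ => (1:ℝ))|m']) ω)
        = fun ω => Q n k ω * ∏ i ∈ S, P i ω := by
      funext ω
      rw [Finset.prod_insert ha₀, Function.update_self]
      congr 1
      refine Finset.prod_congr rfl fun i hi => ?_
      rw [Function.update_of_ne (ne_of_mem_of_not_mem hi ha₀)]
    rw [hl, hr] at h1
    filter_upwards [h1] with ω hω
    rw [hω]; ring
  -- linearity: conditional expectation of the dyadic approximations
  have hsumeq : ∀ n, (fun ω => Z ω * ψa n ω)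
      = ((2:ℝ)^n)⁻¹ • ∑ k ∈ Finset.range (2^n), F n k := by
    intro n
    funext ω
    simp only [Pi.smul_apply, Finset.sum_apply, smul_eq_mul, hψadef, hFdef]
    simp only [hindC]
    rw [← Finset.mul_sum]
    ring
  have hsumeq2 : ∀ n, ψa n = ((2:ℝ)^n)⁻¹ • ∑ k ∈ Finset.range (2^n), In n k := by
    intro n
    funext ω
    simp only [Pi.smul_apply, Finset.sum_apply, smul_eq_mul, hψadef]
    simp only [hindC]
  have hGn : ∀ n, μ[ψa n|m'] =ᵐ[μ]
      fun ω => ((2:ℝ)^n)⁻¹ * ∑ k ∈ Finset.range (2^n), Q n k ω := by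
    intro n
    rw [hsumeq2 n]
    refine (condExp_smul _ _ _).trans ?_
    have e2 := condExp_finsetSum (μ := μ) (m := m') (s := Finset.range (2^n)) (f := In n) (fun k _ => hIint n k)
    filter_upwards [e2] with ω hω
    simp only [Pi.smul_apply, smul_eq_mul, Finset.sum_apply] at hω ⊢
    rw [hω]
  have hLn : ∀ n, μ[fun ω => Z ω * ψa n ω|m'] =ᵐ[μ]
      fun ω => (∏ i ∈ S, P i ω) * (μ[ψa n|m']) ω := by
    intro n
    rw [hsumeq n]
    refine (condExp_smul _ _ _).trans ?_
    have e2 := condExp_finsetSum (μ := μ) (m := m') (s := Finset.range (2^n)) (f := F n) (fun k _ => hFint n k)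
    have e3 : ∀ᵐ ω ∂μ, ∀ k ∈ Finset.range (2^n), (μ[F n k|m']) ω
        = (∏ i ∈ S, P i ω) * Q n k ω :=
      (ae_ball_iff (Finset.range (2^n)).countable_toSet).mpr fun k _ => hFk n k
    filter_upwards [e2, e3, hGn n] with ω h2 h3 hgn
    simp only [Pi.smul_apply, smul_eq_mul, Finset.sum_apply] at h2 ⊢
    rw [h2, Finset.sum_congr rfl h3, ← Finset.mul_sum, hgn]
    ring
  -- error bounds
  set L : Ω → ℝ := μ[fun ω => Z ω * ψ (Y a₀ ω)|m'] with hLdef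
  set Gψ : Ω → ℝ := μ[fun ω => ψ (Y a₀ ω)|m'] with hGψdef
  have hZψmeas : Measurable (fun ω => Z ω * ψ (Y a₀ ω)) := hZmeas.mul (hψ.comp (hY a₀))
  have hZψint : Integrable (fun ω => Z ω * ψ (Y a₀ ω)) μ := hbint _ hZψmeas fun ω =>
    ⟨mul_nonneg (hZ01 ω).1 (hψ01 _).1, mul_le_one₀ (hZ01 ω).2 (hψ01 _).1 (hψ01 _).2⟩
  have hψYint : Integrable (fun ω => ψ (Y a₀ ω)) μ := hbint _ (hψ.comp (hY a₀)) fun ω => hψ01 _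
  have hZψaint : ∀ n, Integrable (fun ω => Z ω * ψa n ω) μ := fun n => hbint _
    (hZmeas.mul (hψameas n)) fun ω =>
    ⟨mul_nonneg (hZ01 ω).1 (hψa01 n ω).1, mul_le_one₀ (hZ01 ω).2 (hψa01 n ω).1 (hψa01 n ω).2⟩
  have hψaint : ∀ n, Integrable (ψa n) μ := fun n => hbint _ (hψameas n) (hψa01 n)
  have hLn' : ∀ n, ∀ᵐ ω ∂μ,
      L ω - (μ[fun ω => Z ω * ψa n ω|m']) ω ∈ Set.Icc 0 ((2:ℝ)^n)⁻¹ := by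
    intro n
    have e1 := condExp_sub (m := m') hZψint (hZψaint n)
    have e2 : ∀ᵐ ω ∂μ, (μ[(fun ω => Z ω * ψ (Y a₀ ω)) - (fun ω => Z ω * ψa n ω)|m']) ω
        ∈ Set.Icc 0 ((2:ℝ)^n)⁻¹ := by
      refine condexp_mem_Icc hm' ?_ (ae_of_all μ fun ω => ?_)
      · exact (hZψmeas.sub (hZmeas.mul (hψameas n))).aestronglyMeasurable
      · simp only [Pi.sub_apply]
        have hd := hψa_bounds n ω
        constructor
        · rw [← mul_sub]
          exact mul_nonneg (hZ01 ω).1 hd.1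
        · rw [← mul_sub]
          calc Z ω * (ψ (Y a₀ ω) - ψa n ω) ≤ 1 * (ψ (Y a₀ ω) - ψa n ω) :=
                mul_le_mul_of_nonneg_right (hZ01 ω).2 hd.1
            _ ≤ ((2:ℝ)^n)⁻¹ := by rw [one_mul]; exact hd.2
    filter_upwards [e1, e2] with ω h1 h2
    rw [Pi.sub_apply] at h1
    rw [← h1]
    exact h2
  have hGn' : ∀ n, ∀ᵐ ω ∂μ,
      Gψ ω - (μ[ψa n|m']) ω ∈ Set.Icc 0 ((2:ℝ)^n)⁻¹ := by
    intro n
    have e1 := condExp_sub (m := m') hψYint (hψaint n)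
    have e2 : ∀ᵐ ω ∂μ, (μ[(fun ω => ψ (Y a₀ ω)) - ψa n|m']) ω
        ∈ Set.Icc 0 ((2:ℝ)^n)⁻¹ := by
      refine condexp_mem_Icc hm' ?_ (ae_of_all μ fun ω => ?_)
      · exact ((hψ.comp (hY a₀)).sub (hψameas n)).aestronglyMeasurable
      · simp only [Pi.sub_apply]
        exact ⟨(hψa_bounds n ω).1, (hψa_bounds n ω).2⟩
    filter_upwards [e1, e2] with ω h1 h2
    rw [Pi.sub_apply] at h1
    rw [← h1]
    exact h2
  have key : ∀ n : ℕ, ∀ᵐ ω ∂μ,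
      |L ω - (∏ i ∈ S, P i ω) * Gψ ω| ≤ 2 * ((2:ℝ)^n)⁻¹ := by
    intro n
    filter_upwards [hLn n, hLn' n, hGn' n, hprodP] with ω h1 h2 h3 h4
    have hp0 : 0 ≤ ∏ i ∈ S, P i ω := Finset.prod_nonneg fun i hi => (h4 i hi).1
    have hp1 : ∏ i ∈ S, P i ω ≤ 1 :=
      Finset.prod_le_one (fun i hi => (h4 i hi).1) (fun i hi => (h4 i hi).2)
    have hi0 : (0:ℝ) ≤ ((2:ℝ)^n)⁻¹ := by positivity
    set p := ∏ i ∈ S, P i ω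
    have hrw : L ω - p * Gψ ω
        = (L ω - (μ[fun ω => Z ω * ψa n ω|m']) ω) - p * (Gψ ω - (μ[ψa n|m']) ω) := by
      rw [h1]; ring
    rw [hrw]
    rw [abs_le]
    constructor
    · nlinarith [h2.1, h2.2, h3.1, h3.2]
    · nlinarith [h2.1, h2.2, h3.1, h3.2]
  have hall : ∀ᵐ ω ∂μ, ∀ n : ℕ, |L ω - (∏ i ∈ S, P i ω) * Gψ ω| ≤ 2 * ((2:ℝ)^n)⁻¹ :=
    ae_all_iff.mpr key
  have htend : Filter.Tendsto (fun n : ℕ => 2 * ((2:ℝ)^n)⁻¹) Filter.atTop (nhds 0) := by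
    have h1 : Filter.Tendsto (fun n : ℕ => ((2:ℝ)^n)⁻¹) Filter.atTop (nhds 0) := by
      simp_rw [← inv_pow]
      exact tendsto_pow_atTop_nhds_zero_of_lt_one (by norm_num) (by norm_num)
    simpa using h1.const_mul 2
  filter_upwards [hall] with ω hω
  have h0 : |L ω - (∏ i ∈ S, P i ω) * Gψ ω| ≤ 0 := ge_of_tendsto' htend hω
  have := abs_nonpos_iff.mp h0
  have := sub_eq_zero.mp this
  exact this


end Aux
section Main

variable {Ω 𝒜 : Type*} {m' : MeasurableSpace Ω} [mΩ : MeasurableSpace Ω]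

lemma stmt3_aux [StandardBorelSpace Ω] [Fintype 𝒜] (hm' : m' ≤ mΩ)
    (μ : Measure Ω) [IsProbabilityMeasure μ]
    (Y : 𝒜 → Ω → ℝ) (hY : ∀ a, Measurable (Y a))
    (π' : Ω → 𝒜) (hπ' : ∀ a : 𝒜, MeasurableSet[m'] (π' ⁻¹' {a}))
    (M αstar : ℝ) (hαstar : 0 < αstar)
    (hYπ : Measurable (fun ω => Y (π' ω) ω))
    (hbound : ∀ a, ∀ᵐ ω ∂μ, Y a ω ∈ Set.Icc 0 M)
    (hindep : iCondIndepFun m' hm' (m := fun _ : 𝒜 => (inferInstance : MeasurableSpace ℝ)) Y μ) :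
    iCondIndepFun m' hm' (m := fun _ : 𝒜 => (inferInstance : MeasurableSpace ℝ)) Y
      (μ.tilted fun ω => -Y (π' ω) ω / αstar) := by
  classical
  set ρ : Ω → ℝ := fun ω => -Y (π' ω) ω / αstar with hρdef
  have hρmeas : Measurable ρ := hYπ.neg.div_const _
  have hGmeas : Measurable (fun ω => Real.exp (ρ ω)) := Real.measurable_exp.comp hρmeas
  have hae : ∀ᵐ ω ∂μ, ∀ a, Y a ω ∈ Set.Icc 0 M := ae_all_iff.mpr hbound
  set ε : ℝ := Real.exp (-M / αstar) with hεdef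
  have hε : 0 < ε := Real.exp_pos _
  have hl : ∀ᵐ ω ∂μ, ε ≤ Real.exp (ρ ω) := by
    filter_upwards [hae] with ω hω
    have h1 := hω (π' ω)
    refine Real.exp_le_exp.mpr ?_
    exact div_le_div_of_nonneg_right (neg_le_neg h1.2) hαstar.le
  have hu : ∀ᵐ ω ∂μ, Real.exp (ρ ω) ≤ 1 := by
    filter_upwards [hae] with ω hω
    have h1 := hω (π' ω)
    refine Real.exp_le_one_iff.mpr ?_
    exact div_nonpos_of_nonpos_of_nonneg (neg_nonpos.mpr h1.1) hαstar.le
  have hGint : Integrable (fun ω => Real.exp (ρ ω)) μ :=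
    aux_integrable hGmeas.aestronglyMeasurable (C := 1)
      (by filter_upwards [hu] with ω hω
          rw [abs_of_nonneg (Real.exp_pos _).le]; exact hω)
  haveI hνprob : IsProbabilityMeasure (μ.tilted ρ) := isProbabilityMeasure_tilted hGint
  set ν := μ.tilted ρ with hνdef
  have hAC : ν ≪ μ := tilted_absolutelyContinuous μ ρ
  -- Step A: set-level conditional independence under μ, in product-of-indicators form
  have HA : ∀ (T : Finset 𝒜) (Bs : 𝒜 → Set ℝ), (∀ i, MeasurableSet (Bs i)) →
      μ[fun ω => ∏ i ∈ T, Set.indicator (Y i ⁻¹' Bs i) (fun _ => (1:ℝ)) ω|m'] =ᵐ[μ]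
        fun ω => ∏ i ∈ T, (μ[Set.indicator (Y i ⁻¹' Bs i) (fun _ => (1:ℝ))|m']) ω := by
    intro T Bs hBs
    have h0 := (iCondIndepFun_iff_condExp_inter_preimage_eq_mul (m' := m') (hm' := hm') (μ := μ)
      (fun _ => (inferInstance : MeasurableSpace ℝ)) Y hY).mp hindep T (sets := Bs) (fun i _ => hBs i)
    have hl2 : Set.indicator (⋂ i ∈ T, Y i ⁻¹' Bs i) (fun _ => (1:ℝ))
        = fun ω => ∏ i ∈ T, Set.indicator (Y i ⁻¹' Bs i) (fun _ => (1:ℝ)) ω := by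
      funext ω; exact indicator_biInter_prod T _ ω
    rw [hl2] at h0
    refine h0.trans (Filter.EventuallyEq.of_eq ?_)
    funext ω
    rw [Finset.prod_apply]
  -- goal via condexp characterization under ν
  rw [iCondIndepFun_iff_condExp_inter_preimage_eq_mul (m' := m') (hm' := hm') (μ := ν)
    (fun _ => (inferInstance : MeasurableSpace ℝ)) Y hY]
  intro S sets hsets
  set B : 𝒜 → Set ℝ := fun i => if i ∈ S then sets i else Set.univ with hBdef
  have hB : ∀ i, MeasurableSet (B i) := by
    intro i; by_cases h : i ∈ S
    · simpa [hBdef, h] using hsets i h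
    · simp [hBdef, h]
  have hpre : ∀ i ∈ S, Y i ⁻¹' sets i = Y i ⁻¹' B i := by
    intro i hi; simp [hBdef, hi]
  set AS : Set Ω := ⋂ i ∈ S, Y i ⁻¹' B i with hASdef
  have hASmeas : MeasurableSet AS :=
    MeasurableSet.biInter S.countable_toSet fun i _ => (hY i) (hB i)
  have hgoal1 : (⋂ i ∈ S, Y i ⁻¹' sets i) = AS := by
    rw [hASdef]; exact Set.iInter₂_congr hpre
  rw [hgoal1]
  have hgoal2 : (∏ i ∈ S, (ν⟦Y i ⁻¹' sets i|m'⟧)) = ∏ i ∈ S, (ν⟦Y i ⁻¹' B i|m'⟧) :=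
    Finset.prod_congr rfl fun i hi => by rw [hpre i hi]
  rw [hgoal2]
  -- Bayes identification of conditional expectations under ν
  set D : Ω → ℝ := μ[fun ω => Real.exp (ρ ω)|m'] with hDdef
  set N : Set Ω → Ω → ℝ :=
    fun A' => μ[fun ω => Set.indicator A' (fun _ => (1:ℝ)) ω * Real.exp (ρ ω)|m'] with hNdef
  have hbayes : ∀ A' : Set Ω, MeasurableSet A' →
      (ν⟦A'|m'⟧) =ᵐ[ν] fun ω => N A' ω / D ω := fun A' hA' =>
    bayes_tilted hm' μ hρmeas hε hl hu A' hA'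
  -- main μ-a.e. identity
  have hkey : (fun ω => N AS ω / D ω) =ᵐ[μ]
      fun ω => ∏ i ∈ S, (N (Y i ⁻¹' B i) ω / D ω) := by
    have hpart : ∀ a₀ : 𝒜, ∀ᵐ ω ∂μ, π' ω = a₀ →
        N AS ω / D ω = ∏ i ∈ S, (N (Y i ⁻¹' B i) ω / D ω) := by
      intro a₀
      have hE_m' : MeasurableSet[m'] (π' ⁻¹' {a₀}) := hπ' a₀
      set IE : Ω → ℝ := Set.indicator (π' ⁻¹' {a₀}) (fun _ => (1:ℝ)) with hIEdef
      have hIE_sm : StronglyMeasurable[m'] IE := stronglyMeasurable_const.indicator hE_m'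
      have hIEmeas : Measurable IE := measurable_const.indicator (hm' _ hE_m')
      have hrestrict : ∀ u v : Ω → ℝ, Measurable u → Measurable v →
          (∀ᵐ ω ∂μ, |u ω| ≤ 1) → (∀ᵐ ω ∂μ, |v ω| ≤ 1) →
          (∀ᵐ ω ∂μ, π' ω = a₀ → u ω = v ω) →
          ∀ᵐ ω ∂μ, π' ω = a₀ → (μ[u|m']) ω = (μ[v|m']) ω := by
        intro u v hu hv hub hvb huv
        have hu_int : Integrable u μ := aux_integrable hu.aestronglyMeasurable hub
        have hv_int : Integrable v μ := aux_integrable hv.aestronglyMeasurable hvb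
        have hIEb : ∀ ω, |IE ω| ≤ 1 := fun ω => by
          rw [abs_of_nonneg (ind01 _ ω).1]; exact (ind01 _ ω).2
        have hIEu_int : Integrable (IE * u) μ :=
          aux_integrable (hIEmeas.mul hu).aestronglyMeasurable (C := 1)
            (by filter_upwards [hub] with ω h
                rw [Pi.mul_apply, abs_mul]
                exact mul_le_one₀ (hIEb ω) (abs_nonneg _) h)
        have hIEv_int : Integrable (IE * v) μ :=
          aux_integrable (hIEmeas.mul hv).aestronglyMeasurable (C := 1)
            (by filter_upwards [hvb] with ω h
                rw [Pi.mul_apply, abs_mul]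
                exact mul_le_one₀ (hIEb ω) (abs_nonneg _) h)
        have e1 := condExp_mul_of_stronglyMeasurable_left hIE_sm hIEu_int hu_int
        have e2 := condExp_mul_of_stronglyMeasurable_left hIE_sm hIEv_int hv_int
        have e3 : μ[IE * u|m'] =ᵐ[μ] μ[IE * v|m'] := condExp_congr_ae (by
          filter_upwards [huv] with ω h
          rw [Pi.mul_apply, Pi.mul_apply]
          by_cases hω : π' ω = a₀
          · rw [h hω]
          · have hz : IE ω = 0 := Set.indicator_of_notMem (by simpa using hω) _
            rw [hz, zero_mul, zero_mul])
        have e4 : IE * μ[u|m'] =ᵐ[μ] IE * μ[v|m'] := e1.symm.trans (e3.trans e2)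
        filter_upwards [e4] with ω h hπω
        have hIE1 : IE ω = 1 := Set.indicator_of_mem (by simpa using hπω) _
        rw [Pi.mul_apply, Pi.mul_apply, hIE1, one_mul, one_mul] at h
        exact h
      set ψ₀ : ℝ → ℝ := fun y => Real.exp (-(y ⊔ 0) / αstar) with hψ₀def
      have hψ₀meas : Measurable ψ₀ :=
        Real.measurable_exp.comp (((measurable_id.max measurable_const).neg).div_const _)
      have hψ₀01 : ∀ y, ψ₀ y ∈ Set.Icc (0:ℝ) 1 := fun y =>
        ⟨(Real.exp_pos _).le, Real.exp_le_one_iff.mpr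
          (div_nonpos_of_nonpos_of_nonneg (neg_nonpos.mpr (le_max_right y 0)) hαstar.le)⟩
      set ψ' : ℝ → ℝ := fun y => Set.indicator (B a₀) (fun _ => (1:ℝ)) y * ψ₀ y with hψ'def
      have hψ'meas : Measurable ψ' := (measurable_const.indicator (hB a₀)).mul hψ₀meas
      have hψ'01 : ∀ y, ψ' y ∈ Set.Icc (0:ℝ) 1 := fun y =>
        ⟨mul_nonneg (ind01 _ y).1 (hψ₀01 y).1,
          mul_le_one₀ (ind01 _ y).2 (hψ₀01 y).1 (hψ₀01 y).2⟩
      have hGW : ∀ᵐ ω ∂μ, π' ω = a₀ → Real.exp (ρ ω) = ψ₀ (Y a₀ ω) := by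
        filter_upwards [hae] with ω hω hπω
        have h1 := hω a₀
        have hmax' : (Y a₀ ω) ⊔ 0 = Y a₀ ω := max_eq_left h1.1
        simp only [hρdef, hψ₀def, hπω, hmax']
      have hb1 : ∀ A' : Set Ω,
          ∀ᵐ ω ∂μ, |Set.indicator A' (fun _ => (1:ℝ)) ω * Real.exp (ρ ω)| ≤ 1 := fun A' => by
        filter_upwards [hu] with ω h
        rw [abs_mul, abs_of_nonneg (ind01 A' ω).1, abs_of_nonneg (Real.exp_pos _).le]
        exact mul_le_one₀ (ind01 A' ω).2 (Real.exp_pos _).le h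
      have hψ₀b : ∀ᵐ ω ∂μ, |ψ₀ (Y a₀ ω)| ≤ 1 := ae_of_all μ fun ω => by
        rw [abs_of_nonneg (hψ₀01 _).1]; exact (hψ₀01 _).2
      have hDD₀ : ∀ᵐ ω ∂μ, π' ω = a₀ →
          D ω = (μ[fun ω => ψ₀ (Y a₀ ω)|m']) ω := by
        refine hrestrict _ _ hGmeas
          (show Measurable (fun ω => ψ₀ (Y a₀ ω)) from hψ₀meas.comp (hY a₀)) ?_ hψ₀b hGW
        filter_upwards [hu] with ω h
        rw [abs_of_nonneg (Real.exp_pos _).le]; exact h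
      have hASint_eq : ∀ᵐ ω ∂μ, π' ω = a₀ →
          Set.indicator AS (fun _ => (1:ℝ)) ω * Real.exp (ρ ω)
            = (∏ i ∈ S.erase a₀, Set.indicator (Y i ⁻¹' B i) (fun _ => (1:ℝ)) ω)
              * ψ' (Y a₀ ω) := by
        filter_upwards [hGW] with ω hgw hπω
        rw [hgw hπω, hASdef, indicator_biInter_prod]
        by_cases ha : a₀ ∈ S
        · rw [← Finset.mul_prod_erase S _ ha]
          have hia : Set.indicator (Y a₀ ⁻¹' B a₀) (fun _ => (1:ℝ)) ω
              = Set.indicator (B a₀) (fun _ => (1:ℝ)) (Y a₀ ω) := by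
            simp [Set.indicator_apply, Set.mem_preimage]
          rw [hia]
          simp only [hψ'def]
          ring
        · rw [Finset.erase_eq_of_notMem ha]
          have hps : ψ' (Y a₀ ω) = ψ₀ (Y a₀ ω) := by
            simp only [hψ'def, hBdef, if_neg ha, Set.indicator_univ]
            rw [one_mul]
          rw [hps]
      have hNAS' : ∀ᵐ ω ∂μ, π' ω = a₀ → N AS ω
          = (μ[fun ω => (∏ i ∈ S.erase a₀,
              Set.indicator (Y i ⁻¹' B i) (fun _ => (1:ℝ)) ω) * ψ' (Y a₀ ω)|m']) ω := by
        refine hrestrict _ _ ?_ ?_ (hb1 AS) ?_ hASint_eq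
        · exact (measurable_const.indicator hASmeas).mul hGmeas
        · exact (Finset.measurable_prod _ fun i _ =>
            measurable_const.indicator ((hY i) (hB i))).mul
            (show Measurable (fun ω => ψ' (Y a₀ ω)) from hψ'meas.comp (hY a₀))
        · refine ae_of_all μ fun ω => ?_
          have hz0 : (0:ℝ) ≤ ∏ i ∈ S.erase a₀,
              Set.indicator (Y i ⁻¹' B i) (fun _ => (1:ℝ)) ω :=
            Finset.prod_nonneg fun i _ => (ind01 _ ω).1
          have hz1 : (∏ i ∈ S.erase a₀, Set.indicator (Y i ⁻¹' B i) (fun _ => (1:ℝ)) ω) ≤ 1 :=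
            Finset.prod_le_one (fun i _ => (ind01 _ ω).1) (fun i _ => (ind01 _ ω).2)
          rw [abs_of_nonneg (mul_nonneg hz0 (hψ'01 _).1)]
          exact mul_le_one₀ hz1 (hψ'01 _).1 (hψ'01 _).2
      have hstepAS := stepB hm' μ Y hY HA (S.erase a₀) B hB a₀
        (Finset.notMem_erase a₀ S) ψ' hψ'meas hψ'01
      have hNAS : ∀ᵐ ω ∂μ, π' ω = a₀ → N AS ω
          = (∏ i ∈ S.erase a₀, (μ[Set.indicator (Y i ⁻¹' B i) (fun _ => (1:ℝ))|m']) ω)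
            * (μ[fun ω => ψ' (Y a₀ ω)|m']) ω := by
        filter_upwards [hNAS', hstepAS] with ω h1 h2 hπω
        rw [h1 hπω, h2]
      have hNAi : ∀ᵐ ω ∂μ, ∀ i ∈ S, π' ω = a₀ → N (Y i ⁻¹' B i) ω
          = if i = a₀ then (μ[fun ω => ψ' (Y a₀ ω)|m']) ω
            else (μ[Set.indicator (Y i ⁻¹' B i) (fun _ => (1:ℝ))|m']) ω
              * (μ[fun ω => ψ₀ (Y a₀ ω)|m']) ω := by
        rw [ae_all_iff]
        intro i
        by_cases hi : i ∈ S
        swap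
        · exact ae_of_all μ fun ω hi' => absurd hi' hi
        by_cases hia : i = a₀
        · subst hia
          have heq : ∀ᵐ ω ∂μ, π' ω = i →
              Set.indicator (Y i ⁻¹' B i) (fun _ => (1:ℝ)) ω * Real.exp (ρ ω)
                = ψ' (Y i ω) := by
            filter_upwards [hGW] with ω hgw hπω
            rw [hgw hπω]
            simp only [hψ'def, Set.indicator_apply, Set.mem_preimage]
          have h1 := hrestrict (fun ω => Set.indicator (Y i ⁻¹' B i) (fun _ => (1:ℝ)) ω * Real.exp (ρ ω))
            (fun ω => ψ' (Y i ω)) ((measurable_const.indicator ((hY i) (hB i))).mul hGmeas)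
            (show Measurable (fun ω => ψ' (Y i ω)) from hψ'meas.comp (hY i)) (hb1 _)
            (ae_of_all μ fun ω => by
              show |ψ' (Y i ω)| ≤ 1
              rw [abs_of_nonneg (hψ'01 _).1]; exact (hψ'01 _).2) heq
          filter_upwards [h1] with ω h
          intro _ hπω
          rw [if_pos rfl]
          simp only [hNdef]
          rw [h hπω]
        · have ha₀i : a₀ ∉ ({i} : Finset 𝒜) :=
            Finset.notMem_singleton.mpr (fun hc => hia hc.symm)
          have hstep1 := stepB hm' μ Y hY HA {i} B hB a₀ ha₀i ψ₀ hψ₀meas hψ₀01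
          have heq : ∀ᵐ ω ∂μ, π' ω = a₀ →
              Set.indicator (Y i ⁻¹' B i) (fun _ => (1:ℝ)) ω * Real.exp (ρ ω)
                = (∏ j ∈ ({i} : Finset 𝒜),
                    Set.indicator (Y j ⁻¹' B j) (fun _ => (1:ℝ)) ω) * ψ₀ (Y a₀ ω) := by
            filter_upwards [hGW] with ω hgw hπω
            rw [hgw hπω, Finset.prod_singleton]
          have h1 := hrestrict (fun ω => Set.indicator (Y i ⁻¹' B i) (fun _ => (1:ℝ)) ω * Real.exp (ρ ω))
            (fun ω => (∏ j ∈ ({i} : Finset 𝒜),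
              Set.indicator (Y j ⁻¹' B j) (fun _ => (1:ℝ)) ω) * ψ₀ (Y a₀ ω))
            ((measurable_const.indicator ((hY i) (hB i))).mul hGmeas)
            ((Finset.measurable_prod _ fun j _ =>
              measurable_const.indicator ((hY j) (hB j))).mul
              (show Measurable (fun ω => ψ₀ (Y a₀ ω)) from hψ₀meas.comp (hY a₀)))
            (hb1 _)
            (ae_of_all μ fun ω => by
              rw [Finset.prod_singleton, abs_mul, abs_of_nonneg (ind01 _ ω).1,
                abs_of_nonneg (hψ₀01 _).1]
              exact mul_le_one₀ (ind01 _ ω).2 (hψ₀01 _).1 (hψ₀01 _).2) heq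
          filter_upwards [h1, hstep1] with ω h hs
          intro _ hπω
          rw [if_neg hia]
          simp only [hNdef]
          rw [h hπω, hs, Finset.prod_singleton]
      have hD₀bounds : ∀ᵐ ω ∂μ, (μ[fun ω => ψ₀ (Y a₀ ω)|m']) ω ∈ Set.Icc ε 1 := by
        refine condexp_mem_Icc hm' ((hψ₀meas.comp (hY a₀)).aestronglyMeasurable) ?_
        filter_upwards [hae] with ω hω
        have h1 := hω a₀
        refine ⟨Real.exp_le_exp.mpr ?_, (hψ₀01 _).2⟩
        refine div_le_div_of_nonneg_right ?_ hαstar.le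
        have hYM : Y a₀ ω ⊔ 0 ≤ M := max_le h1.2 (le_trans h1.1 h1.2)
        linarith
      have hQD : a₀ ∉ S →
          (fun ω => ψ' (Y a₀ ω)) = (fun ω => ψ₀ (Y a₀ ω)) := by
        intro ha
        funext ω
        simp only [hψ'def, hBdef, if_neg ha, Set.indicator_univ]
        rw [one_mul]
      filter_upwards [hDD₀, hNAS, hNAi, hD₀bounds] with ω h1 h2 h3 h4
      intro hπω
      have hd0 : (μ[fun ω => ψ₀ (Y a₀ ω)|m']) ω ≠ 0 := (lt_of_lt_of_le hε h4.1).ne'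
      rw [h1 hπω, h2 hπω]
      by_cases ha : a₀ ∈ S
      · rw [← Finset.mul_prod_erase S _ ha, h3 a₀ ha hπω, if_pos rfl]
        have he2 : ∀ i ∈ S.erase a₀,
            N (Y i ⁻¹' B i) ω / (μ[fun ω => ψ₀ (Y a₀ ω)|m']) ω
              = (μ[Set.indicator (Y i ⁻¹' B i) (fun _ => (1:ℝ))|m']) ω := by
          intro i hi
          rw [h3 i (Finset.mem_of_mem_erase hi) hπω, if_neg (Finset.ne_of_mem_erase hi),
            mul_div_cancel_right₀ _ hd0]
        rw [Finset.prod_congr rfl he2]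
        ring
      · rw [Finset.erase_eq_of_notMem ha]
        have hq : (μ[fun ω => ψ' (Y a₀ ω)|m']) ω = (μ[fun ω => ψ₀ (Y a₀ ω)|m']) ω := by
          rw [hQD ha]
        rw [hq, mul_div_cancel_right₀ _ hd0]
        have he2 : ∀ i ∈ S,
            N (Y i ⁻¹' B i) ω / (μ[fun ω => ψ₀ (Y a₀ ω)|m']) ω
              = (μ[Set.indicator (Y i ⁻¹' B i) (fun _ => (1:ℝ))|m']) ω := by
          intro i hi
          rw [h3 i hi hπω, if_neg (fun hc : i = a₀ => ha (hc ▸ hi)),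
            mul_div_cancel_right₀ _ hd0]
        rw [Finset.prod_congr rfl he2]
    filter_upwards [ae_all_iff.mpr hpart] with ω hω
    exact hω (π' ω) rfl

  calc (ν⟦AS|m'⟧)
      =ᵐ[ν] fun ω => N AS ω / D ω := hbayes AS hASmeas
    _ =ᵐ[ν] fun ω => ∏ i ∈ S, (N (Y i ⁻¹' B i) ω / D ω) := hkey.filter_mono hAC.ae_le
    _ =ᵐ[ν] ∏ i ∈ S, (ν⟦Y i ⁻¹' B i|m'⟧) := by
        have h1 : ∀ᵐ ω ∂ν, ∀ i ∈ S, (ν⟦Y i ⁻¹' B i|m'⟧) ω = N (Y i ⁻¹' B i) ω / D ω :=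
          (ae_ball_iff S.countable_toSet).mpr fun i _ => hbayes _ ((hY i) (hB i))
        filter_upwards [h1] with ω hω
        rw [Finset.prod_apply]
        exact (Finset.prod_congr rfl fun i hi => hω i hi).symm

end Main

/-- **Conditional independence is preserved by the worst-case tilting.** In the batch
contextual bandit setup with the positive-density assumption, if the rewards
`Y(a^1), …, Y(a^d)` are mutually conditionally independent given `X` under `P0`, then they
remain mutually conditionally independent given `X` under the tilted worst-case measure
`P(π)` with `dP(π)/dP0 = exp(−Y(π(X))/α*(π)) / E[exp(−Y(π(X))/α*(π))]`, where
`α*(π) ∈ (0, ∞)` is the unique maximizer of the dual objective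
`φ(π, α) = −α log E[exp(−Y(π(X))/α)] − αδ` over `α ≥ 0`. -/
theorem stmt3 {Ω 𝒳 𝒜 : Type*} [MeasurableSpace Ω] [StandardBorelSpace Ω]
    [MeasurableSpace 𝒳] [MeasurableSpace 𝒜] [Fintype 𝒜] [MeasurableSingletonClass 𝒜]
    (μ : Measure Ω) [IsProbabilityMeasure μ]
    (X : Ω → 𝒳) (Y : 𝒜 → Ω → ℝ) (M b : ℝ) (hb : 0 < b)
    (hX : Measurable X) (hY : ∀ a, Measurable (Y a))
    (hbound : ∀ a, ∀ᵐ ω ∂μ, Y a ω ∈ Set.Icc 0 M)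
    -- positive-density assumption: `Y(a) | X` has conditional density `f a x ≥ b` on `[0, M]`:
    (f : 𝒜 → 𝒳 → ℝ → ℝ) (hfmeas : ∀ a, Measurable (Function.uncurry (f a)))
    (hfpos : ∀ a x, ∀ y ∈ Set.Icc (0 : ℝ) M, b ≤ f a x y)
    (hfzero : ∀ a x, ∀ y : ℝ, y ∉ Set.Icc (0 : ℝ) M → f a x y = 0)
    (hdensity : ∀ (a : 𝒜) (s : Set 𝒳), MeasurableSet s → ∀ B : Set ℝ, MeasurableSet B →
      (μ {ω | X ω ∈ s ∧ Y a ω ∈ B}).toReal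
        = ∫ ω in X ⁻¹' s, (∫ y in B, f a (X ω) y) ∂μ)
    (π : 𝒳 → 𝒜) (hπ : Measurable π) (δ : ℝ) (hδ : 0 < δ)
    (αstar : ℝ) (hαstar : 0 < αstar)
    -- `αstar` is the unique maximizer of the dual objective over `α ≥ 0` (with the value at
    -- `α = 0` given by the essential infimum):
    (hmax : ∀ β : ℝ, 0 ≤ β →
      dualKL μ (fun ω => Y (π (X ω)) ω) δ β ≤ dualKL μ (fun ω => Y (π (X ω)) ω) δ αstar)
    (huniq : ∀ β : ℝ, 0 ≤ β →
      dualKL μ (fun ω => Y (π (X ω)) ω) δ β = dualKL μ (fun ω => Y (π (X ω)) ω) δ αstar →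
      β = αstar)
    -- mutual conditional independence of the rewards given `X` under `P0`:
    (hindep : iCondIndepFun (MeasurableSpace.comap X inferInstance) hX.comap_le
      (m := fun _ : 𝒜 => (inferInstance : MeasurableSpace ℝ)) Y μ) :
    iCondIndepFun (MeasurableSpace.comap X inferInstance) hX.comap_le
      (m := fun _ : 𝒜 => (inferInstance : MeasurableSpace ℝ)) Y
      (μ.tilted fun ω => -Y (π (X ω)) ω / αstar) := by
  have hYπX : Measurable (fun ω => Y (π (X ω)) ω) := by
    have he : (fun ω => Y (π (X ω)) ω)
        = fun ω => ∑ a : 𝒜, if π (X ω) = a then Y a ω else 0 := by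
      funext ω
      rw [Finset.sum_ite_eq]
      simp
    rw [he]
    exact Finset.measurable_sum _ fun a _ =>
      Measurable.ite ((hπ.comp hX) (measurableSet_singleton a)) (hY a) measurable_const
  exact stmt3_aux hX.comap_le μ Y hY (fun ω => π (X ω))
    (fun a => ⟨π ⁻¹' {a}, hπ (measurableSet_singleton a), rfl⟩) M αstar hαstar hYπX hbound hindep
end

section
/- Let δ > 0, let w_1, …, w_n ≥ 0 with Σ_i w_i > 0, and let y_1, …, y_n ≥ 0. Then the function f(α) = −α log( (Σ_{i=1}^n w_i exp(−y_i/α)) / (Σ_{i=1}^n w_i) ) − αδ is concave on (0, ∞). Moreover, if there exist indices i ≠ j with w_i > 0, w_j > 0, y_i ≠ y_j, and y_i, y_j both nonzero, then f is strictly concave on (0, ∞). -/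
open Real Set

private lemma sumexp_pos {n : ℕ} (w : Fin n → ℝ) (u : Fin n → ℝ) (hw : ∀ i, 0 ≤ w i)
    (hwpos : 0 < ∑ i, w i) : 0 < ∑ i, w i * Real.exp (u i) := by
  obtain ⟨i, hi⟩ : ∃ i, 0 < w i := by
    by_contra h
    push_neg at h
    have : ∑ i, w i = 0 := Finset.sum_eq_zero fun i _ => le_antisymm (h i) (hw i)
    linarith
  exact Finset.sum_pos' (fun j _ => mul_nonneg (hw j) (Real.exp_pos _).le)
    ⟨i, Finset.mem_univ i, mul_pos hi (Real.exp_pos _)⟩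

private lemma strict_amgm {x y a b : ℝ} (hx : 0 < x) (hy : 0 < y) (ha : 0 < a) (hb : 0 < b)
    (hab : a + b = 1) (hxy : x ≠ y) : x ^ a * y ^ b < a * x + b * y := by
  have hlog := strictConcaveOn_log_Ioi.2 (Set.mem_Ioi.2 hx) (Set.mem_Ioi.2 hy) hxy ha hb hab
  simp only [smul_eq_mul] at hlog
  have h1 : x ^ a * y ^ b = Real.exp (a * Real.log x + b * Real.log y) := by
    rw [Real.exp_add, mul_comm a, mul_comm b, Real.exp_mul, Real.exp_mul,
      Real.exp_log hx, Real.exp_log hy]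
  have hpos : 0 < a * x + b * y := by positivity
  have h2 : a * x + b * y = Real.exp (Real.log (a * x + b * y)) := (Real.exp_log hpos).symm
  rw [h1, h2]
  exact Real.exp_lt_exp.2 hlog

section lse
variable {n : ℕ} (w c : Fin n → ℝ)

private lemma lse_key (hw : ∀ i, 0 ≤ w i) (hwpos : 0 < ∑ i, w i)
    {t s a b : ℝ} (ha : 0 ≤ a) (hb : 0 ≤ b) (hab : a + b = 1) :
    (∀ i, w i * Real.exp (c i * (a * t + b * s)) ≤
      (∑ i, w i * Real.exp (c i * t)) ^ a * (∑ i, w i * Real.exp (c i * s)) ^ b *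
        (w i * (a * (Real.exp (c i * t) / ∑ i, w i * Real.exp (c i * t))
          + b * (Real.exp (c i * s) / ∑ i, w i * Real.exp (c i * s))))) ∧
    (∑ i, (∑ i, w i * Real.exp (c i * t)) ^ a * (∑ i, w i * Real.exp (c i * s)) ^ b *
        (w i * (a * (Real.exp (c i * t) / ∑ i, w i * Real.exp (c i * t))
          + b * (Real.exp (c i * s) / ∑ i, w i * Real.exp (c i * s)))))
      = (∑ i, w i * Real.exp (c i * t)) ^ a * (∑ i, w i * Real.exp (c i * s)) ^ b := by
  set A := ∑ i, w i * Real.exp (c i * t) with hA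
  set B := ∑ i, w i * Real.exp (c i * s) with hB
  have hApos : 0 < A := sumexp_pos w _ hw hwpos
  have hBpos : 0 < B := sumexp_pos w _ hw hwpos
  constructor
  · intro i
    have e1 : Real.exp (c i * (a * t + b * s))
        = Real.exp (c i * t) ^ a * Real.exp (c i * s) ^ b := by
      rw [← Real.exp_mul, ← Real.exp_mul, ← Real.exp_add]
      ring_nf
    have amgm := Real.geom_mean_le_arith_mean2_weighted ha hb
      (by positivity : (0:ℝ) ≤ Real.exp (c i * t) / A)
      (by positivity : (0:ℝ) ≤ Real.exp (c i * s) / B) hab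
    have e2 : Real.exp (c i * t) ^ a * Real.exp (c i * s) ^ b
        = A ^ a * B ^ b * ((Real.exp (c i * t) / A) ^ a * (Real.exp (c i * s) / B) ^ b) := by
      rw [Real.div_rpow (Real.exp_pos _).le hApos.le, Real.div_rpow (Real.exp_pos _).le hBpos.le]
      have hAa : (0:ℝ) < A ^ a := Real.rpow_pos_of_pos hApos a
      have hBb : (0:ℝ) < B ^ b := Real.rpow_pos_of_pos hBpos b
      field_simp
    rw [e1, e2]
    have h3 := mul_le_mul_of_nonneg_left amgm
      (mul_nonneg (hw i) (by positivity : (0:ℝ) ≤ A ^ a * B ^ b))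
    calc w i * (A ^ a * B ^ b * ((Real.exp (c i * t) / A) ^ a * (Real.exp (c i * s) / B) ^ b))
        = w i * (A ^ a * B ^ b) * ((Real.exp (c i * t) / A) ^ a * (Real.exp (c i * s) / B) ^ b) := by
          ring
      _ ≤ w i * (A ^ a * B ^ b) * (a * (Real.exp (c i * t) / A) + b * (Real.exp (c i * s) / B)) := h3
      _ = A ^ a * B ^ b * (w i * (a * (Real.exp (c i * t) / A) + b * (Real.exp (c i * s) / B))) := by
          ring
  · have e : ∀ i, A ^ a * B ^ b *
        (w i * (a * (Real.exp (c i * t) / A) + b * (Real.exp (c i * s) / B)))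
        = A ^ a * B ^ b * (a / A) * (w i * Real.exp (c i * t))
          + A ^ a * B ^ b * (b / B) * (w i * Real.exp (c i * s)) := by
      intro i; ring
    simp_rw [e, Finset.sum_add_distrib, ← Finset.mul_sum, ← hA, ← hB]
    have e1 : ∀ P q Q : ℝ, Q ≠ 0 → P * (q / Q) * Q = P * q := by
      intro P q Q hQ; field_simp
    rw [e1 _ _ _ hApos.ne', e1 _ _ _ hBpos.ne', ← mul_add, hab, mul_one]

private lemma lse_convexOn (hw : ∀ i, 0 ≤ w i) (hwpos : 0 < ∑ i, w i) :
    ConvexOn ℝ Set.univ (fun t => Real.log (∑ i, w i * Real.exp (c i * t))) := by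
  refine ⟨convex_univ, ?_⟩
  intro t _ s _ a b ha hb hab
  simp only [smul_eq_mul]
  obtain ⟨step, sumeq⟩ := lse_key w c hw hwpos ha hb hab (t := t) (s := s)
  have key : ∑ i, w i * Real.exp (c i * (a * t + b * s))
      ≤ (∑ i, w i * Real.exp (c i * t)) ^ a * (∑ i, w i * Real.exp (c i * s)) ^ b := by
    calc ∑ i, w i * Real.exp (c i * (a * t + b * s)) ≤ _ :=
        Finset.sum_le_sum fun i _ => step i
      _ = _ := sumeq
  have hApos : 0 < ∑ i, w i * Real.exp (c i * t) := sumexp_pos w _ hw hwpos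
  have hBpos : 0 < ∑ i, w i * Real.exp (c i * s) := sumexp_pos w _ hw hwpos
  have hLpos : 0 < ∑ i, w i * Real.exp (c i * (a * t + b * s)) := sumexp_pos w _ hw hwpos
  calc Real.log (∑ i, w i * Real.exp (c i * (a * t + b * s)))
      ≤ Real.log ((∑ i, w i * Real.exp (c i * t)) ^ a * (∑ i, w i * Real.exp (c i * s)) ^ b) :=
        Real.log_le_log hLpos key
    _ = a * Real.log (∑ i, w i * Real.exp (c i * t))
        + b * Real.log (∑ i, w i * Real.exp (c i * s)) := by
        rw [Real.log_mul (by positivity) (by positivity), Real.log_rpow hApos,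
          Real.log_rpow hBpos]

private lemma lse_strictConvexOn (hw : ∀ i, 0 ≤ w i) (hwpos : 0 < ∑ i, w i)
    {i j : Fin n} (hij : i ≠ j) (hwi : 0 < w i) (hwj : 0 < w j) (hc : c i ≠ c j) :
    StrictConvexOn ℝ Set.univ (fun t => Real.log (∑ i, w i * Real.exp (c i * t))) := by
  refine ⟨convex_univ, ?_⟩
  intro t _ s _ hts a b ha hb hab
  simp only [smul_eq_mul]
  set A := ∑ i, w i * Real.exp (c i * t) with hA
  set B := ∑ i, w i * Real.exp (c i * s) with hB
  have hApos : 0 < A := sumexp_pos w _ hw hwpos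
  have hBpos : 0 < B := sumexp_pos w _ hw hwpos
  obtain ⟨step, sumeq⟩ := lse_key w c hw hwpos ha.le hb.le hab (t := t) (s := s)
  -- find an index where AM-GM is strict
  obtain ⟨k, hwk, hk⟩ : ∃ k, 0 < w k ∧
      Real.exp (c k * t) / A ≠ Real.exp (c k * s) / B := by
    by_contra h
    push_neg at h
    have hi' := h i hwi
    have hj' := h j hwj
    have hAB : ∀ k : Fin n, 0 < w k →
        Real.exp (c k * (t - s)) = A / B := by
      intro k hwk
      have := h k hwk
      rw [div_eq_div_iff hApos.ne' hBpos.ne'] at this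
      have : Real.exp (c k * t) / Real.exp (c k * s) = A / B := by
        rw [div_eq_div_iff (Real.exp_pos _).ne' hBpos.ne']
        linarith [this]
      rw [← this, ← Real.exp_sub]
      ring_nf
    have h1 := hAB i hwi
    have h2 := hAB j hwj
    rw [← h2] at h1
    have := Real.exp_injective h1
    have hts' : t - s ≠ 0 := sub_ne_zero.2 hts
    exact hc (mul_right_cancel₀ hts' this)
  have keystrict : ∑ k, w k * Real.exp (c k * (a * t + b * s)) < A ^ a * B ^ b := by
    have strict : w k * Real.exp (c k * (a * t + b * s))
        < A ^ a * B ^ b * (w k * (a * (Real.exp (c k * t) / A)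
          + b * (Real.exp (c k * s) / B))) := by
      have e1 : Real.exp (c k * (a * t + b * s))
          = Real.exp (c k * t) ^ a * Real.exp (c k * s) ^ b := by
        rw [← Real.exp_mul, ← Real.exp_mul, ← Real.exp_add]
        ring_nf
      have amgm := strict_amgm (x := Real.exp (c k * t) / A) (y := Real.exp (c k * s) / B)
        (by positivity) (by positivity) ha hb hab hk
      have e2 : Real.exp (c k * t) ^ a * Real.exp (c k * s) ^ b
          = A ^ a * B ^ b * ((Real.exp (c k * t) / A) ^ a * (Real.exp (c k * s) / B) ^ b) := by
        rw [Real.div_rpow (Real.exp_pos _).le hApos.le, Real.div_rpow (Real.exp_pos _).le hBpos.le]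
        have hAa : (0:ℝ) < A ^ a := Real.rpow_pos_of_pos hApos a
        have hBb : (0:ℝ) < B ^ b := Real.rpow_pos_of_pos hBpos b
        field_simp
      rw [e1, e2]
      have h3 := mul_lt_mul_of_pos_left amgm
        (mul_pos hwk (by positivity : (0:ℝ) < A ^ a * B ^ b))
      calc w k * (A ^ a * B ^ b * ((Real.exp (c k * t) / A) ^ a * (Real.exp (c k * s) / B) ^ b))
          = w k * (A ^ a * B ^ b) * ((Real.exp (c k * t) / A) ^ a * (Real.exp (c k * s) / B) ^ b) := by
            ring
        _ < w k * (A ^ a * B ^ b) * (a * (Real.exp (c k * t) / A) + b * (Real.exp (c k * s) / B)) := h3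
        _ = A ^ a * B ^ b * (w k * (a * (Real.exp (c k * t) / A) + b * (Real.exp (c k * s) / B))) := by
            ring
    calc ∑ k, w k * Real.exp (c k * (a * t + b * s))
        < ∑ k, A ^ a * B ^ b * (w k * (a * (Real.exp (c k * t) / A)
            + b * (Real.exp (c k * s) / B))) :=
          Finset.sum_lt_sum (fun i _ => step i) ⟨k, Finset.mem_univ k, strict⟩
      _ = A ^ a * B ^ b := sumeq
  have hLpos : 0 < ∑ k, w k * Real.exp (c k * (a * t + b * s)) := sumexp_pos w _ hw hwpos
  calc Real.log (∑ k, w k * Real.exp (c k * (a * t + b * s)))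
      < Real.log (A ^ a * B ^ b) := Real.log_lt_log hLpos keystrict
    _ = a * Real.log A + b * Real.log B := by
        rw [Real.log_mul (by positivity) (by positivity), Real.log_rpow hApos, Real.log_rpow hBpos]

end lse

private lemma perspective_convexOn {h : ℝ → ℝ} (hh : ConvexOn ℝ Set.univ h) :
    ConvexOn ℝ (Set.Ioi (0:ℝ)) (fun α => α * h α⁻¹) := by
  refine ⟨convex_Ioi 0, ?_⟩
  intro x hx y hy a b ha hb hab
  simp only [smul_eq_mul]
  have hx0 : 0 < x := hx
  have hy0 : 0 < y := hy
  have hs0 : 0 < a * x + b * y := (convex_Ioi (0:ℝ)) hx hy ha hb hab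
  set s := a * x + b * y with hs
  have w1 : (0:ℝ) ≤ a * x / s := div_nonneg (mul_nonneg ha hx0.le) hs0.le
  have w2 : (0:ℝ) ≤ b * y / s := div_nonneg (mul_nonneg hb hy0.le) hs0.le
  have wsum : a * x / s + b * y / s = 1 := by field_simp; exact hs.symm
  have harg : (a * x / s) • x⁻¹ + (b * y / s) • y⁻¹ = s⁻¹ := by
    simp only [smul_eq_mul]
    have e1 : a * x / s * x⁻¹ = a / s := by
      rw [div_mul_eq_mul_div, mul_assoc, mul_inv_cancel₀ hx0.ne', mul_one]
    have e2 : b * y / s * y⁻¹ = b / s := by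
      rw [div_mul_eq_mul_div, mul_assoc, mul_inv_cancel₀ hy0.ne', mul_one]
    rw [e1, e2, ← add_div, hab, one_div]
  have := hh.2 (Set.mem_univ x⁻¹) (Set.mem_univ y⁻¹) w1 w2 wsum
  rw [harg] at this
  simp only [smul_eq_mul] at this
  calc s * h s⁻¹ ≤ s * (a * x / s * h x⁻¹ + b * y / s * h y⁻¹) :=
      mul_le_mul_of_nonneg_left this hs0.le
    _ = (a * x / s * s) * h x⁻¹ + (b * y / s * s) * h y⁻¹ := by ring
    _ = a * (x * h x⁻¹) + b * (y * h y⁻¹) := by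
        rw [div_mul_cancel₀ _ hs0.ne', div_mul_cancel₀ _ hs0.ne']; ring

private lemma perspective_strictConvexOn {h : ℝ → ℝ} (hh : StrictConvexOn ℝ Set.univ h) :
    StrictConvexOn ℝ (Set.Ioi (0:ℝ)) (fun α => α * h α⁻¹) := by
  refine ⟨convex_Ioi 0, ?_⟩
  intro x hx y hy hxy a b ha hb hab
  simp only [smul_eq_mul]
  have hx0 : 0 < x := hx
  have hy0 : 0 < y := hy
  have hs0 : 0 < a * x + b * y := (convex_Ioi (0:ℝ)) hx hy ha.le hb.le hab
  set s := a * x + b * y with hs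
  have w1 : (0:ℝ) < a * x / s := div_pos (mul_pos ha hx0) hs0
  have w2 : (0:ℝ) < b * y / s := div_pos (mul_pos hb hy0) hs0
  have wsum : a * x / s + b * y / s = 1 := by field_simp; exact hs.symm
  have hinv : x⁻¹ ≠ y⁻¹ := fun habs => hxy (inv_injective habs)
  have harg : (a * x / s) • x⁻¹ + (b * y / s) • y⁻¹ = s⁻¹ := by
    simp only [smul_eq_mul]
    have e1 : a * x / s * x⁻¹ = a / s := by
      rw [div_mul_eq_mul_div, mul_assoc, mul_inv_cancel₀ hx0.ne', mul_one]
    have e2 : b * y / s * y⁻¹ = b / s := by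
      rw [div_mul_eq_mul_div, mul_assoc, mul_inv_cancel₀ hy0.ne', mul_one]
    rw [e1, e2, ← add_div, hab, one_div]
  have := hh.2 (Set.mem_univ x⁻¹) (Set.mem_univ y⁻¹) hinv w1 w2 wsum
  rw [harg] at this
  simp only [smul_eq_mul] at this
  calc s * h s⁻¹ < s * (a * x / s * h x⁻¹ + b * y / s * h y⁻¹) :=
      (mul_lt_mul_iff_right₀ hs0).2 this
    _ = (a * x / s * s) * h x⁻¹ + (b * y / s * s) * h y⁻¹ := by ring
    _ = a * (x * h x⁻¹) + b * (y * h y⁻¹) := by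
        rw [div_mul_cancel₀ _ hs0.ne', div_mul_cancel₀ _ hs0.ne']; ring

private lemma linear_concaveOn (C : ℝ) : ConcaveOn ℝ (Set.Ioi (0:ℝ)) (fun α => α * C) :=
  ⟨convex_Ioi 0, fun _ _ _ _ _ _ _ _ _ => le_of_eq (by simp only [smul_eq_mul]; ring)⟩

/-- **Concavity of the empirical dual objective.**
`f(α) = −α log( (Σ w_i exp(−y_i/α)) / (Σ w_i) ) − αδ` is concave on `(0, ∞)`, and strictly
concave as soon as the data contain two distinct nonzero reward values with positive weights. -/
theorem stmt4 (δ : ℝ) (hδ : 0 < δ) (n : ℕ) (w y : Fin n → ℝ)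
    (hw : ∀ i, 0 ≤ w i) (hwpos : 0 < ∑ i, w i) (hy : ∀ i, 0 ≤ y i) :
    ConcaveOn ℝ (Set.Ioi (0 : ℝ))
      (fun α : ℝ =>
        -α * Real.log ((∑ i, w i * Real.exp (-y i / α)) / ∑ i, w i) - α * δ) ∧
    ((∃ i j : Fin n, i ≠ j ∧ 0 < w i ∧ 0 < w j ∧ y i ≠ y j ∧ y i ≠ 0 ∧ y j ≠ 0) →
      StrictConcaveOn ℝ (Set.Ioi (0 : ℝ))
        (fun α : ℝ =>
          -α * Real.log ((∑ i, w i * Real.exp (-y i / α)) / ∑ i, w i) - α * δ)) := by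
  set W := ∑ i, w i with hWdef
  set C := Real.log W - δ with hC
  set h : ℝ → ℝ := fun t => Real.log (∑ i, w i * Real.exp ((-y i) * t)) with hh
  have funeq : (fun α : ℝ =>
      -α * Real.log ((∑ i, w i * Real.exp (-y i / α)) / ∑ i, w i) - α * δ)
      = fun α : ℝ => -(α * h α⁻¹) + α * C := by
    funext α
    have hS : 0 < ∑ i, w i * Real.exp (-y i / α) :=
      sumexp_pos w _ hw hwpos
    simp only [hh, hC]
    rw [Real.log_div hS.ne' hwpos.ne']
    have : ∀ i : Fin n, -y i / α = (-y i) * α⁻¹ := fun i => div_eq_mul_inv _ _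
    simp_rw [this]
    ring
  rw [funeq]
  constructor
  · have h1 : ConcaveOn ℝ (Set.Ioi (0:ℝ)) (fun α => -(α * h α⁻¹)) :=
      (perspective_convexOn (lse_convexOn w (fun i => -y i) hw hwpos)).neg
    have := h1.add (linear_concaveOn C)
    exact this
  · rintro ⟨i, j, hij, hwi, hwj, hyij, -, -⟩
    have hc : (-y i) ≠ (-y j) := fun habs => hyij (neg_injective habs)
    have h1 : StrictConcaveOn ℝ (Set.Ioi (0:ℝ)) (fun α => -(α * h α⁻¹)) :=
      (perspective_strictConvexOn (lse_strictConvexOn w (fun i => -y i) hw hwpos hij hwi hwj hc)).neg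
    have := h1.add_concaveOn (linear_concaveOn C)
    exact this
end

section
/- Let δ > 0 and let P1, P2 be probability measures on ℝ supported on [0, ∞). Then | sup_{α ≥ 0} { −α log E_{P1}[exp(−Y/α)] − αδ } − sup_{α ≥ 0} { −α log E_{P2}[exp(−Y/α)] − αδ } | ≤ sup_{t ∈ [0,1]} | q_{P1}(t) − q_{P2}(t) |, where Y denotes the identity random variable under each measure. -/
open MeasureTheory Real Set
open scoped ENNReal

/-- The `t`-quantile of a probability measure `P` on `ℝ`:
`q_P(t) = inf { x : t ≤ F_P(x) }`, where `F_P(x) = P(-∞, x]`. -/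
noncomputable def quantile (P : Measure ℝ) (t : ℝ) : ℝ :=
  sInf {x : ℝ | t ≤ (P (Set.Iic x)).toReal}

/-- The KL-DRO dual value `sup_{α ≥ 0} { −α log E_P[exp(−Y/α)] − αδ }` of a distribution `P`
on `ℝ` (here `Y` is the identity random variable under `P`). -/
noncomputable def dualValue (δ : ℝ) (P : Measure ℝ) : ℝ :=
  sSup {r : ℝ | ∃ α : ℝ, 0 ≤ α ∧
    r = -α * Real.log (∫ y, Real.exp (-y / α) ∂P) - α * δ}

open ProbabilityTheory Filter Topology

section Aux

variable (P : Measure ℝ) [IsProbabilityMeasure P]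

lemma quantile_eq_cdf (t : ℝ) : quantile P t = sInf {x : ℝ | t ≤ cdf P x} := by
  unfold quantile
  congr 1
  ext x
  simp only [Set.mem_setOf_eq, cdf_eq_real, measureReal_def]

lemma quantile_bddBelow (h0 : P (Set.Iio 0) = 0) {t : ℝ} (ht : 0 < t) :
    BddBelow {x : ℝ | t ≤ cdf P x} := by
  refine ⟨0, fun x hx => ?_⟩
  simp only [Set.mem_setOf_eq] at hx
  by_contra hc
  push_neg at hc
  have hsub : Set.Iic x ⊆ Set.Iio 0 := fun y hy => lt_of_le_of_lt hy hc
  have hle : P (Set.Iic x) = 0 := le_antisymm (h0 ▸ measure_mono hsub) zero_le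
  have hz : cdf P x = 0 := by rw [cdf_eq_real, measureReal_def, hle]; simp
  rw [hz] at hx
  exact absurd hx (not_le.mpr ht)

lemma quantile_set_nonempty {t : ℝ} (ht : t < 1) : ∃ x : ℝ, t ≤ cdf P x := by
  have := (tendsto_cdf_atTop P).eventually (eventually_ge_nhds ht)
  exact this.exists

lemma quantile_le (h0 : P (Set.Iio 0) = 0) {t x : ℝ} (ht : 0 < t) (hx : t ≤ cdf P x) :
    quantile P t ≤ x := by
  rw [quantile_eq_cdf]
  exact csInf_le (quantile_bddBelow P h0 ht) hx

lemma le_cdf_quantile (h0 : P (Set.Iio 0) = 0) {t : ℝ} (ht : 0 < t) (ht1 : t < 1) :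
    t ≤ cdf P (quantile P t) := by
  set S := {x : ℝ | t ≤ cdf P x} with hS
  have hne : S.Nonempty := quantile_set_nonempty P ht1
  have hbdd : BddBelow S := quantile_bddBelow P h0 ht
  have hq : quantile P t = sInf S := quantile_eq_cdf P t
  rw [hq]
  -- every x > sInf S belongs to S
  have hmem : ∀ x ∈ Set.Ioi (sInf S), t ≤ cdf P x := by
    intro x hx
    obtain ⟨y, hy, hyx⟩ := (csInf_lt_iff hbdd hne).mp hx
    exact hy.trans (monotone_cdf P hyx.le)
  have hcont : Filter.Tendsto (cdf P) (nhdsWithin (sInf S) (Set.Ioi (sInf S)))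
      (nhds (cdf P (sInf S))) := by
    have h := (cdf P).right_continuous (sInf S)
    exact h.tendsto.mono_left (nhdsWithin_mono _ Set.Ioi_subset_Ici_self)
  exact ge_of_tendsto hcont (eventually_nhdsWithin_of_forall hmem)

end Aux

section Key

variable (P1 P2 : Measure ℝ) [IsProbabilityMeasure P1] [IsProbabilityMeasure P2]

/-- If the quantile of `P1` is at most that of `P2` plus `ε` (on `[0,1]`), then the CDFs
satisfy `F₂(x) ≤ F₁(x + ε)`. -/
lemma cdf_shift (h1 : P1 (Set.Iio 0) = 0) (h2 : P2 (Set.Iio 0) = 0) {ε : ℝ}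
    (hq : ∀ t ∈ Set.Icc (0 : ℝ) 1, quantile P1 t ≤ quantile P2 t + ε) (x : ℝ) :
    cdf P2 x ≤ cdf P1 (x + ε) := by
  by_contra hc
  push_neg at hc
  set c := cdf P1 (x + ε) with hcdef
  set t := min (cdf P2 x) ((c + 1) / 2) with htdef
  have hc1 : c < 1 := lt_of_lt_of_le hc (cdf_le_one _ _)
  have hct : c < t := lt_min hc (by linarith)
  have ht0 : 0 < t := lt_of_le_of_lt (cdf_nonneg _ _) hct
  have ht1 : t < 1 := lt_of_le_of_lt (min_le_right _ _) (by linarith)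
  have htx : t ≤ cdf P2 x := min_le_left _ _
  have hq2 : quantile P2 t ≤ x := quantile_le P2 h2 ht0 htx
  have h1t : t ≤ cdf P1 (quantile P1 t) := le_cdf_quantile P1 h1 ht0 ht1
  have hq1 : quantile P1 t ≤ x + ε := le_trans (hq t ⟨ht0.le, ht1.le⟩) (by linarith)
  have : t ≤ c := h1t.trans (monotone_cdf P1 hq1)
  linarith

end Key

section Int

variable (P : Measure ℝ) [IsProbabilityMeasure P]

lemma ae_nonneg (h0 : P (Set.Iio 0) = 0) : ∀ᵐ y ∂P, 0 ≤ y := by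
  rw [ae_iff]
  convert h0 using 2
  ext y
  simp [not_le]

lemma exp_integrable (h0 : P (Set.Iio 0) = 0) {α c : ℝ} (hα : 0 < α) (hc : 0 ≤ c) :
    Integrable (fun y => Real.exp (-(y + c) / α)) P := by
  refine Integrable.mono' (integrable_const (1 : ℝ)) ?_ ?_
  · exact (Real.continuous_exp.comp
      (((continuous_id.add continuous_const).neg).div_const α)).aestronglyMeasurable
  · filter_upwards [ae_nonneg P h0] with y hy
    rw [Real.norm_eq_abs, abs_of_pos (Real.exp_pos _)]
    rw [show (1 : ℝ) = Real.exp 0 by simp]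
    apply Real.exp_le_exp.mpr
    apply div_nonpos_of_nonpos_of_nonneg _ hα.le
    linarith

lemma exp_integral_pos (h0 : P (Set.Iio 0) = 0) {α c : ℝ} (hα : 0 < α) (hc : 0 ≤ c) :
    0 < ∫ y, Real.exp (-(y + c) / α) ∂P := by
  rw [integral_pos_iff_support_of_nonneg (fun y => (Real.exp_pos _).le)
    (exp_integrable P h0 hα hc)]
  have : Function.support (fun y : ℝ => Real.exp (-(y + c) / α)) = Set.univ := by
    ext y; simp [Function.mem_support, (Real.exp_pos _).ne']
  rw [this]
  simp

end Int

section Compare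

variable (P1 P2 : Measure ℝ) [IsProbabilityMeasure P1] [IsProbabilityMeasure P2]

lemma integral_exp_compare (h1 : P1 (Set.Iio 0) = 0) (h2 : P2 (Set.Iio 0) = 0)
    {ε α : ℝ} (hε : 0 ≤ ε) (hα : 0 < α)
    (hcdf : ∀ x, cdf P2 x ≤ cdf P1 (x + ε)) :
    ∫ y, Real.exp (-(y + ε) / α) ∂P2 ≤ ∫ y, Real.exp (-(y + 0) / α) ∂P1 := by
  have hi2 := exp_integrable P2 h2 hα hε
  have hi1 := exp_integrable P1 h1 hα le_rfl
  have hnn : ∀ c : ℝ, (0 : ℝ → ℝ) ≤ᵐ[P2] fun y => Real.exp (-(y + c) / α) :=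
    fun c => Filter.Eventually.of_forall fun y => (Real.exp_pos _).le
  rw [← ENNReal.ofReal_le_ofReal_iff (integral_nonneg fun y => (Real.exp_pos _).le)]
  rw [ofReal_integral_eq_lintegral_ofReal hi2
    (Filter.Eventually.of_forall fun y => (Real.exp_pos _).le)]
  rw [ofReal_integral_eq_lintegral_ofReal hi1
    (Filter.Eventually.of_forall fun y => (Real.exp_pos _).le)]
  rw [lintegral_eq_lintegral_meas_le P2
    (Filter.Eventually.of_forall fun y => (Real.exp_pos _).le) hi2.aemeasurable]
  rw [lintegral_eq_lintegral_meas_le P1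
    (Filter.Eventually.of_forall fun y => (Real.exp_pos _).le) hi1.aemeasurable]
  apply lintegral_mono_ae
  refine (ae_restrict_iff' measurableSet_Ioi).mpr ?_
  apply Filter.Eventually.of_forall
  intro t ht
  have htpos : (0 : ℝ) < t := ht
  have hset2 : {y : ℝ | t ≤ Real.exp (-(y + ε) / α)} = Set.Iic (-α * Real.log t - ε) := by
    ext y
    simp only [Set.mem_setOf_eq, Set.mem_Iic]
    rw [← Real.log_le_iff_le_exp htpos, le_div_iff₀ hα]
    constructor <;> intro h <;> nlinarith
  have hset1 : {y : ℝ | t ≤ Real.exp (-(y + 0) / α)} = Set.Iic (-α * Real.log t) := by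
    ext y
    simp only [Set.mem_setOf_eq, Set.mem_Iic]
    rw [← Real.log_le_iff_le_exp htpos, le_div_iff₀ hα]
    constructor <;> intro h <;> nlinarith
  rw [hset1, hset2]
  have key := hcdf (-α * Real.log t - ε)
  have : P2 (Set.Iic (-α * Real.log t - ε)) ≤ P1 (Set.Iic (-α * Real.log t - ε + ε)) := by
    rw [← ofReal_cdf, ← ofReal_cdf]
    exact ENNReal.ofReal_le_ofReal key
  simpa using this

end Compare

section Dual

variable (P : Measure ℝ) [IsProbabilityMeasure P]

lemma zero_mem_dualSet (δ : ℝ) : (0 : ℝ) ∈ {r : ℝ | ∃ α : ℝ, 0 ≤ α ∧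
    r = -α * Real.log (∫ y, Real.exp (-y / α) ∂P) - α * δ} :=
  ⟨0, le_refl 0, by ring⟩

lemma dual_ub {δ : ℝ} (hδ : 0 < δ) (h0 : P (Set.Iio 0) = 0) :
    ∃ M : ℝ, 0 ≤ M ∧ ∀ r ∈ {r : ℝ | ∃ α : ℝ, 0 ≤ α ∧
      r = -α * Real.log (∫ y, Real.exp (-y / α) ∂P) - α * δ}, r ≤ M := by
  have hexp : Real.exp (-δ) < 1 := Real.exp_lt_one_iff.mpr (by linarith)
  obtain ⟨M0, hM0⟩ := ((tendsto_cdf_atTop P).eventually (eventually_ge_nhds hexp)).exists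
  refine ⟨max M0 0, le_max_right _ _, ?_⟩
  rintro r ⟨α, hα0, rfl⟩
  set M := max M0 0 with hM
  have hcdfM : Real.exp (-δ) ≤ cdf P M := hM0.trans (monotone_cdf P (le_max_left _ _))
  have hcdfMpos : 0 < cdf P M := lt_of_lt_of_le (Real.exp_pos _) hcdfM
  rcases hα0.eq_or_lt with h | hα
  · subst h
    have hz : -(0:ℝ) * Real.log (∫ y, Real.exp (-y / 0) ∂P) - 0 * δ = 0 := by ring
    rw [hz]
    exact le_max_right _ _
  · -- lower bound on the integral
    set I := ∫ y, Real.exp (-y / α) ∂P with hI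
    have hlow : cdf P M * Real.exp (-M / α) ≤ I := by
      have hmono : ∀ y : ℝ, (Set.Iic M).indicator
          (fun _ : ℝ => Real.exp (-M / α)) y ≤ Real.exp (-y / α) := by
        intro y
        by_cases hy : y ∈ Set.Iic M
        · rw [Set.indicator_of_mem hy]
          apply Real.exp_le_exp.mpr
          rw [div_le_div_iff_of_pos_right hα]
          simp only [Set.mem_Iic] at hy
          linarith
        · rw [Set.indicator_of_notMem hy]
          exact (Real.exp_pos _).le
      have hind : Integrable ((Set.Iic M).indicator
          (fun _ : ℝ => Real.exp (-M / α))) P :=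
        (integrable_const _).indicator measurableSet_Iic
      have hInt : Integrable (fun y => Real.exp (-y / α)) P := by
        have := exp_integrable P h0 hα (le_refl (0:ℝ))
        simpa only [add_zero] using this
      have := integral_mono hind hInt hmono
      rwa [integral_indicator_const _ measurableSet_Iic, smul_eq_mul,
        ← cdf_eq_real] at this
    have hIpos : 0 < I := lt_of_lt_of_le (by positivity) hlow
    have hlog : Real.log (cdf P M) + (-M / α) ≤ Real.log I := by
      calc Real.log (cdf P M) + (-M / α)
          = Real.log (cdf P M * Real.exp (-M / α)) := by
            rw [Real.log_mul hcdfMpos.ne' (Real.exp_ne_zero _), Real.log_exp]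
        _ ≤ Real.log I := Real.log_le_log (by positivity) hlow
    have hlogM : -δ ≤ Real.log (cdf P M) := by
      calc -δ = Real.log (Real.exp (-δ)) := (Real.log_exp _).symm
        _ ≤ Real.log (cdf P M) := Real.log_le_log (Real.exp_pos _) hcdfM
    have hmul := mul_le_mul_of_nonneg_left hlog hα.le
    have hmul2 := mul_le_mul_of_nonneg_left hlogM hα.le
    have hcancel : α * (M / α) = M := by field_simp
    ring_nf at hmul hmul2 hcancel ⊢
    linarith

lemma dualValue_nonneg {δ : ℝ} (hδ : 0 < δ) (h0 : P (Set.Iio 0) = 0) :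
    0 ≤ dualValue δ P := by
  obtain ⟨M, hM, hub⟩ := dual_ub P hδ h0
  exact le_csSup ⟨M, hub⟩ (zero_mem_dualSet P δ)

end Dual

section Main

variable (P1 P2 : Measure ℝ) [IsProbabilityMeasure P1] [IsProbabilityMeasure P2]

lemma dualValue_le (δ : ℝ) (hδ : 0 < δ) (h1 : P1 (Set.Iio 0) = 0) (h2 : P2 (Set.Iio 0) = 0)
    {ε : ℝ} (hε : 0 ≤ ε)
    (hq : ∀ t ∈ Set.Icc (0 : ℝ) 1, quantile P1 t ≤ quantile P2 t + ε) :
    dualValue δ P1 ≤ dualValue δ P2 + ε := by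
  obtain ⟨M2, hM2, hub2⟩ := dual_ub P2 hδ h2
  have hbdd2 : BddAbove {r : ℝ | ∃ α : ℝ, 0 ≤ α ∧
      r = -α * Real.log (∫ y, Real.exp (-y / α) ∂P2) - α * δ} := ⟨M2, hub2⟩
  have hd2 : 0 ≤ dualValue δ P2 := dualValue_nonneg P2 hδ h2
  apply Real.sSup_le _ (by linarith)
  rintro r ⟨α, hα0, rfl⟩
  rcases hα0.eq_or_lt with h | hα
  · subst h
    simp only [neg_zero, zero_mul, sub_zero]
    linarith
  · have hcdf := cdf_shift P1 P2 h1 h2 hq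
    have hcomp := integral_exp_compare P1 P2 h1 h2 hε hα hcdf
    have hI2pos : 0 < ∫ y, Real.exp (-(y + ε) / α) ∂P2 := exp_integral_pos P2 h2 hα hε
    have hI1pos : 0 < ∫ y, Real.exp (-(y + 0) / α) ∂P1 := exp_integral_pos P1 h1 hα le_rfl
    -- split off the constant from the P2 integral
    have hsplit : ∫ y, Real.exp (-(y + ε) / α) ∂P2
        = Real.exp (-ε / α) * ∫ y, Real.exp (-y / α) ∂P2 := by
      rw [← integral_const_mul]
      congr 1
      ext y
      rw [← Real.exp_add]
      congr 1
      ring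
    have hI2pos' : 0 < ∫ y, Real.exp (-y / α) ∂P2 := by
      have := exp_integral_pos P2 h2 hα (le_refl (0:ℝ))
      simpa only [add_zero] using this
    have hlog : Real.log (∫ y, Real.exp (-(y + ε) / α) ∂P2)
        ≤ Real.log (∫ y, Real.exp (-(y + 0) / α) ∂P1) :=
      Real.log_le_log hI2pos hcomp
    rw [hsplit, Real.log_mul (Real.exp_ne_zero _) hI2pos'.ne', Real.log_exp] at hlog
    have hI1eq : (∫ y, Real.exp (-(y + 0) / α) ∂P1) = ∫ y, Real.exp (-y / α) ∂P1 := by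
      simp only [add_zero]
    rw [hI1eq] at hlog
    -- hlog : -ε/α + log I2 ≤ log I1
    have hmul := mul_le_mul_of_nonneg_left hlog hα.le
    have hcancel : α * (ε / α) = ε := by field_simp
    have hmem : -α * Real.log (∫ y, Real.exp (-y / α) ∂P2) - α * δ ≤ dualValue δ P2 :=
      le_csSup hbdd2 ⟨α, hα.le, rfl⟩
    ring_nf at hmul hcancel hmem ⊢
    linarith

end Main

/-- **Quantile Lipschitz bound for KL-DRO dual values:** for probability measures `P1, P2`
supported on `[0, ∞)`, the difference of their DRO dual values is bounded by the uniform
distance between their quantile functions (the right-hand supremum is taken in `ℝ≥0∞` so that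
the inequality is meaningful even when it is infinite). -/
theorem stmt9 (δ : ℝ) (hδ : 0 < δ) (P1 P2 : Measure ℝ)
    [IsProbabilityMeasure P1] [IsProbabilityMeasure P2]
    (hP1 : P1 (Set.Iio 0) = 0) (hP2 : P2 (Set.Iio 0) = 0) :
    ENNReal.ofReal |dualValue δ P1 - dualValue δ P2| ≤
      ⨆ t ∈ Set.Icc (0 : ℝ) 1, ENNReal.ofReal |quantile P1 t - quantile P2 t| := by
  set R := ⨆ t ∈ Set.Icc (0 : ℝ) 1, ENNReal.ofReal |quantile P1 t - quantile P2 t| with hR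
  by_cases hRtop : R = ⊤
  · rw [hRtop]; exact le_top
  · set ε := R.toReal with hεdef
    have hε : 0 ≤ ε := ENNReal.toReal_nonneg
    have hbound : ∀ t ∈ Set.Icc (0 : ℝ) 1, |quantile P1 t - quantile P2 t| ≤ ε := by
      intro t ht
      have h1 : ENNReal.ofReal |quantile P1 t - quantile P2 t| ≤ R := by
        rw [hR]
        exact le_iSup_of_le t (le_iSup_of_le ht le_rfl)
      have h2 := ENNReal.toReal_mono hRtop h1
      rwa [ENNReal.toReal_ofReal (abs_nonneg _)] at h2
    have h12 : dualValue δ P1 ≤ dualValue δ P2 + ε := by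
      apply dualValue_le P1 P2 δ hδ hP1 hP2 hε
      intro t ht
      have := hbound t ht
      rw [abs_sub_le_iff] at this
      linarith [this.1]
    have h21 : dualValue δ P2 ≤ dualValue δ P1 + ε := by
      apply dualValue_le P2 P1 δ hδ hP2 hP1 hε
      intro t ht
      have := hbound t ht
      rw [abs_sub_le_iff] at this
      linarith [this.2]
    have habs : |dualValue δ P1 - dualValue δ P2| ≤ ε :=
      abs_sub_le_iff.mpr ⟨by linarith, by linarith⟩
    calc ENNReal.ofReal |dualValue δ P1 - dualValue δ P2|
        ≤ ENNReal.ofReal ε := ENNReal.ofReal_le_ofReal habs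
      _ = R := ENNReal.ofReal_toReal hRtop
end

section
/- Let P1, P2 be probability measures supported on [0, M], and suppose P1 has a density f_{P1} with f_{P1}(x) ≥ b > 0 for all x ∈ [0, M]. Then sup_{t ∈ [0,1]} | q_{P1}(t) − q_{P2}(t) | ≤ (1/b) · sup_{x ∈ [0, M]} | F_{P1}(x) − F_{P2}(x) |. -/
open MeasureTheory Real Set

lemma quantile_mem (P : Measure ℝ) [IsProbabilityMeasure P] {t : ℝ}
    (hne : {x : ℝ | t ≤ (P (Set.Iic x)).toReal}.Nonempty) :
    t ≤ (P (Set.Iic (quantile P t))).toReal := by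
  have hF : ∀ x, (P (Set.Iic x)).toReal = ProbabilityTheory.cdf P x :=
    fun x => (ProbabilityTheory.cdf_eq_real P x).symm
  set F := ProbabilityTheory.cdf P
  set a := quantile P t with ha
  have h1 : ∀ y, a < y → t ≤ F y := by
    intro y hy
    obtain ⟨x, hxS, hxy⟩ := exists_lt_of_csInf_lt hne hy
    have hx : t ≤ (P (Set.Iic x)).toReal := hxS
    exact le_trans (hF x ▸ hx) (F.mono hxy.le)
  have htend : Filter.Tendsto F (nhdsWithin a (Set.Ioi a)) (nhds (F a)) :=
    (F.right_continuous a).tendsto.mono_left (nhdsWithin_mono _ Set.Ioi_subset_Ici_self)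
  have : t ≤ F a :=
    ge_of_tendsto htend (eventually_nhdsWithin_of_forall fun y hy => h1 y hy)
  rw [hF]
  exact this

/-- **Quantile comparison via CDFs.** If `P1, P2` are supported on `[0, M]` and `P1` has a
density bounded below by `b > 0` on `[0, M]`, then
`sup_{t∈[0,1]} |q_{P1}(t) − q_{P2}(t)| ≤ (1/b) sup_{x∈[0,M]} |F_{P1}(x) − F_{P2}(x)|`. -/
theorem stmt10 (P1 P2 : Measure ℝ) [IsProbabilityMeasure P1] [IsProbabilityMeasure P2]
    (M b : ℝ) (hb : 0 < b) (f : ℝ → ℝ) (hfmeas : Measurable f)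
    (hf0 : ∀ y : ℝ, y ∉ Set.Icc 0 M → f y = 0)
    (hfb : ∀ y ∈ Set.Icc (0 : ℝ) M, b ≤ f y)
    (hP1 : P1 = MeasureTheory.volume.withDensity (fun y => ENNReal.ofReal (f y)))
    (hP2supp : P2 (Set.Icc (0 : ℝ) M)ᶜ = 0) :
    ∀ t ∈ Set.Icc (0 : ℝ) 1,
      |quantile P1 t - quantile P2 t| ≤
        (1 / b) * sSup ((fun x : ℝ =>
          |(P1 (Set.Iic x)).toReal - (P2 (Set.Iic x)).toReal|) '' Set.Icc 0 M) := by
  set F1 : ℝ → ℝ := fun x => (P1 (Set.Iic x)).toReal with hF1def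
  set F2 : ℝ → ℝ := fun x => (P2 (Set.Iic x)).toReal with hF2def
  set ε : ℝ := sSup ((fun x : ℝ => |F1 x - F2 x|) '' Set.Icc 0 M) with hεdef
  -- M is nonnegative
  have hM : 0 ≤ M := by
    by_contra h
    push_neg at h
    have hemp : Set.Icc (0:ℝ) M = ∅ := Set.Icc_eq_empty_of_lt h
    have hzero : ∀ y : ℝ, f y = 0 := fun y => hf0 y (by simp [hemp])
    have : P1 Set.univ = 0 := by
      rw [hP1, withDensity_apply _ MeasurableSet.univ]
      simp [hzero]
    simp [measure_univ] at this
  -- Vanishing of the CDFs below 0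
  have hP1null : ∀ s : Set ℝ, MeasurableSet s → s ∩ Set.Icc 0 M = ∅ → P1 s = 0 := by
    intro s hs hdisj
    rw [hP1, withDensity_apply _ hs]
    have : ∀ y ∈ s, ENNReal.ofReal (f y) = 0 := by
      intro y hy
      have : y ∉ Set.Icc (0:ℝ) M := fun hmem => by
        have : y ∈ s ∩ Set.Icc 0 M := ⟨hy, hmem⟩
        simp [hdisj] at this
      simp [hf0 y this]
    calc ∫⁻ y in s, ENNReal.ofReal (f y) = ∫⁻ _ in s, 0 :=
          setLIntegral_congr_fun hs this
      _ = 0 := by simp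
  have hF1neg : ∀ x : ℝ, x < 0 → P1 (Set.Iic x) = 0 := by
    intro x hx
    refine hP1null _ measurableSet_Iic ?_
    ext y; simp only [Set.mem_inter_iff, Set.mem_Iic, Set.mem_Icc, Set.mem_empty_iff_false,
      iff_false, not_and, and_imp]
    intro hyx h0y; linarith
  have hF2neg : ∀ x : ℝ, x < 0 → P2 (Set.Iic x) = 0 := by
    intro x hx
    refine measure_mono_null ?_ hP2supp
    intro y hy
    simp only [Set.mem_compl_iff, Set.mem_Icc, not_and, not_le]
    intro h0y; simp only [Set.mem_Iic] at hy; linarith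
  -- CDFs equal 1 at M
  have hIicIoi : Set.Iic M ∪ Set.Ioi M = (Set.univ : Set ℝ) := by
    ext y; simp [le_or_gt]
  have hF1M : P1 (Set.Iic M) = 1 := by
    have h0 : P1 (Set.Ioi M) = 0 := by
      refine hP1null _ measurableSet_Ioi ?_
      ext y; simp only [Set.mem_inter_iff, Set.mem_Ioi, Set.mem_Icc, Set.mem_empty_iff_false,
        iff_false, not_and, and_imp]
      intro hyM h0y; linarith
    have := measure_union (μ := P1) (Set.Iic_disjoint_Ioi (le_refl M)) measurableSet_Ioi
    rw [hIicIoi, measure_univ, h0, add_zero] at this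
    exact this.symm
  have hF2M : P2 (Set.Iic M) = 1 := by
    have h0 : P2 (Set.Ioi M) = 0 := by
      refine measure_mono_null ?_ hP2supp
      intro y hy
      simp only [Set.mem_compl_iff, Set.mem_Icc, not_and, not_le]
      intro _; simpa using hy
    have := measure_union (μ := P2) (Set.Iic_disjoint_Ioi (le_refl M)) measurableSet_Ioi
    rw [hIicIoi, measure_univ, h0, add_zero] at this
    exact this.symm
  -- slope lower bound for F1
  have hslope : ∀ x y : ℝ, 0 ≤ x → x ≤ y → y ≤ M → F1 x + b * (y - x) ≤ F1 y := by
    intro x y h0x hxy hyM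
    have hsplit : P1 (Set.Iic y) = P1 (Set.Iic x) + P1 (Set.Ioc x y) := by
      rw [← measure_union (μ := P1) (Set.Iic_disjoint_Ioc (le_refl x)) measurableSet_Ioc,
        Set.Iic_union_Ioc_eq_Iic hxy]
    have hlb : ENNReal.ofReal (b * (y - x)) ≤ P1 (Set.Ioc x y) := by
      rw [hP1, withDensity_apply _ measurableSet_Ioc]
      have : ∀ z ∈ Set.Ioc x y, ENNReal.ofReal b ≤ ENNReal.ofReal (f z) := by
        intro z hz
        exact ENNReal.ofReal_le_ofReal (hfb z ⟨le_trans h0x hz.1.le, le_trans hz.2 hyM⟩)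
      calc ENNReal.ofReal (b * (y - x)) = ENNReal.ofReal b * volume (Set.Ioc x y) := by
            rw [Real.volume_Ioc, ENNReal.ofReal_mul hb.le]
        _ = ∫⁻ _ in Set.Ioc x y, ENNReal.ofReal b := by rw [setLIntegral_const, mul_comm]
        _ ≤ ∫⁻ z in Set.Ioc x y, ENNReal.ofReal (f z) :=
            setLIntegral_mono (hfmeas.ennreal_ofReal) this
    have hfin : P1 (Set.Ioc x y) ≠ ⊤ := measure_ne_top _ _
    have hfin' : P1 (Set.Iic x) ≠ ⊤ := measure_ne_top _ _
    have : b * (y - x) ≤ (P1 (Set.Ioc x y)).toReal := by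
      rw [← ENNReal.toReal_ofReal (mul_nonneg hb.le (by linarith) : (0:ℝ) ≤ b * (y - x))]
      exact ENNReal.toReal_mono hfin hlb
    have hsplit' : F1 y = F1 x + (P1 (Set.Ioc x y)).toReal := by
      simp only [hF1def, hsplit, ENNReal.toReal_add hfin' hfin]
    linarith
  -- pointwise bound by ε
  have hbdd : BddAbove ((fun x : ℝ => |F1 x - F2 x|) '' Set.Icc 0 M) := by
    refine ⟨2, ?_⟩
    rintro v ⟨x, _, rfl⟩
    have h1 : F1 x ≤ 1 := by
      simp only [hF1def]
      exact ENNReal.toReal_le_of_le_ofReal zero_le_one (by simpa using prob_le_one)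
    have h2 : F2 x ≤ 1 := by
      simp only [hF2def]
      exact ENNReal.toReal_le_of_le_ofReal zero_le_one (by simpa using prob_le_one)
    have h3 : 0 ≤ F1 x := ENNReal.toReal_nonneg
    have h4 : 0 ≤ F2 x := ENNReal.toReal_nonneg
    rw [abs_le]; constructor <;> linarith
  have hub : ∀ x ∈ Set.Icc (0:ℝ) M, |F1 x - F2 x| ≤ ε :=
    fun x hx => le_csSup hbdd ⟨x, hx, rfl⟩
  have hε0 : 0 ≤ ε := le_trans (abs_nonneg _) (hub 0 ⟨le_rfl, hM⟩)
  have hεb : 0 ≤ ε / b := div_nonneg hε0 hb.le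
  -- main part
  intro t ht
  rcases eq_or_lt_of_le ht.1 with h0t | h0t
  · -- t = 0 : both quantiles are sInf univ = 0
    have huniv : ∀ P : Measure ℝ, {x : ℝ | t ≤ (P (Set.Iic x)).toReal} = Set.univ := by
      intro P; ext x; simp [← h0t, ENNReal.toReal_nonneg]
    have hq : ∀ P : Measure ℝ, quantile P t = 0 := by
      intro P
      rw [quantile, huniv P, Real.sInf_of_not_bddBelow not_bddBelow_univ]
    rw [hq P1, hq P2]
    simp only [sub_zero, abs_zero]
    rw [one_div]
    positivity
  · -- 0 < t ≤ 1
    set S1 := {x : ℝ | t ≤ F1 x} with hS1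
    set S2 := {x : ℝ | t ≤ F2 x} with hS2
    have hF1Mr : F1 M = 1 := by simp [hF1def, hF1M]
    have hF2Mr : F2 M = 1 := by simp [hF2def, hF2M]
    have hne1 : S1.Nonempty := ⟨M, by simp [hS1, hF1Mr, ht.2]⟩
    have hne2 : S2.Nonempty := ⟨M, by simp [hS2, hF2Mr, ht.2]⟩
    have hlb1 : ∀ x ∈ S1, (0:ℝ) ≤ x := by
      intro x hx
      by_contra h
      push_neg at h
      have : F1 x = 0 := by simp [hF1def, hF1neg x h]
      rw [hS1, Set.mem_setOf_eq, this] at hx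
      linarith
    have hlb2 : ∀ x ∈ S2, (0:ℝ) ≤ x := by
      intro x hx
      by_contra h
      push_neg at h
      have : F2 x = 0 := by simp [hF2def, hF2neg x h]
      rw [hS2, Set.mem_setOf_eq, this] at hx
      linarith
    have hbdd1 : BddBelow S1 := ⟨0, hlb1⟩
    have hbdd2 : BddBelow S2 := ⟨0, hlb2⟩
    have hq1 : quantile P1 t = sInf S1 := rfl
    have hq2 : quantile P2 t = sInf S2 := rfl
    have hq1M : quantile P1 t ≤ M := by
      rw [hq1]; exact csInf_le hbdd1 (by simp [hS1, hF1Mr, ht.2])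
    have hq2M : quantile P2 t ≤ M := by
      rw [hq2]; exact csInf_le hbdd2 (by simp [hS2, hF2Mr, ht.2])
    have hq10 : 0 ≤ quantile P1 t := by rw [hq1]; exact le_csInf hne1 hlb1
    have hq20 : 0 ≤ quantile P2 t := by rw [hq2]; exact le_csInf hne2 hlb2
    have hmem1 : t ≤ F1 (quantile P1 t) := quantile_mem P1 hne1
    have hmem2 : t ≤ F2 (quantile P2 t) := quantile_mem P2 hne2
    -- direction 1 : quantile P1 t ≤ quantile P2 t + ε/b
    have hdir1 : quantile P1 t ≤ quantile P2 t + ε / b := by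
      rcases le_or_gt M (quantile P2 t + ε / b) with h | h
      · linarith
      · set q := quantile P2 t with hq
        have hqmem : q ∈ Set.Icc (0:ℝ) M := ⟨hq20, hq2M⟩
        have hstep : F1 q + b * ((q + ε / b) - q) ≤ F1 (q + ε / b) :=
          hslope q (q + ε / b) hq20 (by linarith) h.le
        have hcomp : |F1 q - F2 q| ≤ ε := hub q hqmem
        have h1 : F2 q - ε ≤ F1 q := by
          rw [abs_le] at hcomp; linarith
        have hmul : b * ((q + ε / b) - q) = ε := by
          field_simp
          ring
        have : t ≤ F1 (q + ε / b) := by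
          calc t ≤ F2 q := hmem2
            _ ≤ F1 q + ε := by linarith
            _ = F1 q + b * ((q + ε / b) - q) := by rw [hmul]
            _ ≤ F1 (q + ε / b) := hstep
        rw [hq1]
        exact csInf_le hbdd1 this
    -- direction 2 : quantile P2 t ≤ quantile P1 t + ε/b
    have hdir2 : quantile P2 t ≤ quantile P1 t + ε / b := by
      rcases le_or_gt M (quantile P1 t + ε / b) with h | h
      · linarith
      · set q := quantile P1 t with hq
        have hstep : F1 q + b * ((q + ε / b) - q) ≤ F1 (q + ε / b) :=
          hslope q (q + ε / b) hq10 (by linarith) h.le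
        have hcomp : |F1 (q + ε / b) - F2 (q + ε / b)| ≤ ε :=
          hub (q + ε / b) ⟨by linarith, h.le⟩
        have h1 : F1 (q + ε / b) - ε ≤ F2 (q + ε / b) := by
          rw [abs_le] at hcomp; linarith
        have hmul : b * ((q + ε / b) - q) = ε := by
          field_simp
          ring
        have : t ≤ F2 (q + ε / b) := by
          calc t ≤ F1 q := hmem1
            _ = F1 q + b * ((q + ε / b) - q) - ε := by rw [hmul]; ring
            _ ≤ F1 (q + ε / b) - ε := by linarith
            _ ≤ F2 (q + ε / b) := by linarith
        rw [hq2]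
        exact csInf_le hbdd2 this
    have : |quantile P1 t - quantile P2 t| ≤ ε / b := by
      rw [abs_sub_le_iff]; constructor <;> linarith
    calc |quantile P1 t - quantile P2 t| ≤ ε / b := this
      _ = (1 / b) * ε := by ring
end

section
/- Let k ∈ (1, ∞), δ > 0, set k_* = k/(k−1) and c_k(δ) = (1 + k(k−1)δ)^{1/k}, and let P be a probability measure under which the random variable Z satisfies 0 ≤ Z ≤ M almost surely. Then inf { E_Q[Z] : Q ≪ P, D_k(Q‖P) ≤ δ } = sup_{α ∈ ℝ} { −c_k(δ) · ( E_P[ ((α − Z)_+)^{k_*} ] )^{1/k_*} + α }. -/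
open MeasureTheory Real Set
open scoped ENNReal

/-- The Cressie–Read function `f_k(t) = (t^k − kt + k − 1)/(k(k−1))` (for `t ≥ 0`). -/
noncomputable def fCR (k t : ℝ) : ℝ := (t ^ k - k * t + k - 1) / (k * (k - 1))

/-- The Cressie–Read `f_k`-divergence `D_k(Q ‖ P) = ∫ f_k(dQ/dP) dP`, taken as a lower
Lebesgue integral in `ℝ≥0∞` (the integrand is nonnegative since `f_k ≥ 0`). -/
noncomputable def crDiv {Ω : Type*} [MeasurableSpace Ω] (k : ℝ) (Q P : Measure Ω) : ℝ≥0∞ :=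
  ∫⁻ ω, ENNReal.ofReal (fCR k ((Q.rnDeriv P ω).toReal)) ∂P

set_option linter.unusedTactic false
set_option linter.unreachableTactic false


lemma fCR_nonneg {k : ℝ} (hk : 1 < k) {t : ℝ} (ht : 0 ≤ t) : 0 ≤ fCR k t := by
  have h := one_add_mul_self_le_rpow_one_add (s := t - 1) (by linarith) hk.le
  have h2 : (1 : ℝ) + (t - 1) = t := by ring
  rw [h2] at h
  have hden : 0 < k * (k - 1) := by nlinarith
  unfold fCR
  apply div_nonneg _ hden.le
  nlinarith

lemma hasDerivAt_maxRpow {p : ℝ} (hp : 1 < p) (t : ℝ) :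
    HasDerivAt (fun s : ℝ => max s 0 ^ p) (p * max t 0 ^ (p - 1)) t := by
  have hp0 : p ≠ 0 := by positivity
  have hp1 : p - 1 ≠ 0 := by intro h; exact absurd (by linarith : p = 1) hp.ne'
  rcases lt_trichotomy t 0 with h | h | h
  · have hmax : max t 0 = 0 := max_eq_right h.le
    rw [hmax, Real.zero_rpow hp1, mul_zero]
    have : (fun s : ℝ => max s 0 ^ p) =ᶠ[nhds t] fun _ => (0:ℝ) ^ p := by
      filter_upwards [Iio_mem_nhds h] with s hs
      rw [max_eq_right (le_of_lt hs)]
    exact (hasDerivAt_const t ((0:ℝ) ^ p)).congr_of_eventuallyEq this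
  · subst h
    rw [max_self, Real.zero_rpow hp1, mul_zero]
    rw [hasDerivAt_iff_isLittleO]
    simp only [sub_zero, mul_zero, max_self, Real.zero_rpow hp0]
    rw [Asymptotics.isLittleO_iff]
    intro c hc
    simp only [smul_zero, sub_zero]
    have hball : Metric.ball (0:ℝ) (min (c ^ (1 / (p-1))) 1) ∈ nhds (0:ℝ) :=
      Metric.ball_mem_nhds _ (lt_min (Real.rpow_pos_of_pos hc _) one_pos)
    filter_upwards [hball] with s hs
    rw [Metric.mem_ball, Real.dist_eq, sub_zero] at hs
    rcases le_or_gt s 0 with hs0 | hs0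
    · rw [max_eq_right hs0, Real.zero_rpow hp0]
      simp [abs_nonneg, mul_nonneg hc.le (abs_nonneg s)]
    · rw [max_eq_left hs0.le, Real.norm_eq_abs, Real.norm_eq_abs,
        abs_of_nonneg (Real.rpow_nonneg hs0.le p), abs_of_nonneg hs0.le]
      have : s ^ p = s ^ (p - 1) * s := by
        rw [← Real.rpow_add_one hs0.ne' (p-1)]; ring_nf
      rw [this]
      gcongr
      have h1 : s ^ (p-1) ≤ (c ^ (1/(p-1))) ^ (p - 1) := by
        apply Real.rpow_le_rpow hs0.le _ (by linarith)
        exact le_trans (le_abs_self s) (le_of_lt (lt_of_lt_of_le hs (min_le_left _ _)))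
      rwa [← Real.rpow_mul hc.le, one_div, inv_mul_cancel₀ hp1, Real.rpow_one] at h1
  · have hmax : max t 0 = t := max_eq_left h.le
    rw [hmax]
    have hd := Real.hasDerivAt_rpow_const (x := t) (p := p) (Or.inl h.ne')
    refine hd.congr_of_eventuallyEq ?_
    filter_upwards [Ioi_mem_nhds h] with s hs
    rw [max_eq_left (le_of_lt hs)]

lemma hasDerivAt_int_maxRpow {Ω : Type*} [MeasurableSpace Ω] (P : Measure Ω)
    [IsProbabilityMeasure P] (Z : Ω → ℝ) (hZmeas : Measurable Z)
    (hZ0 : ∀ᵐ ω ∂P, 0 ≤ Z ω) {p : ℝ} (hp : 1 < p) (α : ℝ) :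
    HasDerivAt (fun a => ∫ ω, max (a - Z ω) 0 ^ p ∂P)
      (p * ∫ ω, max (α - Z ω) 0 ^ (p - 1) ∂P) α := by
  have hp0 : 0 < p := lt_trans one_pos hp
  have hmeas : ∀ (q x : ℝ), AEStronglyMeasurable (fun ω => max (x - Z ω) 0 ^ q) P := by
    intro q x
    exact (((measurable_const.sub hZmeas).max measurable_const).pow_const q).aestronglyMeasurable
  have key := hasDerivAt_integral_of_dominated_loc_of_deriv_le (μ := P)
    (F := fun a ω => max (a - Z ω) 0 ^ p)
    (F' := fun a ω => p * max (a - Z ω) 0 ^ (p - 1))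
    (x₀ := α) (bound := fun _ => p * (|α| + 1) ^ (p - 1))
    (Metric.ball_mem_nhds α one_pos)
    (Filter.Eventually.of_forall fun x => hmeas p x)
    ?_ ((hmeas (p-1) α).const_mul p) ?_ (integrable_const _) ?_
  · have h2 := key.2
    rwa [integral_const_mul] at h2
  · -- Integrable (F α)
    refine (integrable_const ((|α| + 1) ^ p)).mono' (hmeas p α) ?_
    filter_upwards [hZ0] with ω hω
    rw [Real.norm_eq_abs, abs_of_nonneg (Real.rpow_nonneg (le_max_right _ _) _)]
    apply Real.rpow_le_rpow (le_max_right _ _) _ hp0.le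
    rw [max_le_iff]
    constructor
    · have := le_abs_self α; linarith
    · positivity
  · -- bound
    filter_upwards [hZ0] with ω hω x hx
    rw [Metric.mem_ball, Real.dist_eq] at hx
    rw [Real.norm_eq_abs, abs_of_nonneg (by positivity)]
    have h3 : |x| ≤ |x - α| + |α| := by
      have := abs_add_le (x - α) α; simpa using this
    have h2 : |x| ≤ |α| + 1 := by linarith
    have hx2 := le_abs_self x
    have h1 : max (x - Z ω) 0 ≤ |α| + 1 := by
      rw [max_le_iff]
      refine ⟨by linarith, by positivity⟩
    have h4 := Real.rpow_le_rpow (le_max_right (x - Z ω) 0) h1 (by linarith : (0:ℝ) ≤ p - 1)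
    nlinarith [h4, hp0]
  · -- differentiability
    refine Filter.Eventually.of_forall fun ω => fun x _ => ?_
    have h1 := (hasDerivAt_maxRpow hp (x - Z ω)).comp x ((hasDerivAt_id x).sub_const (Z ω))
    rw [mul_one] at h1
    exact h1

lemma weak_dual {Ω : Type*} [MeasurableSpace Ω] (P : Measure Ω) [IsProbabilityMeasure P]
    (Z : Ω → ℝ) (hZmeas : Measurable Z) (M : ℝ) (hZ : ∀ᵐ ω ∂P, Z ω ∈ Set.Icc 0 M)
    (k δ : ℝ) (hk : 1 < k) (hδ : 0 < δ)
    (Q : Measure Ω) [IsProbabilityMeasure Q] (hQP : Q ≪ P)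
    (hdiv : crDiv k Q P ≤ ENNReal.ofReal δ) (α : ℝ) :
    -(1 + k * (k - 1) * δ) ^ (1 / k) *
        (∫ ω, (max (α - Z ω) 0) ^ (k / (k - 1)) ∂P) ^ ((k - 1) / k) + α ≤ ∫ ω, Z ω ∂Q := by
  have hk0 : (0:ℝ) < k := lt_trans one_pos hk
  have hk1 : (0:ℝ) < k - 1 := by linarith
  set L : Ω → ℝ := fun ω => (Q.rnDeriv P ω).toReal with hL
  have hLmeas : Measurable L := (Measure.measurable_rnDeriv Q P).ennreal_toReal
  have hLnn : ∀ ω, 0 ≤ L ω := fun ω => ENNReal.toReal_nonneg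
  have hLint : Integrable L P := Measure.integrable_toReal_rnDeriv
  have hL1 : ∫ ω, L ω ∂P = 1 := by
    rw [Measure.integral_toReal_rnDeriv hQP]; simp
  have hfCRnn : ∀ ω, 0 ≤ fCR k (L ω) := fun ω => fCR_nonneg hk (hLnn ω)
  have hfCRmeas : Measurable (fun ω => fCR k (L ω)) := by
    unfold fCR
    exact ((((hLmeas.pow_const k).sub (hLmeas.const_mul k)).add_const k).sub_const 1).div_const _
  have hne : ∫⁻ ω, ENNReal.ofReal (fCR k (L ω)) ∂P ≠ ⊤ :=
    (lt_of_le_of_lt hdiv ENNReal.ofReal_lt_top).ne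
  have hfCRint : Integrable (fun ω => fCR k (L ω)) P := by
    have h1 := integrable_toReal_of_lintegral_ne_top hfCRmeas.ennreal_ofReal.aemeasurable hne
    refine h1.congr (Filter.Eventually.of_forall fun ω => ?_)
    exact ENNReal.toReal_ofReal (hfCRnn ω)
  have hfCRval : ∫ ω, fCR k (L ω) ∂P ≤ δ := by
    rw [integral_eq_lintegral_of_nonneg_ae (Filter.Eventually.of_forall hfCRnn)
      hfCRmeas.aestronglyMeasurable]
    have h2 := ENNReal.toReal_mono ENNReal.ofReal_ne_top hdiv
    rwa [ENNReal.toReal_ofReal hδ.le] at h2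
  have heq : ∀ ω, L ω ^ k = k * (k - 1) * fCR k (L ω) + k * L ω - (k - 1) := by
    intro ω; unfold fCR; field_simp; ring
  have hLk_int : Integrable (fun ω => L ω ^ k) P := by
    have := ((hfCRint.const_mul (k * (k-1))).add (hLint.const_mul k)).sub
      (integrable_const (k - 1))
    exact this.congr (Filter.Eventually.of_forall fun ω => (heq ω).symm)
  have hLk_val : ∫ ω, L ω ^ k ∂P ≤ 1 + k * (k - 1) * δ := by
    have h3 : ∫ ω, L ω ^ k ∂P
        = k * (k - 1) * (∫ ω, fCR k (L ω) ∂P) + k * (∫ ω, L ω ∂P) - (k - 1) := by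
      have h4 : ∫ ω, L ω ^ k ∂P
          = ∫ ω, (k * (k - 1) * fCR k (L ω) + k * L ω - (k - 1)) ∂P :=
        integral_congr_ae (Filter.Eventually.of_forall fun ω => heq ω)
      have hint1 : Integrable (fun ω => k * (k - 1) * fCR k (L ω) + k * L ω) P :=
        (hfCRint.const_mul _).add (hLint.const_mul k)
      have hint2 : Integrable (fun ω => k * (k - 1) * fCR k (L ω)) P := hfCRint.const_mul _
      have hint3 : Integrable (fun ω => k * L ω) P := hLint.const_mul k
      rw [h4, integral_sub hint1 (integrable_const _), integral_add hint2 hint3,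
        integral_const_mul, integral_const_mul, integral_const]
      simp
    rw [h3, hL1]
    nlinarith [mul_le_mul_of_nonneg_left hfCRval (le_of_lt (mul_pos hk0 hk1))]
  -- Memℒp facts
  have hkofreal_ne : ENNReal.ofReal k ≠ 0 := by
    simp [ENNReal.ofReal_eq_zero, not_le, hk0]
  have hLmem : MemLp L (ENNReal.ofReal k) P := by
    have h2 : MemLp (fun ω => ‖L ω‖ ^ (ENNReal.ofReal k).toReal) 1 P := by
      rw [memLp_one_iff_integrable]
      refine hLk_int.congr (Filter.Eventually.of_forall fun ω => ?_)
      simp [Real.norm_eq_abs, abs_of_nonneg (hLnn ω), ENNReal.toReal_ofReal hk0.le]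
    have h4 : MemLp (fun ω => ‖L ω‖ ^ (ENNReal.ofReal k).toReal)
        (ENNReal.ofReal k / ENNReal.ofReal k) P := by
      rw [ENNReal.div_self hkofreal_ne ENNReal.ofReal_ne_top]; exact h2
    exact (memLp_norm_rpow_iff hLmeas.aestronglyMeasurable hkofreal_ne
      ENNReal.ofReal_ne_top).mp h4
  set G : Ω → ℝ := fun ω => max (α - Z ω) 0 with hG
  have hGmeas : Measurable G := (measurable_const.sub hZmeas).max measurable_const
  have hGnn : ∀ ω, 0 ≤ G ω := fun ω => le_max_right _ _
  have hGbd : ∀ᵐ ω ∂P, ‖G ω‖ ≤ |α| := by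
    filter_upwards [hZ] with ω hω
    rw [Real.norm_eq_abs, abs_of_nonneg (hGnn ω), max_le_iff]
    have := le_abs_self α
    exact ⟨by linarith [hω.1], abs_nonneg α⟩
  have hGmem : MemLp G (ENNReal.ofReal (k / (k - 1))) P :=
    (memLp_top_of_bound hGmeas.aestronglyMeasurable |α| hGbd).mono_exponent le_top
  have hconj : k.HolderConjugate (k / (k - 1)) := Real.HolderConjugate.conjExponent hk
  have hHolder := integral_mul_le_Lp_mul_Lq_of_nonneg hconj
    (Filter.Eventually.of_forall hLnn) (Filter.Eventually.of_forall hGnn) hLmem hGmem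
  -- bound the two factors
  set c : ℝ := (1 + k * (k - 1) * δ) ^ (1 / k) with hc
  have hIL_nn : 0 ≤ ∫ ω, L ω ^ k ∂P :=
    integral_nonneg fun ω => Real.rpow_nonneg (hLnn ω) k
  have h5 : (∫ ω, L ω ^ k ∂P) ^ (1 / k) ≤ c :=
    Real.rpow_le_rpow hIL_nn hLk_val (by positivity)
  have hIG_nn : 0 ≤ ∫ ω, G ω ^ (k / (k - 1)) ∂P :=
    integral_nonneg fun ω => Real.rpow_nonneg (hGnn ω) _
  have h6 : (1:ℝ) / (k / (k - 1)) = (k - 1) / k := one_div_div _ _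
  have hHolder2 : ∫ ω, L ω * G ω ∂P ≤ c * (∫ ω, G ω ^ (k / (k-1)) ∂P) ^ ((k - 1) / k) := by
    calc ∫ ω, L ω * G ω ∂P
        ≤ (∫ ω, L ω ^ k ∂P) ^ (1/k) * (∫ ω, G ω ^ (k/(k-1)) ∂P) ^ (1/(k/(k-1))) := hHolder
      _ ≤ c * (∫ ω, G ω ^ (k/(k-1)) ∂P) ^ ((k - 1) / k) := by
          rw [h6]
          exact mul_le_mul_of_nonneg_right h5 (Real.rpow_nonneg hIG_nn _)
  -- integrabilities
  have hLG_int : Integrable (fun ω => L ω * G ω) P := by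
    refine (hLint.const_mul |α|).mono' (hLmeas.mul hGmeas).aestronglyMeasurable ?_
    filter_upwards [hGbd] with ω hω
    rw [Real.norm_eq_abs, abs_of_nonneg (mul_nonneg (hLnn ω) (hGnn ω))]
    rw [Real.norm_eq_abs, abs_of_nonneg (hGnn ω)] at hω
    calc L ω * G ω ≤ L ω * |α| := mul_le_mul_of_nonneg_left hω (hLnn ω)
      _ = |α| * L ω := mul_comm _ _
  have hLZ_int : Integrable (fun ω => L ω * Z ω) P := by
    refine (hLint.const_mul M).mono' (hLmeas.mul hZmeas).aestronglyMeasurable ?_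
    filter_upwards [hZ] with ω hω
    rw [Real.norm_eq_abs, abs_of_nonneg (mul_nonneg (hLnn ω) hω.1)]
    calc L ω * Z ω ≤ L ω * M := mul_le_mul_of_nonneg_left hω.2 (hLnn ω)
      _ = M * L ω := mul_comm _ _
  -- pointwise inequality and conclusion
  have hpt : ∀ ω, α * L ω - L ω * G ω ≤ L ω * Z ω := by
    intro ω
    have h7 : α - G ω ≤ Z ω := by
      rcases le_total (α - Z ω) 0 with h | h
      · rw [hG]; simp only [max_eq_right h]; linarith
      · rw [hG]; simp only [max_eq_left h]; linarith
    have := mul_le_mul_of_nonneg_left h7 (hLnn ω)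
    nlinarith [this]
  have hmono := integral_mono_ae ((hLint.const_mul α).sub hLG_int) hLZ_int
    (Filter.Eventually.of_forall hpt)
  have hsplit : ∫ ω, (α * L ω - L ω * G ω) ∂P = α - ∫ ω, L ω * G ω ∂P := by
    rw [integral_sub (hLint.const_mul α) hLG_int, integral_const_mul, hL1, mul_one]
  have hQZ : ∫ ω, Z ω ∂Q = ∫ ω, L ω * Z ω ∂P := by
    rw [← MeasureTheory.integral_rnDeriv_smul hQP (f := Z)]
    simp [hL, smul_eq_mul]
  rw [hQZ]
  have := hsplit ▸ hmono
  have hfin : -c * (∫ ω, G ω ^ (k/(k-1)) ∂P) ^ ((k-1)/k) + α ≤ α - ∫ ω, L ω * G ω ∂P := by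
    nlinarith [hHolder2]
  calc -(1 + k * (k - 1) * δ) ^ (1 / k) *
        (∫ ω, (max (α - Z ω) 0) ^ (k / (k - 1)) ∂P) ^ ((k - 1) / k) + α
      = -c * (∫ ω, G ω ^ (k/(k-1)) ∂P) ^ ((k-1)/k) + α := rfl
    _ ≤ α - ∫ ω, L ω * G ω ∂P := hfin
    _ ≤ ∫ ω, L ω * Z ω ∂P := by linarith [this]

lemma exists_feasible_pos {Ω : Type*} [MeasurableSpace Ω] (P : Measure Ω)
    [IsProbabilityMeasure P] (Z : Ω → ℝ) (hZmeas : Measurable Z) (M : ℝ)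
    (hZ : ∀ᵐ ω ∂P, Z ω ∈ Set.Icc 0 M) (k δ : ℝ) (hk : 1 < k) (hδ : 0 < δ) (α : ℝ)
    (hpos : 0 < ∫ ω, max (α - Z ω) 0 ^ (k / (k - 1)) ∂P)
    (hcm : (1 + k * (k - 1) * δ) ^ (1 / k) * ∫ ω, max (α - Z ω) 0 ^ (k / (k - 1) - 1) ∂P
        = (∫ ω, max (α - Z ω) 0 ^ (k / (k - 1)) ∂P) ^ (1 / k)) :
    ∃ Q : Measure Ω, IsProbabilityMeasure Q ∧ Q ≪ P ∧ crDiv k Q P ≤ ENNReal.ofReal δ ∧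
      ∫ ω, Z ω ∂Q = -(1 + k * (k - 1) * δ) ^ (1 / k) *
          (∫ ω, max (α - Z ω) 0 ^ (k / (k - 1)) ∂P) ^ ((k - 1) / k) + α := by
  have hk0 : (0:ℝ) < k := lt_trans one_pos hk
  have hk1 : (0:ℝ) < k - 1 := by linarith
  set ks : ℝ := k / (k - 1) with hksdef
  have hks1 : 1 < ks := (one_lt_div hk1).mpr (by linarith)
  have hks0 : 0 < ks := lt_trans one_pos hks1
  have hksm1 : 0 < ks - 1 := by linarith
  have hbase : (0:ℝ) < 1 + k * (k - 1) * δ := by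
    have := mul_pos (mul_pos hk0 hk1) hδ; linarith
  set c : ℝ := (1 + k * (k - 1) * δ) ^ (1 / k) with hcdef
  have hc0 : 0 < c := Real.rpow_pos_of_pos hbase _
  have hck : c ^ k = 1 + k * (k - 1) * δ := by
    rw [hcdef, ← Real.rpow_mul hbase.le, one_div, inv_mul_cancel₀ hk0.ne', Real.rpow_one]
  set W : Ω → ℝ := fun ω => max (α - Z ω) 0 ^ (ks - 1) with hWdef
  have hWmeas : Measurable W := ((measurable_const.sub hZmeas).max measurable_const).pow_const _
  have hWnn : ∀ ω, 0 ≤ W ω := fun ω => Real.rpow_nonneg (le_max_right _ _) _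
  have hmaxbd : ∀ᵐ ω ∂P, max (α - Z ω) 0 ≤ |α| := by
    filter_upwards [hZ] with ω hω
    rw [max_le_iff]
    exact ⟨by have := le_abs_self α; linarith [hω.1], abs_nonneg α⟩
  have hWbd : ∀ᵐ ω ∂P, ‖W ω‖ ≤ |α| ^ (ks - 1) := by
    filter_upwards [hmaxbd] with ω hω
    rw [Real.norm_eq_abs, abs_of_nonneg (hWnn ω)]
    exact Real.rpow_le_rpow (le_max_right _ _) hω hksm1.le
  have hWint : Integrable W P := (integrable_const _).mono' hWmeas.aestronglyMeasurable hWbd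
  set m : ℝ := ∫ ω, W ω ∂P with hmdef
  set h : ℝ := ∫ ω, max (α - Z ω) 0 ^ ks ∂P with hhdef
  have hh0 : 0 < h := hpos
  have hm0 : 0 < m := by
    by_contra hcon
    push_neg at hcon
    have h1 : c * m ≤ 0 := mul_nonpos_of_nonneg_of_nonpos hc0.le hcon
    have h2 : 0 < h ^ (1/k) := Real.rpow_pos_of_pos hh0 _
    rw [← hcm] at h2
    exact absurd h2 (not_lt.mpr h1)
  -- key algebraic identities
  have hmk : m ^ k = h / c ^ k := by
    have hm_eq : m = h ^ (1/k) / c := by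
      field_simp at hcm ⊢
      linarith [hcm]
    rw [hm_eq, Real.div_rpow (Real.rpow_nonneg hh0.le _) hc0.le,
      ← Real.rpow_mul hh0.le, one_div, inv_mul_cancel₀ hk0.ne', Real.rpow_one]
  have hmk0 : 0 < m ^ k := Real.rpow_pos_of_pos hm0 _
  set Lf : Ω → ℝ := fun ω => W ω / m with hLfdef
  have hLfmeas : Measurable Lf := hWmeas.div_const m
  have hLfnn : ∀ ω, 0 ≤ Lf ω := fun ω => div_nonneg (hWnn ω) hm0.le
  have hLfint : Integrable Lf P := hWint.div_const m
  have hLf1 : ∫ ω, Lf ω ∂P = 1 := by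
    have h1 : ∫ ω, Lf ω ∂P = ∫ ω, W ω / m ∂P := rfl
    rw [h1, integral_div, ← hmdef, div_self hm0.ne']
  -- the measure
  set Q : Measure Ω := P.withDensity (fun ω => ENNReal.ofReal (Lf ω)) with hQdef
  have hQP : Q ≪ P := withDensity_absolutelyContinuous _ _
  have hQprob : IsProbabilityMeasure Q := by
    constructor
    rw [hQdef, withDensity_apply _ MeasurableSet.univ, setLIntegral_univ,
      ← ofReal_integral_eq_lintegral_ofReal hLfint (Filter.Eventually.of_forall hLfnn), hLf1]
    simp
  have hrn : Q.rnDeriv P =ᵐ[P] fun ω => ENNReal.ofReal (Lf ω) :=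
    Measure.rnDeriv_withDensity P hLfmeas.ennreal_ofReal
  -- integrability of Lf ^ k
  have hLfk_bd : ∀ᵐ ω ∂P, ‖Lf ω ^ k‖ ≤ (|α| ^ (ks - 1) / m) ^ k := by
    filter_upwards [hWbd] with ω hω
    rw [Real.norm_eq_abs, abs_of_nonneg (Real.rpow_nonneg (hLfnn ω) _)]
    apply Real.rpow_le_rpow (hLfnn ω) _ hk0.le
    rw [Real.norm_eq_abs, abs_of_nonneg (hWnn ω)] at hω
    exact div_le_div_of_nonneg_right hω hm0.le
  have hLfk_int : Integrable (fun ω => Lf ω ^ k) P :=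
    (integrable_const _).mono' ((hLfmeas.pow_const k).aestronglyMeasurable) hLfk_bd
  -- value of ∫ Lf ^ k
  have hWk : ∀ ω, Lf ω ^ k = max (α - Z ω) 0 ^ ks / m ^ k := by
    intro ω
    have h1 : Lf ω = W ω / m := rfl
    have h2 : W ω = max (α - Z ω) 0 ^ (ks - 1) := rfl
    rw [h1, Real.div_rpow (hWnn ω) hm0.le, h2, ← Real.rpow_mul (le_max_right _ _)]
    congr 2
    rw [hksdef]
    first
    | (field_simp; ring)
    | field_simp
    | ring
  have hIk : ∫ ω, Lf ω ^ k ∂P = c ^ k := by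
    have : ∫ ω, Lf ω ^ k ∂P = ∫ ω, max (α - Z ω) 0 ^ ks / m ^ k ∂P :=
      integral_congr_ae (Filter.Eventually.of_forall hWk)
    rw [this, integral_div, ← hhdef, hmk]
    rw [div_div_eq_mul_div]
    rw [mul_comm]
    rw [mul_div_assoc]
    rw [div_self hh0.ne']
    rw [mul_one]
  -- crDiv value
  have hfCReq : ∀ ω, fCR k (Lf ω) = (Lf ω ^ k - k * Lf ω + k - 1) / (k * (k - 1)) := fun ω => rfl
  have hfCRint : Integrable (fun ω => fCR k (Lf ω)) P := by
    have hi1 : Integrable (fun ω => Lf ω ^ k - k * Lf ω) P := hLfk_int.sub (hLfint.const_mul k)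
    have hi2 : Integrable (fun ω => Lf ω ^ k - k * Lf ω + k) P := hi1.add (integrable_const k)
    have hi3 : Integrable (fun ω => Lf ω ^ k - k * Lf ω + k - 1) P := hi2.sub (integrable_const 1)
    exact (hi3.div_const _).congr (Filter.Eventually.of_forall fun ω => rfl)
  have hfCRval : ∫ ω, fCR k (Lf ω) ∂P = δ := by
    have h1 : ∫ ω, fCR k (Lf ω) ∂P
        = ((∫ ω, Lf ω ^ k ∂P) - k * (∫ ω, Lf ω ∂P) + k - 1) / (k * (k - 1)) := by
      rw [← integral_const_mul]
      have hint1 : Integrable (fun ω => Lf ω ^ k - k * Lf ω) P :=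
        hLfk_int.sub (hLfint.const_mul k)
      have h2 : ∫ ω, fCR k (Lf ω) ∂P
          = ∫ ω, (Lf ω ^ k - k * Lf ω + (k - 1)) / (k * (k - 1)) ∂P := by
        apply integral_congr_ae (Filter.Eventually.of_forall fun ω => ?_)
        rw [hfCReq ω]; ring_nf
      rw [h2, integral_div, integral_add hint1 (integrable_const _),
        integral_sub hLfk_int (hLfint.const_mul k), integral_const_mul, integral_const]
      simp only [measure_univ, ENNReal.toReal_one, smul_eq_mul, one_mul, probReal_univ]
      field_simp
      ring
    rw [h1, hIk, hLf1, hck]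
    first
    | (field_simp; ring)
    | field_simp
  have hdiv : crDiv k Q P ≤ ENNReal.ofReal δ := by
    unfold crDiv
    have h1 : ∫⁻ ω, ENNReal.ofReal (fCR k ((Q.rnDeriv P ω).toReal)) ∂P
        = ∫⁻ ω, ENNReal.ofReal (fCR k (Lf ω)) ∂P := by
      apply lintegral_congr_ae
      filter_upwards [hrn] with ω hω
      rw [hω, ENNReal.toReal_ofReal (hLfnn ω)]
    rw [h1, ← ofReal_integral_eq_lintegral_ofReal hfCRint
      (Filter.Eventually.of_forall fun ω => fCR_nonneg hk (hLfnn ω)), hfCRval]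
  -- value of ∫ Z dQ
  have hQZ : ∫ ω, Z ω ∂Q = ∫ ω, Lf ω * Z ω ∂P := by
    rw [← MeasureTheory.integral_rnDeriv_smul hQP (f := Z)]
    apply integral_congr_ae
    filter_upwards [hrn] with ω hω
    rw [hω, smul_eq_mul, ENNReal.toReal_ofReal (hLfnn ω)]
  have hpt : ∀ ω, Lf ω * Z ω = α * Lf ω - max (α - Z ω) 0 ^ ks / m := by
    intro ω
    have h1 : Lf ω = max (α - Z ω) 0 ^ (ks - 1) / m := rfl
    rcases le_or_gt (α - Z ω) 0 with hle | hlt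
    · rw [h1, max_eq_right hle, Real.zero_rpow hksm1.ne', Real.zero_rpow hks0.ne']
      simp
    · rw [h1, max_eq_left hlt.le]
      have hks_split : (α - Z ω) ^ ks = (α - Z ω) ^ (ks - 1) * (α - Z ω) := by
        nth_rewrite 1 [show ks = (ks - 1) + 1 by ring]
        rw [Real.rpow_add hlt, Real.rpow_one]
      rw [hks_split]
      field_simp
      ring
  have hZks_int : Integrable (fun ω => max (α - Z ω) 0 ^ ks) P := by
    refine (integrable_const (|α| ^ ks)).mono'
      (((measurable_const.sub hZmeas).max measurable_const).pow_const ks).aestronglyMeasurable ?_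
    filter_upwards [hmaxbd] with ω hω
    rw [Real.norm_eq_abs, abs_of_nonneg (Real.rpow_nonneg (le_max_right _ _) _)]
    exact Real.rpow_le_rpow (le_max_right _ _) hω hks0.le
  have hLfZ_int : Integrable (fun ω => Lf ω * Z ω) P := by
    have h2 : Integrable (fun ω => α * Lf ω - max (α - Z ω) 0 ^ ks / m) P :=
      (hLfint.const_mul α).sub (hZks_int.div_const m)
    exact h2.congr (Filter.Eventually.of_forall fun ω => (hpt ω).symm)
  have hIv : ∫ ω, Lf ω * Z ω ∂P = α - h / m := by
    rw [integral_congr_ae (Filter.Eventually.of_forall hpt),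
      integral_sub (hLfint.const_mul α) (hZks_int.div_const m), integral_const_mul, hLf1,
      mul_one, integral_div, ← hhdef]
  have hm_eq : m = h ^ (1/k) / c := by
    field_simp at hcm ⊢
    linarith [hcm]
  have hfinal : α - h / m = -c * h ^ ((k-1)/k) + α := by
    have hhk0 : (0:ℝ) < h ^ (1/k) := Real.rpow_pos_of_pos hh0 _
    have h3 : h ^ ((k-1)/k) = h / h ^ (1/k) := by
      rw [show (k-1)/k = 1 - 1/k by field_simp, Real.rpow_sub hh0, Real.rpow_one]
    rw [hm_eq, h3]
    field_simp
    ring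
  exact ⟨Q, hQprob, hQP, hdiv, by rw [hQZ, hIv, hfinal]⟩

lemma exists_feasible_zero {Ω : Type*} [MeasurableSpace Ω] (P : Measure Ω)
    [IsProbabilityMeasure P] (Z : Ω → ℝ) (hZmeas : Measurable Z)
    (k δ : ℝ) (hk : 1 < k) (hδ : 0 < δ) (α : ℝ)
    (hZge : ∀ᵐ ω ∂P, α ≤ Z ω)
    (hp : ENNReal.ofReal (((1 + k * (k - 1) * δ) ^ (1 / k)) ^ (-(k / (k - 1))))
      ≤ P {ω | Z ω ≤ α}) :
    ∃ Q : Measure Ω, IsProbabilityMeasure Q ∧ Q ≪ P ∧ crDiv k Q P ≤ ENNReal.ofReal δ ∧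
      ∫ ω, Z ω ∂Q = α := by
  have hk0 : (0:ℝ) < k := lt_trans one_pos hk
  have hk1 : (0:ℝ) < k - 1 := by linarith
  have hbase : (0:ℝ) < 1 + k * (k - 1) * δ := by
    have := mul_pos (mul_pos hk0 hk1) hδ; linarith
  set c : ℝ := (1 + k * (k - 1) * δ) ^ (1 / k) with hcdef
  have hc0 : 0 < c := Real.rpow_pos_of_pos hbase _
  have hck : c ^ k = 1 + k * (k - 1) * δ := by
    rw [hcdef, ← Real.rpow_mul hbase.le, one_div, inv_mul_cancel₀ hk0.ne', Real.rpow_one]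
  set A : Set Ω := {ω | Z ω ≤ α} with hAdef
  have hA : MeasurableSet A := hZmeas measurableSet_Iic
  set p : ℝ≥0∞ := P A with hpdef
  have hptop : p ≠ ⊤ := (measure_lt_top P A).ne
  have hcks0 : (0:ℝ) < c ^ (-(k / (k - 1))) := Real.rpow_pos_of_pos hc0 _
  have hp0 : p ≠ 0 := by
    intro h0
    rw [h0] at hp
    simp only [nonpos_iff_eq_zero, ENNReal.ofReal_eq_zero] at hp
    linarith
  set pr : ℝ := p.toReal with hprdef
  have hpr0 : 0 < pr := ENNReal.toReal_pos hp0 hptop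
  have hprge : c ^ (-(k / (k - 1))) ≤ pr := by
    have := ENNReal.toReal_mono hptop hp
    rwa [ENNReal.toReal_ofReal hcks0.le] at this
  have hprle : pr ≤ 1 := by
    have h1 : p ≤ 1 := prob_le_one
    have := ENNReal.toReal_mono ENNReal.one_ne_top h1
    simpa using this
  set Q : Measure Ω := p⁻¹ • P.restrict A with hQdef
  have hQuniv : Q Set.univ = 1 := by
    rw [hQdef, Measure.smul_apply, Measure.restrict_apply_univ, smul_eq_mul,
      ENNReal.inv_mul_cancel hp0 hptop]
  have hQprob : IsProbabilityMeasure Q := ⟨hQuniv⟩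
  have hQP : Q ≪ P := by
    refine Measure.AbsolutelyContinuous.mk fun s hs hPs => ?_
    rw [hQdef, Measure.smul_apply, Measure.restrict_apply hs]
    rw [measure_mono_null Set.inter_subset_left hPs, smul_zero]
  have hrn : Q.rnDeriv P =ᵐ[P] fun ω => p⁻¹ * A.indicator 1 ω := by
    have h1 : (P.restrict A).rnDeriv P =ᵐ[P] A.indicator 1 := Measure.rnDeriv_restrict_self P hA
    have h2 : Q.rnDeriv P =ᵐ[P] p⁻¹ • (P.restrict A).rnDeriv P :=
      Measure.rnDeriv_smul_left_of_ne_top (P.restrict A) P (ENNReal.inv_ne_top.mpr hp0)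
    filter_upwards [h1, h2] with ω hω1 hω2
    rw [hω2, Pi.smul_apply, hω1, smul_eq_mul]
  -- divergence bound
  have hdiv : crDiv k Q P ≤ ENNReal.ofReal δ := by
    unfold crDiv
    have h1 : ∀ᵐ ω ∂P, ENNReal.ofReal (fCR k ((Q.rnDeriv P ω).toReal))
        = A.indicator (fun _ => ENNReal.ofReal (fCR k pr⁻¹)) ω
          + Aᶜ.indicator (fun _ => ENNReal.ofReal (fCR k 0)) ω := by
      filter_upwards [hrn] with ω hω
      rw [hω]
      by_cases hmem : ω ∈ A
      · rw [Set.indicator_of_mem hmem, Set.indicator_of_mem hmem,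
          Set.indicator_of_notMem (by simpa using hmem), add_zero, Pi.one_apply, mul_one,
          ENNReal.toReal_inv, hprdef]
      · rw [Set.indicator_of_notMem hmem, Set.indicator_of_notMem hmem,
          Set.indicator_of_mem (by simpa using hmem), zero_add, mul_zero, ENNReal.toReal_zero]
    rw [lintegral_congr_ae h1, lintegral_add_left ((measurable_const).indicator hA),
      lintegral_indicator_const hA, lintegral_indicator_const hA.compl]
    have hcompl : P Aᶜ = ENNReal.ofReal (1 - pr) := by
      rw [measure_compl hA (measure_lt_top P A).ne, measure_univ, ← hpdef,
        ← ENNReal.ofReal_one, ← ENNReal.ofReal_toReal hptop, ← hprdef,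
        ← ENNReal.ofReal_sub _ hpr0.le]
    have hpeq : p = ENNReal.ofReal pr := (ENNReal.ofReal_toReal hptop).symm
    have hfCR0 : fCR k 0 = 1 / k := by
      unfold fCR
      rw [Real.zero_rpow hk0.ne']
      field_simp
      ring
    have hfCRnn1 : 0 ≤ fCR k pr⁻¹ := fCR_nonneg hk (by positivity)
    have hfCR0nn : 0 ≤ fCR k 0 := fCR_nonneg hk le_rfl
    rw [← hpdef, hpeq, hcompl, ← ENNReal.ofReal_mul hfCRnn1, ← ENNReal.ofReal_mul hfCR0nn,
      ← ENNReal.ofReal_add (mul_nonneg hfCRnn1 hpr0.le)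
        (mul_nonneg hfCR0nn (by linarith : (0:ℝ) ≤ 1 - pr))]
    apply ENNReal.ofReal_le_ofReal
    -- real inequality
    have hprk : pr * pr⁻¹ ^ k = pr ^ (1 - k) := by
      rw [Real.inv_rpow hpr0.le, ← Real.rpow_neg hpr0.le]
      nth_rewrite 1 [← Real.rpow_one pr]
      rw [← Real.rpow_add hpr0, show (1:ℝ) + -k = 1 - k by ring]
    have hkey : pr ^ (1 - k) ≤ c ^ k := by
      have h2 := Real.rpow_le_rpow_of_nonpos hcks0 hprge (by linarith : 1 - k ≤ 0)
      rwa [← Real.rpow_mul hc0.le, show -(k / (k - 1)) * (1 - k) = k by field_simp; ring] at h2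
    have hexp : fCR k pr⁻¹ * pr + fCR k 0 * (1 - pr) = (pr ^ (1 - k) - 1) / (k * (k - 1)) := by
      rw [hfCR0]
      unfold fCR
      rw [← hprk]
      field_simp
      ring
    rw [hexp]
    rw [div_le_iff₀ (by positivity)]
    nlinarith [hkey, hck]
  -- integral value
  have hIZ : ∫ ω, Z ω ∂Q = α := by
    rw [hQdef, integral_smul_measure]
    have h1 : ∫ ω in A, Z ω ∂P = ∫ _ω in A, α ∂P := by
      apply setIntegral_congr_ae hA
      filter_upwards [hZge] with ω hω hmem
      exact le_antisymm hmem hω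
    rw [h1, setIntegral_const, measureReal_def, ENNReal.toReal_inv, ← hpdef, ← hprdef, smul_eq_mul, smul_eq_mul]
    field_simp
  exact ⟨Q, hQprob, hQP, hdiv, hIZ⟩

/-- **Strong duality for Cressie–Read DRO evaluation:** for `k ∈ (1, ∞)`,
`k_* = k/(k−1)` and `c_k(δ) = (1 + k(k−1)δ)^{1/k}`,
`inf { E_Q[Z] : Q ≪ P, D_k(Q‖P) ≤ δ } = sup_α { −c_k(δ) E_P[((α−Z)_+)^{k_*}]^{1/k_*} + α }`. -/
theorem stmt13 {Ω : Type*} [MeasurableSpace Ω] (P : Measure Ω) [IsProbabilityMeasure P]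
    (Z : Ω → ℝ) (hZmeas : Measurable Z) (M : ℝ) (hZ : ∀ᵐ ω ∂P, Z ω ∈ Set.Icc 0 M)
    (k δ : ℝ) (hk : 1 < k) (hδ : 0 < δ) :
    sInf {r : ℝ | ∃ Q : Measure Ω, IsProbabilityMeasure Q ∧ Q ≪ P ∧
        crDiv k Q P ≤ ENNReal.ofReal δ ∧ r = ∫ ω, Z ω ∂Q}
      = sSup {r : ℝ | ∃ α : ℝ,
          r = -(1 + k * (k - 1) * δ) ^ (1 / k) *
              (∫ ω, (max (α - Z ω) 0) ^ (k / (k - 1)) ∂P) ^ ((k - 1) / k) + α} := by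
  have hk0 : (0:ℝ) < k := lt_trans one_pos hk
  have hk1 : (0:ℝ) < k - 1 := by linarith
  have hbase : (0:ℝ) < 1 + k * (k - 1) * δ := by
    have := mul_pos (mul_pos hk0 hk1) hδ; linarith
  have hZ0 : ∀ᵐ ω ∂P, 0 ≤ Z ω := hZ.mono fun ω hω => hω.1
  have hq0 : (0:ℝ) < (k - 1) / k := by positivity
  have hq1 : ((k:ℝ) - 1) / k ≠ 0 := hq0.ne'
  set ks : ℝ := k / (k - 1) with hksdef
  have hks1 : 1 < ks := (one_lt_div hk1).mpr (by linarith)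
  have hks0 : 0 < ks := lt_trans one_pos hks1
  set c : ℝ := (1 + k * (k - 1) * δ) ^ (1 / k) with hcdef
  have hc0 : 0 < c := Real.rpow_pos_of_pos hbase _
  have hck : c ^ k = 1 + k * (k - 1) * δ := by
    rw [hcdef, ← Real.rpow_mul hbase.le, one_div, inv_mul_cancel₀ hk0.ne', Real.rpow_one]
  have hc1 : 1 < c := by
    by_contra hcon
    push_neg at hcon
    have h1 : c ^ k ≤ 1 := Real.rpow_le_one hc0.le hcon hk0.le
    rw [hck] at h1
    have := mul_pos (mul_pos hk0 hk1) hδ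
    linarith
  -- M ≥ 0
  haveI : (MeasureTheory.ae P).NeBot := ae_neBot.mpr (IsProbabilityMeasure.ne_zero P)
  have hM0 : (0:ℝ) ≤ M := by
    obtain ⟨ω, hω⟩ := hZ.exists
    linarith [hω.1, hω.2]
  set h : ℝ → ℝ := fun a => ∫ ω, max (a - Z ω) 0 ^ ks ∂P with hhdef
  set m : ℝ → ℝ := fun a => ∫ ω, max (a - Z ω) 0 ^ (ks - 1) ∂P with hmdef
  set g : ℝ → ℝ := fun a => -c * h a ^ ((k - 1) / k) + a with hgdef
  have hder : ∀ a, HasDerivAt h (ks * m a) a := fun a =>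
    hasDerivAt_int_maxRpow P Z hZmeas hZ0 hks1 a
  have hcont : Continuous h := by
    rw [continuous_iff_continuousAt]
    exact fun a => (hder a).continuousAt
  have hgcont : Continuous g := by
    rw [hgdef]
    exact (continuous_const.mul (hcont.rpow_const fun x => Or.inr hq0.le)).add continuous_id
  have hh_nn : ∀ a, 0 ≤ h a := fun a =>
    integral_nonneg fun ω => Real.rpow_nonneg (le_max_right _ _) _
  have hint : ∀ a, Integrable (fun ω => max (a - Z ω) 0 ^ ks) P := by
    intro a
    refine (integrable_const (|a| ^ ks)).mono'
      (((measurable_const.sub hZmeas).max measurable_const).pow_const ks).aestronglyMeasurable ?_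
    filter_upwards [hZ0] with ω hω
    rw [Real.norm_eq_abs, abs_of_nonneg (Real.rpow_nonneg (le_max_right _ _) _)]
    apply Real.rpow_le_rpow (le_max_right _ _) _ hks0.le
    rw [max_le_iff]
    exact ⟨by have := le_abs_self a; linarith, abs_nonneg a⟩
  have hh_zero : ∀ a ≤ 0, h a = 0 := by
    intro a ha
    show ∫ ω, max (a - Z ω) 0 ^ ks ∂P = 0
    apply integral_eq_zero_of_ae
    filter_upwards [hZ0] with ω hω
    rw [max_eq_right (by linarith : a - Z ω ≤ 0), Real.zero_rpow hks0.ne']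
    rfl
  have hg_neg : ∀ a ≤ 0, g a = a := by
    intro a ha
    rw [hgdef]
    simp only [hh_zero a ha, Real.zero_rpow hq1, mul_zero, neg_mul, neg_zero, zero_add]
  have hg0 : g 0 = 0 := hg_neg 0 le_rfl
  -- upper bound for large a
  obtain ⟨B, hBdef⟩ : ∃ B : ℝ, B = (max (c * M / (c - 1)) M) + 1 := ⟨_, rfl⟩
  have hB0 : 0 < B := by
    have h20 : (0:ℝ) ≤ max (c * M / (c - 1)) M := le_trans hM0 (le_max_right _ _)
    rw [hBdef]; linarith
  have hgB : ∀ a, B ≤ a → g a ≤ 0 := by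
    intro a ha
    have haM : M < a := by
      have h21 := le_max_right (c * M / (c - 1)) M
      rw [hBdef] at ha
      linarith
    have hlb : (a - M) ^ ks ≤ h a := by
      rw [hhdef]
      have h2 : ∫ (_ : Ω), (a - M) ^ ks ∂P = (a - M) ^ ks := by
        rw [integral_const]; simp
      rw [← h2]
      apply integral_mono_ae (integrable_const _) (hint a)
      filter_upwards [hZ] with ω hω
      apply Real.rpow_le_rpow (by linarith) _ hks0.le
      rw [le_max_iff]; left; linarith [hω.2]
    have hlb2 : a - M ≤ h a ^ ((k - 1) / k) := by
      have h3 := Real.rpow_le_rpow (Real.rpow_nonneg (by linarith : (0:ℝ) ≤ a - M) ks) hlb hq0.le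
      rwa [← Real.rpow_mul (by linarith : (0:ℝ) ≤ a - M),
        show ks * ((k - 1) / k) = 1 by rw [hksdef]; field_simp, Real.rpow_one] at h3
    have h4 : g a ≤ -c * (a - M) + a := by
      rw [hgdef]
      simp only [neg_mul, add_le_add_iff_right, neg_le_neg_iff]
      exact mul_le_mul_of_nonneg_left hlb2 hc0.le
    have h5 : c * M / (c - 1) < a := by
      have h22 := le_max_left (c * M / (c - 1)) M
      rw [hBdef] at ha
      linarith
    have h6 : c * M < a * (c - 1) := by
      rw [div_lt_iff₀ (by linarith : (0:ℝ) < c - 1)] at h5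
      linarith
    nlinarith
  -- maximizer
  obtain ⟨α', hα'mem, hα'max⟩ := (isCompact_Icc (a := (0:ℝ)) (b := B)).exists_isMaxOn
    ⟨0, le_rfl, hB0.le⟩ hgcont.continuousOn
  have hmax : ∀ a, g a ≤ g α' := by
    intro a
    rcases le_or_gt a 0 with ha | ha
    · calc g a = a := hg_neg a ha
        _ ≤ 0 := ha
        _ = g 0 := hg0.symm
        _ ≤ g α' := hα'max ⟨le_rfl, hB0.le⟩
    · rcases le_or_gt a B with haB | haB
      · exact hα'max ⟨ha.le, haB⟩
      · calc g a ≤ 0 := hgB a haB.le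
          _ = g 0 := hg0.symm
          _ ≤ g α' := hα'max ⟨le_rfl, hB0.le⟩
  -- the feasible measure attaining the sup
  have hstrong : ∃ Q : Measure Ω, IsProbabilityMeasure Q ∧ Q ≪ P ∧
      crDiv k Q P ≤ ENNReal.ofReal δ ∧ ∫ ω, Z ω ∂Q = g α' := by
    by_cases hcase : h α' = 0
    · -- boundary case
      have hgval : g α' = α' := by
        rw [hgdef]
        simp only [hcase, Real.zero_rpow hq1, mul_zero, neg_mul, neg_zero, zero_add]
      have hae : ∀ᵐ ω ∂P, α' ≤ Z ω := by
        have h1 : ∀ᵐ ω ∂P, max (α' - Z ω) 0 ^ ks = 0 := by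
          have h2 := (integral_eq_zero_iff_of_nonneg_ae
            (Filter.Eventually.of_forall fun ω => Real.rpow_nonneg (le_max_right _ _) ks)
            (hint α')).mp hcase
          exact h2
        filter_upwards [h1] with ω hω
        by_contra hcon
        push_neg at hcon
        have h3 : max (α' - Z ω) 0 = α' - Z ω := max_eq_left (by linarith)
        rw [h3] at hω
        have h4 : (0:ℝ) < α' - Z ω := by linarith
        exact absurd hω (Real.rpow_pos_of_pos h4 ks).ne'
      -- measure lower bound via optimality
      have hpe : ∀ ε : ℝ, 0 < ε → c ^ (-ks) ≤ (P {ω | Z ω ≤ α' + ε}).toReal := by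
        intro ε hε
        set S : Set Ω := {ω | Z ω ≤ α' + ε} with hSdef
        have hS : MeasurableSet S := hZmeas measurableSet_Iic
        set pe : ℝ := (P S).toReal with hpedef
        have hpe_nn : 0 ≤ pe := ENNReal.toReal_nonneg
        -- h(α'+ε) ≤ ε^ks * pe
        have hub : h (α' + ε) ≤ ε ^ ks * pe := by
          rw [hhdef]
          have h5 : ∫ ω, S.indicator (fun _ => ε ^ ks) ω ∂P = ε ^ ks * pe := by
            rw [integral_indicator_const _ hS]
            simp [hpedef, mul_comm, measureReal_def]
          rw [← h5]
          apply integral_mono_ae (hint _) ((integrable_const _).indicator hS)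
          filter_upwards [hae] with ω hω
          by_cases hmem : ω ∈ S
          · rw [Set.indicator_of_mem hmem]
            apply Real.rpow_le_rpow (le_max_right _ _) _ hks0.le
            rw [max_le_iff]
            exact ⟨by linarith, hε.le⟩
          · rw [Set.indicator_of_notMem hmem]
            have h6 : α' + ε - Z ω < 0 := by
              simp only [hSdef, Set.mem_setOf_eq, not_le] at hmem
              linarith
            rw [max_eq_right h6.le, Real.zero_rpow hks0.ne']
        -- optimality
        have hopt : ε ≤ c * h (α' + ε) ^ ((k - 1) / k) := by
          have h7 := hmax (α' + ε)
          rw [hgval, hgdef] at h7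
          simp only [neg_mul] at h7
          linarith
        have h8 : h (α' + ε) ^ ((k - 1) / k) ≤ ε * pe ^ ((k - 1) / k) := by
          have h9 := Real.rpow_le_rpow (hh_nn _) hub hq0.le
          rwa [Real.mul_rpow (Real.rpow_nonneg hε.le _) hpe_nn,
            ← Real.rpow_mul hε.le, show ks * ((k - 1) / k) = 1 by rw [hksdef]; field_simp,
            Real.rpow_one] at h9
        have h10 : 1 ≤ c * pe ^ ((k - 1) / k) := by
          have h11 : ε ≤ c * (ε * pe ^ ((k - 1) / k)) :=
            le_trans hopt (mul_le_mul_of_nonneg_left h8 hc0.le)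
          have h12 : ε * 1 ≤ ε * (c * pe ^ ((k - 1) / k)) := by nlinarith
          exact le_of_mul_le_mul_left h12 hε
        -- conclude pe ≥ c^(-ks)
        have h13 : c⁻¹ ≤ pe ^ ((k - 1) / k) := by
          rw [inv_le_iff_one_le_mul₀ hc0]
          linarith [h10]
        have h14 := Real.rpow_le_rpow (by positivity) h13 (le_of_lt hks0)
        rwa [Real.inv_rpow hc0.le, ← Real.rpow_neg hc0.le, ← Real.rpow_mul hpe_nn,
          show (k - 1) / k * ks = 1 by rw [hksdef]; field_simp, Real.rpow_one] at h14
      -- limit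
      have hplim : ENNReal.ofReal (c ^ (-ks)) ≤ P {ω | Z ω ≤ α'} := by
        set s : ℕ → Set Ω := fun n => {ω | Z ω ≤ α' + 1 / (n + 1)} with hsdef
        have hsm : ∀ n : ℕ, NullMeasurableSet (s n) P := fun n =>
          (hZmeas measurableSet_Iic).nullMeasurableSet
        have hanti : Antitone s := by
          intro i j hij ω hω
          simp only [hsdef, Set.mem_setOf_eq] at hω ⊢
          have hij' : ((i:ℝ) + 1) ≤ ((j:ℝ) + 1) := by
            have : (i:ℝ) ≤ (j:ℝ) := Nat.cast_le.mpr hij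
            linarith
          have h17 : (1:ℝ) / (j + 1) ≤ 1 / (i + 1) :=
            one_div_le_one_div_of_le (by positivity) hij'
          linarith
        have hiInter : ⋂ n, s n = {ω | Z ω ≤ α'} := by
          ext ω
          simp only [Set.mem_iInter, hsdef, Set.mem_setOf_eq]
          constructor
          · intro hall
            by_contra hcon
            push_neg at hcon
            obtain ⟨n, hn⟩ := exists_nat_one_div_lt (by linarith : (0:ℝ) < Z ω - α')
            have := hall n
            linarith
          · intro h1 n
            have : 0 < 1 / ((n:ℝ) + 1) := by positivity
            linarith
        have htend := tendsto_measure_iInter_atTop hsm hanti ⟨0, (measure_lt_top P _).ne⟩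
        rw [hiInter] at htend
        refine ge_of_tendsto htend (Filter.Eventually.of_forall fun n => ?_)
        have h16 := hpe (1 / (n + 1)) (by positivity)
        calc ENNReal.ofReal (c ^ (-ks)) ≤ ENNReal.ofReal ((P {ω | Z ω ≤ α' + 1 / (n + 1)}).toReal) :=
              ENNReal.ofReal_le_ofReal h16
          _ = P {ω | Z ω ≤ α' + 1 / (n + 1)} := ENNReal.ofReal_toReal (measure_lt_top P _).ne
      obtain ⟨Q, hQ1, hQ2, hQ3, hQ4⟩ := exists_feasible_zero P Z hZmeas k δ hk hδ α' hae hplim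
      exact ⟨Q, hQ1, hQ2, hQ3, by rw [hQ4, hgval]⟩
    · -- interior case
      have hpos : 0 < h α' := lt_of_le_of_ne (hh_nn α') (Ne.symm hcase)
      have hloc : IsLocalMax g α' := Filter.Eventually.of_forall fun x => hmax x
      have hd1 : HasDerivAt (fun a => h a ^ ((k - 1) / k))
          ((ks * m α') * ((k - 1) / k) * h α' ^ ((k - 1) / k - 1)) α' :=
        (hder α').rpow_const (Or.inl hcase)
      have hd2 : HasDerivAt g
          (-c * ((ks * m α') * ((k - 1) / k) * h α' ^ ((k - 1) / k - 1)) + 1) α' := by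
        have h15 := (hd1.const_mul (-c)).add (hasDerivAt_id α')
        exact h15
      have h0 := hloc.hasDerivAt_eq_zero hd2
      -- derive c * m α' = h α' ^ (1/k)
      have hexp : (k - 1) / k - 1 = -(1 / k) := by field_simp; ring
      have hmm : ks * m α' * ((k - 1) / k) = m α' := by
        rw [hksdef]
        first
        | (field_simp; ring)
        | field_simp
      have h2 : c * m α' * h α' ^ (-(1 / k)) = 1 := by
        rw [hexp] at h0
        first
        | linear_combination (-1 : ℝ) * h0 - c * h α' ^ (-(1 / k)) * hmm
        | linear_combination (-1 : ℝ) * h0 + c * h α' ^ (-(1 / k)) * hmm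
        | linear_combination h0 - c * h α' ^ (-(1 / k)) * hmm
        | linear_combination h0 + c * h α' ^ (-(1 / k)) * hmm
      have h3 : h α' ^ (-(1 / k)) * h α' ^ (1 / k) = 1 := by
        rw [← Real.rpow_add hpos]
        norm_num
      have hcm : c * m α' = h α' ^ (1 / k) := by
        calc c * m α' = c * m α' * (h α' ^ (-(1 / k)) * h α' ^ (1 / k)) := by rw [h3, mul_one]
          _ = c * m α' * h α' ^ (-(1 / k)) * h α' ^ (1 / k) := by ring
          _ = 1 * h α' ^ (1 / k) := by rw [h2]
          _ = h α' ^ (1 / k) := one_mul _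
      obtain ⟨Q, hQ1, hQ2, hQ3, hQ4⟩ :=
        exists_feasible_pos P Z hZmeas M hZ k δ hk hδ α' hpos hcm
      exact ⟨Q, hQ1, hQ2, hQ3, hQ4⟩
  -- conclude
  obtain ⟨Qs, hQs1, hQs2, hQs3, hQs4⟩ := hstrong
  have hSne : {r : ℝ | ∃ Q : Measure Ω, IsProbabilityMeasure Q ∧ Q ≪ P ∧
      crDiv k Q P ≤ ENNReal.ofReal δ ∧ r = ∫ ω, Z ω ∂Q}.Nonempty :=
    ⟨∫ ω, Z ω ∂Qs, Qs, hQs1, hQs2, hQs3, rfl⟩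
  have hTne : {r : ℝ | ∃ α : ℝ, r = -c * (∫ ω, (max (α - Z ω) 0) ^ ks ∂P) ^ ((k - 1) / k)
      + α}.Nonempty := ⟨g α', α', rfl⟩
  have hub : ∀ r ∈ {r : ℝ | ∃ α : ℝ,
      r = -c * (∫ ω, (max (α - Z ω) 0) ^ ks ∂P) ^ ((k - 1) / k) + α}, r ≤ g α' := by
    rintro r ⟨a, rfl⟩
    exact hmax a
  have hsSup : sSup {r : ℝ | ∃ α : ℝ,
      r = -c * (∫ ω, (max (α - Z ω) 0) ^ ks ∂P) ^ ((k - 1) / k) + α} = g α' :=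
    le_antisymm (csSup_le hTne hub) (le_csSup ⟨g α', hub⟩ ⟨α', rfl⟩)
  have hweak : ∀ s ∈ {r : ℝ | ∃ Q : Measure Ω, IsProbabilityMeasure Q ∧ Q ≪ P ∧
      crDiv k Q P ≤ ENNReal.ofReal δ ∧ r = ∫ ω, Z ω ∂Q},
      ∀ r ∈ {r : ℝ | ∃ α : ℝ,
      r = -c * (∫ ω, (max (α - Z ω) 0) ^ ks ∂P) ^ ((k - 1) / k) + α}, r ≤ s := by
    rintro s ⟨Q, hQ1, hQ2, hQ3, rfl⟩ r ⟨a, rfl⟩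
    haveI := hQ1
    exact weak_dual P Z hZmeas M hZ k δ hk hδ Q hQ2 hQ3 a
  have hSbdd : BddBelow {r : ℝ | ∃ Q : Measure Ω, IsProbabilityMeasure Q ∧ Q ≪ P ∧
      crDiv k Q P ≤ ENNReal.ofReal δ ∧ r = ∫ ω, Z ω ∂Q} := by
    refine ⟨g α', fun s hs => ?_⟩
    exact hweak s hs (g α') ⟨α', rfl⟩
  apply le_antisymm
  · calc sInf {r : ℝ | ∃ Q : Measure Ω, IsProbabilityMeasure Q ∧ Q ≪ P ∧
        crDiv k Q P ≤ ENNReal.ofReal δ ∧ r = ∫ ω, Z ω ∂Q}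
        ≤ ∫ ω, Z ω ∂Qs := csInf_le hSbdd ⟨Qs, hQs1, hQs2, hQs3, rfl⟩
      _ = g α' := hQs4
      _ = sSup _ := hsSup.symm
  · exact le_csInf hSne fun s hs => csSup_le hTne fun r hr => hweak s hs r hr
end

section
/- Let k ∈ [1, ∞), δ > 0, set k_* = k/(k−1) (with k_* = ∞ interpreted as the essential supremum norm when k = 1) and c_k(δ) = (1 + k(k−1)δ)^{1/k}, and let P1, P2 be probability measures on ℝ supported on [0, ∞). Then | sup_{α ∈ ℝ} { −c_k(δ) (E_{P1}[((α − Y)_+)^{k_*}])^{1/k_*} + α } − sup_{α ∈ ℝ} { −c_k(δ) (E_{P2}[((α − Y)_+)^{k_*}])^{1/k_*} + α } | ≤ c_k(δ) · sup_{t ∈ [0,1]} | q_{P1}(t) − q_{P2}(t) |, where Y denotes the identity random variable under each measure. -/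
open MeasureTheory Real Set
open scoped ENNReal

/-- The Cressie–Read constant `c_k(δ) = (1 + k(k−1)δ)^{1/k}`. -/
noncomputable def ckCR (k δ : ℝ) : ℝ := (1 + k * (k - 1) * δ) ^ (1 / k)

/-- The Cressie–Read DRO dual value
`sup_{α ∈ ℝ} { −c_k(δ) (E_P[((α − Y)_+)^{k_*}])^{1/k_*} + α }` with `k_* = k/(k−1)`;
for `k = 1` the `k_* = ∞` case is interpreted via the essential supremum norm. -/
noncomputable def dualValueCR (k δ : ℝ) (P : Measure ℝ) : ℝ :=
  sSup {r : ℝ | ∃ α : ℝ,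
    r = -ckCR k δ *
        (if k = 1 then essSup (fun y : ℝ => max (α - y) 0) P
         else (∫ y, (max (α - y) 0) ^ (k / (k - 1)) ∂P) ^ ((k - 1) / k)) + α}

namespace QAux

open ProbabilityTheory Filter
open scoped Topology

variable {P : Measure ℝ} [IsProbabilityMeasure P] {t : ℝ}

lemma quantile_eq (P : Measure ℝ) [IsProbabilityMeasure P] (t : ℝ) :
    quantile P t = sInf {x : ℝ | t ≤ cdf P x} := by
  unfold quantile
  congr 1
  ext x
  simp [cdf_eq_real, measureReal_def]

lemma qset_nonempty (ht1 : t < 1) : {x : ℝ | t ≤ cdf P x}.Nonempty := by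
  rcases ((tendsto_cdf_atTop P).eventually_const_le ht1).exists with ⟨x, hx⟩
  exact ⟨x, hx⟩

lemma qset_bddBelow (ht : 0 < t) : BddBelow {x : ℝ | t ≤ cdf P x} := by
  rcases eventually_atBot.mp ((tendsto_cdf_atBot P).eventually_lt_const ht) with ⟨x0, hx0⟩
  refine ⟨x0, fun x hx => ?_⟩
  by_contra h
  exact absurd hx (not_le_of_gt (hx0 x (le_of_not_ge (fun h' => h h'))))

lemma le_cdf_quantile (ht1 : t < 1) : t ≤ cdf P (quantile P t) := by
  rw [quantile_eq]
  set S := {x : ℝ | t ≤ cdf P x} with hS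
  have htd : Tendsto (cdf P) (𝓝[>] (sInf S)) (𝓝 (cdf P (sInf S))) :=
    ((cdf P).right_continuous (sInf S)).mono_left (nhdsWithin_mono _ Ioi_subset_Ici_self)
  refine ge_of_tendsto htd ?_
  refine eventually_nhdsWithin_of_forall (fun x hx => ?_)
  rcases exists_lt_of_csInf_lt (qset_nonempty ht1) hx with ⟨s, hs, hsx⟩
  exact le_trans hs (monotone_cdf P hsx.le)

lemma quantile_le_iff (ht : 0 < t) (ht1 : t < 1) {x : ℝ} :
    quantile P t ≤ x ↔ t ≤ cdf P x := by
  constructor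
  · intro h
    exact le_trans (le_cdf_quantile ht1) (monotone_cdf P h)
  · intro h
    rw [quantile_eq]
    exact csInf_le (qset_bddBelow ht) h

lemma quantile_monotoneOn : MonotoneOn (quantile P) (Ioo (0:ℝ) 1) := by
  intro t ht t' ht' h
  rw [quantile_eq, quantile_eq]
  exact csInf_le_csInf (qset_bddBelow ht.1) (qset_nonempty ht'.2)
    (fun x hx => le_trans h hx)

lemma aemeasurable_quantile (P : Measure ℝ) [IsProbabilityMeasure P] :
    AEMeasurable (quantile P) (volume.restrict (Ioo (0:ℝ) 1)) :=
  aemeasurable_restrict_of_monotoneOn measurableSet_Ioo quantile_monotoneOn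

lemma map_quantile (P : Measure ℝ) [IsProbabilityMeasure P] :
    Measure.map (quantile P) (volume.restrict (Ioo (0:ℝ) 1)) = P := by
  have hq := aemeasurable_quantile P
  have hfin : IsFiniteMeasure (Measure.map (quantile P) (volume.restrict (Ioo (0:ℝ) 1))) := by
    constructor
    rw [Measure.map_apply_of_aemeasurable hq MeasurableSet.univ]
    exact lt_of_le_of_lt (measure_mono (subset_univ _))
      (by simp [Real.volume_Ioo])
  refine Measure.ext_of_Iic _ _ (fun x => ?_)
  rw [Measure.map_apply_of_aemeasurable hq measurableSet_Iic,
    Measure.restrict_apply' measurableSet_Ioo]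
  have hset : quantile P ⁻¹' Iic x ∩ Ioo 0 1 = Iic (cdf P x) ∩ Ioo 0 1 := by
    ext t
    simp only [mem_inter_iff, mem_preimage, mem_Iic, mem_Ioo]
    constructor
    · rintro ⟨h, h0, h1⟩
      exact ⟨(quantile_le_iff h0 h1).mp h, h0, h1⟩
    · rintro ⟨h, h0, h1⟩
      exact ⟨(quantile_le_iff h0 h1).mpr h, h0, h1⟩
  rw [hset, ← ofReal_cdf]
  rcases lt_or_ge (cdf P x) 1 with h1 | h1
  · have : Iic (cdf P x) ∩ Ioo 0 1 = Ioc 0 (cdf P x) := by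
      ext t
      simp only [mem_inter_iff, mem_Iic, mem_Ioo, mem_Ioc]
      exact ⟨fun ⟨h, h0, _⟩ => ⟨h0, h⟩, fun ⟨h0, h⟩ => ⟨h, h0, lt_of_le_of_lt h h1⟩⟩
    rw [this, Real.volume_Ioc, sub_zero]
  · have hc : cdf P x = 1 := le_antisymm (cdf_le_one _ _) h1
    rw [hc]
    have : Iic (1:ℝ) ∩ Ioo 0 1 = Ioo 0 1 := by
      ext t; simp only [mem_inter_iff, mem_Iic, mem_Ioo]
      exact ⟨fun h => h.2, fun h => ⟨h.2.le, h⟩⟩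
    rw [this, Real.volume_Ioo]
    norm_num

lemma quantile_nonneg (hP : P (Iio 0) = 0) (ht : 0 < t) (ht1 : t < 1) :
    0 ≤ quantile P t := by
  rw [quantile_eq]
  refine le_csInf (qset_nonempty ht1) (fun x hx => ?_)
  by_contra h
  push_neg at h
  have : cdf P x = 0 := by
    rw [cdf_eq_real, measureReal_def]
    have : P (Iic x) = 0 :=
      le_antisymm (le_trans (measure_mono (fun y hy => lt_of_le_of_lt hy h)) hP.le) zero_le
    simp [this]
  simp only [mem_setOf_eq, this] at hx
  exact absurd hx (not_le_of_gt ht)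

lemma essSup_comp (g : ℝ → ℝ) (hg : Measurable g) :
    essSup g P = essSup (fun t => g (quantile P t)) (volume.restrict (Ioo (0:ℝ) 1)) := by
  conv_lhs => rw [← map_quantile P]
  rw [essSup_eq_sInf, essSup_eq_sInf]
  congr 1
  ext a
  simp only [mem_setOf_eq]
  rw [show {x | a < g x} = g ⁻¹' Ioi a from rfl,
    Measure.map_apply_of_aemeasurable (aemeasurable_quantile P) (hg measurableSet_Ioi)]
  rfl

lemma integral_comp (g : ℝ → ℝ) (hg : AEStronglyMeasurable g P) :
    ∫ y, g y ∂P = ∫ t in Ioo (0:ℝ) 1, g (quantile P t) := by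
  conv_lhs => rw [← map_quantile P]
  exact integral_map (aemeasurable_quantile P) (by rw [map_quantile]; exact hg)

lemma integrable_comp (g : ℝ → ℝ) (hg : AEStronglyMeasurable g P)
    (hgi : Integrable g P) :
    Integrable (fun t => g (quantile P t)) (volume.restrict (Ioo (0:ℝ) 1)) :=
  (integrable_map_measure (by rw [map_quantile]; exact hg)
    (aemeasurable_quantile P)).mp (by rw [map_quantile]; exact hgi)

lemma ckCR_one (δ : ℝ) : ckCR 1 δ = 1 := by
  simp [ckCR]

lemma one_le_ckCR {k δ : ℝ} (hk : 1 ≤ k) (hδ : 0 < δ) : 1 ≤ ckCR k δ := by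
  have h1 : (1:ℝ) ≤ 1 + k * (k - 1) * δ := by
    nlinarith [mul_nonneg (mul_nonneg (by linarith : (0:ℝ) ≤ k)
      (by linarith : (0:ℝ) ≤ k - 1)) hδ.le]
  have h2 : (0:ℝ) ≤ 1 / k := by positivity
  calc (1:ℝ) = 1 ^ (1/k) := (Real.one_rpow _).symm
  _ ≤ (1 + k * (k - 1) * δ) ^ (1/k) := Real.rpow_le_rpow (by norm_num) h1 h2

lemma one_lt_ckCR {k δ : ℝ} (hk : 1 < k) (hδ : 0 < δ) : 1 < ckCR k δ := by
  have h1 : (1:ℝ) < 1 + k * (k - 1) * δ := by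
    nlinarith [mul_pos (mul_pos (by linarith : (0:ℝ) < k)
      (by linarith : (0:ℝ) < k - 1)) hδ]
  have h2 : (0:ℝ) < 1 / k := by positivity
  exact (Real.one_lt_rpow_iff_of_pos (by linarith)).mpr (Or.inl ⟨h1, h2⟩)

lemma continuous_g (β p : ℝ) (hp : 0 ≤ p) :
    Continuous (fun y : ℝ => (max (β - y) 0) ^ p) :=
  ((continuous_const.sub continuous_id).max continuous_const).rpow_const
    (fun _ => Or.inr hp)

lemma ae_nonneg (hP : P (Iio 0) = 0) : ∀ᵐ y ∂P, 0 ≤ y := by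
  rw [ae_iff]
  convert hP using 2
  ext y; simp [not_le, mem_Iio]

lemma integrable_g (P : Measure ℝ) [IsProbabilityMeasure P] (hP : P (Iio 0) = 0)
    (β p : ℝ) (hp : 0 ≤ p) :
    Integrable (fun y : ℝ => (max (β - y) 0) ^ p) P := by
  refine Integrable.mono' (integrable_const ((max β 0) ^ p))
    (continuous_g β p hp).aestronglyMeasurable ?_
  filter_upwards [ae_nonneg hP] with y hy
  rw [Real.norm_eq_abs, abs_of_nonneg (Real.rpow_nonneg (le_max_right _ _) _)]
  exact Real.rpow_le_rpow (le_max_right _ _) (max_le_max (by linarith) le_rfl) hp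

/-- Monotonicity of `essSup` over `volume.restrict (Ioo 0 1)`. -/
lemma essSup_le_essSup {f g : ℝ → ℝ} (hf0 : ∀ t, 0 ≤ f t) (B : ℝ)
    (hgB : ∀ t ∈ Ioo (0:ℝ) 1, g t ≤ B) (hfg : ∀ t ∈ Ioo (0:ℝ) 1, f t ≤ g t) :
    essSup f (volume.restrict (Ioo (0:ℝ) 1)) ≤ essSup g (volume.restrict (Ioo (0:ℝ) 1)) := by
  rw [essSup_eq_sInf, essSup_eq_sInf]
  have hres : ∀ (A : Set ℝ), (volume.restrict (Ioo (0:ℝ) 1)) A = volume (A ∩ Ioo 0 1) :=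
    fun A => Measure.restrict_apply' measurableSet_Ioo
  refine csInf_le_csInf ?_ ?_ ?_
  · refine ⟨0, fun a ha => ?_⟩
    by_contra h
    push_neg at h
    have huniv : {x | a < f x} = univ := eq_univ_of_forall (fun x => lt_of_lt_of_le h (hf0 x))
    rw [mem_setOf_eq, huniv, hres] at ha
    simp [Real.volume_Ioo] at ha
  · refine ⟨B, ?_⟩
    rw [mem_setOf_eq, hres]
    have : {x | B < g x} ∩ Ioo 0 1 = ∅ :=
      eq_empty_iff_forall_notMem.mpr
        (fun x hx => absurd hx.1 (not_lt_of_ge (hgB x hx.2)))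
    rw [this]
    exact measure_empty
  · intro a ha
    rw [mem_setOf_eq, hres] at ha ⊢
    refine measure_mono_null (fun x hx => ?_) ha
    exact ⟨lt_of_lt_of_le hx.1 (hfg x hx.2), hx.2⟩

set_option maxHeartbeats 1000000 in
/-- Comparison of the two inner functionals under a uniform quantile shift. -/
lemma NN_le {k : ℝ} (hk : 1 ≤ k) (P1 P2 : Measure ℝ)
    [IsProbabilityMeasure P1] [IsProbabilityMeasure P2]
    (hP1 : P1 (Iio 0) = 0) (hP2 : P2 (Iio 0) = 0) (D : ℝ)
    (hD : ∀ t ∈ Ioo (0:ℝ) 1, quantile P1 t ≤ quantile P2 t + D) (α : ℝ) :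
    (if k = 1 then essSup (fun y : ℝ => max ((α - D) - y) 0) P2
     else (∫ y, (max ((α - D) - y) 0) ^ (k / (k - 1)) ∂P2) ^ ((k - 1) / k))
    ≤ (if k = 1 then essSup (fun y : ℝ => max (α - y) 0) P1
     else (∫ y, (max (α - y) 0) ^ (k / (k - 1)) ∂P1) ^ ((k - 1) / k)) := by
  by_cases hk1 : k = 1
  · simp only [if_pos hk1]
    have hcont : ∀ β : ℝ, Measurable (fun y : ℝ => max (β - y) 0) :=
      fun β => ((continuous_const.sub continuous_id).max continuous_const).measurable
    rw [essSup_comp _ (hcont (α - D)), essSup_comp _ (hcont α)]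
    refine essSup_le_essSup (fun t => le_max_right _ _) (max α 0)
      (fun t ht => ?_) (fun t ht => ?_)
    · exact max_le_max (by linarith [quantile_nonneg hP1 ht.1 ht.2]) le_rfl
    · exact max_le_max (by linarith [hD t ht]) le_rfl
  · have hk' : 1 < k := lt_of_le_of_ne hk (Ne.symm hk1)
    simp only [if_neg hk1]
    have hp0 : 0 < k / (k - 1) := div_pos (by linarith) (by linarith)
    have he0 : 0 ≤ (k - 1) / k := div_nonneg (by linarith) (by linarith)
    refine Real.rpow_le_rpow
      (integral_nonneg (fun y => Real.rpow_nonneg (le_max_right _ _) _)) ?_ he0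
    rw [integral_comp _ (continuous_g (α - D) _ hp0.le).aestronglyMeasurable,
      integral_comp _ (continuous_g α _ hp0.le).aestronglyMeasurable]
    have hi2 : Integrable (fun t => (max ((α - D) - quantile P2 t) 0) ^ (k / (k - 1)))
        (volume.restrict (Ioo (0:ℝ) 1)) :=
      integrable_comp (P := P2) (fun y : ℝ => (max ((α - D) - y) 0) ^ (k / (k - 1)))
        (continuous_g (α - D) _ hp0.le).aestronglyMeasurable
        (integrable_g P2 hP2 (α - D) _ hp0.le)
    have hi1 : Integrable (fun t => (max (α - quantile P1 t) 0) ^ (k / (k - 1)))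
        (volume.restrict (Ioo (0:ℝ) 1)) :=
      integrable_comp (P := P1) (fun y : ℝ => (max (α - y) 0) ^ (k / (k - 1)))
        (continuous_g α _ hp0.le).aestronglyMeasurable
        (integrable_g P1 hP1 α _ hp0.le)
    refine integral_mono_ae hi2 hi1 ?_
    rw [EventuallyLE, ae_restrict_iff' measurableSet_Ioo]
    refine ae_of_all _ (fun t ht => ?_)
    exact Real.rpow_le_rpow (le_max_right _ _)
      (max_le_max (by linarith [hD t ht]) le_rfl) hp0.le

/-- The defining set of `dualValueCR` is bounded above. -/
lemma bddAbove_dual {k δ : ℝ} (hk : 1 ≤ k) (hδ : 0 < δ) (P : Measure ℝ)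
    [IsProbabilityMeasure P] (hP : P (Iio 0) = 0) :
    BddAbove {r : ℝ | ∃ α : ℝ,
      r = -ckCR k δ *
          (if k = 1 then essSup (fun y : ℝ => max (α - y) 0) P
           else (∫ y, (max (α - y) 0) ^ (k / (k - 1)) ∂P) ^ ((k - 1) / k)) + α} := by
  by_cases hk1 : k = 1
  · obtain ⟨M, hM⟩ := ((tendsto_cdf_atTop P).eventually_const_lt zero_lt_one).exists
    refine ⟨M, fun r hr => ?_⟩
    obtain ⟨α, rfl⟩ := hr
    rw [if_pos hk1, hk1, ckCR_one]
    set E := essSup (fun y : ℝ => max (α - y) 0) P with hE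
    have hES : E = sInf {a : ℝ | P {y | a < max (α - y) 0} = 0} := essSup_eq_sInf P _
    have hne : (max α 0) ∈ {a : ℝ | P {y | a < max (α - y) 0} = 0} := by
      refine measure_mono_null (fun y hy => ?_) hP
      simp only [mem_setOf_eq] at hy
      by_contra h
      simp only [mem_Iio, not_lt] at h
      exact absurd hy (not_lt_of_ge (max_le_max (by linarith) le_rfl))
    have hE0 : 0 ≤ E := by
      rw [hES]
      refine le_csInf ⟨_, hne⟩ (fun a ha => ?_)
      by_contra h
      push_neg at h
      simp only [mem_setOf_eq] at ha
      have : {y : ℝ | a < max (α - y) 0} = univ :=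
        eq_univ_of_forall (fun y => lt_of_lt_of_le h (le_max_right _ _))
      rw [this] at ha
      simp at ha
    have hEαM : α - M ≤ E := by
      rw [hES]
      refine le_csInf ⟨_, hne⟩ (fun a ha => ?_)
      by_contra h
      push_neg at h
      simp only [mem_setOf_eq] at ha
      have hsub : Iic M ⊆ {y : ℝ | a < max (α - y) 0} := fun y hy =>
        lt_of_lt_of_le h (le_trans (by simp only [mem_Iic] at hy; linarith) (le_max_left _ _))
      have : P (Iic M) = 0 := measure_mono_null hsub ha
      rw [cdf_eq_real, measureReal_def, this] at hM
      simp at hM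
    rcases le_or_gt α M with h | h
    · linarith
    · linarith
  · have hk' : 1 < k := lt_of_le_of_ne hk (Ne.symm hk1)
    set c := ckCR k δ with hcdef
    have hc1 : 1 < c := one_lt_ckCR hk' hδ
    have hc0 : 0 < c := by linarith
    set p := k / (k - 1) with hpdef
    set e := (k - 1) / k with hedef
    have hp0 : 0 < p := div_pos (by linarith) (by linarith)
    have he0 : 0 ≤ e := div_nonneg (by linarith) (by linarith)
    have hpe : p * e = 1 := by
      rw [hpdef, hedef, div_mul_div_comm, mul_comm k (k - 1)]
      exact div_self (ne_of_gt (mul_pos (by linarith) (by linarith)))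
    have hθ1 : (1/c) ^ p < 1 :=
      Real.rpow_lt_one (by positivity) (by rw [div_lt_one hc0]; exact hc1) hp0
    obtain ⟨M, hM⟩ := ((tendsto_cdf_atTop P).eventually_const_lt hθ1).exists
    refine ⟨M, fun r hr => ?_⟩
    obtain ⟨α, rfl⟩ := hr
    rw [if_neg hk1]
    set I := ∫ y, (max (α - y) 0) ^ p ∂P with hI
    have hI0 : 0 ≤ I :=
      integral_nonneg (fun y => Real.rpow_nonneg (le_max_right _ _) _)
    have hIe0 : 0 ≤ I ^ e := Real.rpow_nonneg hI0 _
    rcases le_or_gt α M with h | h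
    · nlinarith
    · have hαM : 0 ≤ α - M := by linarith
      have hIlb : (α - M) ^ p * cdf P M ≤ I := by
        have hind : Integrable ((Iic M).indicator (fun _ : ℝ => (α - M) ^ p)) P :=
          (integrable_const _).indicator measurableSet_Iic
        have hmono := integral_mono hind (integrable_g P hP α p hp0.le) (fun y => ?_)
        · rwa [integral_indicator_const _ measurableSet_Iic, smul_eq_mul,
            ← cdf_eq_real, mul_comm] at hmono
        · by_cases hy : y ∈ Iic M
          · rw [indicator_of_mem hy]
            simp only [mem_Iic] at hy
            exact Real.rpow_le_rpow hαM
              (le_trans (by linarith) (le_max_left _ _)) hp0.le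
          · rw [indicator_of_notMem hy]
            exact Real.rpow_nonneg (le_max_right _ _) _
      have h2 : (α - M) * (1/c) ≤ I ^ e := by
        have hcdf0 : 0 ≤ cdf P M := cdf_nonneg _ _
        have step1 : ((α - M) ^ p * cdf P M) ^ e ≤ I ^ e :=
          Real.rpow_le_rpow (mul_nonneg (Real.rpow_nonneg hαM _) hcdf0) hIlb he0
        refine le_trans ?_ step1
        rw [Real.mul_rpow (Real.rpow_nonneg hαM _) hcdf0,
          ← Real.rpow_mul hαM, hpe, Real.rpow_one]
        refine mul_le_mul_of_nonneg_left ?_ hαM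
        calc 1/c = ((1/c) ^ p) ^ e := by
              rw [← Real.rpow_mul (by positivity), hpe, Real.rpow_one]
        _ ≤ (cdf P M) ^ e := Real.rpow_le_rpow (by positivity) hM.le he0
      have h3 : α - M ≤ c * I ^ e := by
        have := mul_le_mul_of_nonneg_left h2 hc0.le
        calc α - M = c * ((α - M) * (1/c)) := by field_simp
        _ ≤ c * I ^ e := this
      linarith

/-- One-sided comparison of dual values. -/
lemma dual_le {k δ : ℝ} (hk : 1 ≤ k) (hδ : 0 < δ) (P1 P2 : Measure ℝ)
    [IsProbabilityMeasure P1] [IsProbabilityMeasure P2]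
    (hP1 : P1 (Iio 0) = 0) (hP2 : P2 (Iio 0) = 0) (D : ℝ)
    (hD : ∀ t ∈ Ioo (0:ℝ) 1, quantile P1 t ≤ quantile P2 t + D) :
    dualValueCR k δ P1 ≤ dualValueCR k δ P2 + D := by
  unfold dualValueCR
  have hc0 : 0 ≤ ckCR k δ := le_trans zero_le_one (one_le_ckCR hk hδ)
  refine csSup_le ⟨_, 0, rfl⟩ ?_
  rintro r ⟨α, rfl⟩
  have hmem : (-ckCR k δ *
      (if k = 1 then essSup (fun y : ℝ => max ((α - D) - y) 0) P2
       else (∫ y, (max ((α - D) - y) 0) ^ (k / (k - 1)) ∂P2) ^ ((k - 1) / k)) + (α - D)) ∈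
      {r : ℝ | ∃ β : ℝ,
        r = -ckCR k δ *
            (if k = 1 then essSup (fun y : ℝ => max (β - y) 0) P2
             else (∫ y, (max (β - y) 0) ^ (k / (k - 1)) ∂P2) ^ ((k - 1) / k)) + β} :=
    ⟨α - D, rfl⟩
  have hle := le_csSup (bddAbove_dual hk hδ P2 hP2) hmem
  have hN := NN_le hk P1 P2 hP1 hP2 D hD α
  have : -ckCR k δ *
      (if k = 1 then essSup (fun y : ℝ => max (α - y) 0) P1
       else (∫ y, (max (α - y) 0) ^ (k / (k - 1)) ∂P1) ^ ((k - 1) / k)) ≤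
      -ckCR k δ *
      (if k = 1 then essSup (fun y : ℝ => max ((α - D) - y) 0) P2
       else (∫ y, (max ((α - D) - y) 0) ^ (k / (k - 1)) ∂P2) ^ ((k - 1) / k)) := by
    rw [neg_mul, neg_mul, neg_le_neg_iff]
    exact mul_le_mul_of_nonneg_left hN hc0
  linarith

end QAux

/-- **Quantile Lipschitz bound for Cressie–Read DRO dual values:** for `k ∈ [1, ∞)` and
probability measures `P1, P2` supported on `[0, ∞)`, the difference of their dual values is
bounded by `c_k(δ)` times the uniform distance between their quantile functions (the supremum
is taken in `ℝ≥0∞` so that the inequality is meaningful even when it is infinite). -/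
theorem stmt14 (k δ : ℝ) (hk : 1 ≤ k) (hδ : 0 < δ) (P1 P2 : Measure ℝ)
    [IsProbabilityMeasure P1] [IsProbabilityMeasure P2]
    (hP1 : P1 (Set.Iio 0) = 0) (hP2 : P2 (Set.Iio 0) = 0) :
    ENNReal.ofReal |dualValueCR k δ P1 - dualValueCR k δ P2| ≤
      ENNReal.ofReal (ckCR k δ) *
        ⨆ t ∈ Set.Icc (0 : ℝ) 1, ENNReal.ofReal |quantile P1 t - quantile P2 t| := by
  set T := ⨆ t ∈ Set.Icc (0 : ℝ) 1, ENNReal.ofReal |quantile P1 t - quantile P2 t| with hT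
  have hc1 : (1:ℝ) ≤ ckCR k δ := QAux.one_le_ckCR hk hδ
  have hc1' : (1:ℝ≥0∞) ≤ ENNReal.ofReal (ckCR k δ) := by
    rw [← ENNReal.ofReal_one]
    exact ENNReal.ofReal_le_ofReal hc1
  rcases eq_or_ne T ⊤ with hTtop | hTtop
  · rw [hTtop, ENNReal.mul_top (by
      intro h
      rw [ENNReal.ofReal_eq_zero] at h
      linarith)]
    exact le_top
  · set D := T.toReal with hD
    have hDle : ∀ t ∈ Set.Ioo (0:ℝ) 1, |quantile P1 t - quantile P2 t| ≤ D := by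
      intro t ht
      have hmem : t ∈ Set.Icc (0:ℝ) 1 := ⟨ht.1.le, ht.2.le⟩
      have hle : ENNReal.ofReal |quantile P1 t - quantile P2 t| ≤ T :=
        le_iSup₂ (f := fun t (_ : t ∈ Set.Icc (0:ℝ) 1) =>
          ENNReal.ofReal |quantile P1 t - quantile P2 t|) t hmem
      have := ENNReal.toReal_mono hTtop hle
      rwa [ENNReal.toReal_ofReal (abs_nonneg _)] at this
    have h12 : dualValueCR k δ P1 ≤ dualValueCR k δ P2 + D :=
      QAux.dual_le hk hδ P1 P2 hP1 hP2 D (fun t ht => by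
        have := hDle t ht
        rw [abs_le] at this
        linarith [this.1, this.2])
    have h21 : dualValueCR k δ P2 ≤ dualValueCR k δ P1 + D :=
      QAux.dual_le hk hδ P2 P1 hP2 hP1 D (fun t ht => by
        have := hDle t ht
        rw [abs_le] at this
        linarith [this.1, this.2])
    have habs : |dualValueCR k δ P1 - dualValueCR k δ P2| ≤ D := by
      rw [abs_le]
      constructor <;> linarith
    calc ENNReal.ofReal |dualValueCR k δ P1 - dualValueCR k δ P2|
        ≤ ENNReal.ofReal D := ENNReal.ofReal_le_ofReal habs
      _ = T := ENNReal.ofReal_toReal hTtop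
      _ ≤ ENNReal.ofReal (ckCR k δ) * T := le_mul_of_one_le_left zero_le hc1'
end
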